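/- arXiv:0908.1498 — 8 statements merged into one kernel-verified Lean document; each statement's English description precedes it below -/
import Mathlib

section
/- Let 0 < m < n be integers and let S be a Binomial(n, m/n) random variable. Then E[min(S/m, (n−S)/(n−m))] ≥ 1 − √(m(n−m)) / (√n · min(m, n−m)). -/
open Finset

lemma sum_binom_one (n : ℕ) (x y : ℝ) (hxy : x + y = 1) :
    ∑ k ∈ range (n+1), (n.choose k : ℝ) * x ^ k * y ^ (n - k) = 1 := by
  have := add_pow x y n
  rw [hxy, one_pow] at this
  conv_rhs => rw [this]
  exact Finset.sum_congr rfl fun k _ => by ring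

lemma sum_k_binom (n : ℕ) (x y : ℝ) (hxy : x + y = 1) :
    ∑ k ∈ range (n+1), (k : ℝ) * ((n.choose k : ℝ) * x ^ k * y ^ (n - k)) = n * x := by
  induction n with
  | zero => simp
  | succ n _ =>
    rw [Finset.sum_range_succ']
    have key : ∀ j : ℕ, ((j:ℝ)+1) * ((n+1).choose (j+1) : ℝ) = (n+1 : ℝ) * (n.choose j : ℝ) := by
      intro j
      have h : (((n+1) * n.choose j : ℕ) : ℝ) = (((n+1).choose (j+1) * (j+1) : ℕ) : ℝ) := by
        exact_mod_cast congrArg (Nat.cast : ℕ → ℝ) (Nat.add_one_mul_choose_eq n j)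
      push_cast at h
      linarith
    have : ∀ j ∈ range (n+1),
        ((j+1 : ℕ) : ℝ) * (((n+1).choose (j+1) : ℝ) * x ^ (j+1) * y ^ (n + 1 - (j+1))) =
        ((n:ℝ)+1) * x * ((n.choose j : ℝ) * x ^ j * y ^ (n - j)) := by
      intro j hj
      have hk := key j
      have hnj : n + 1 - (j + 1) = n - j := by omega
      rw [hnj]
      push_cast
      linear_combination (x ^ (j+1) * y ^ (n - j)) * hk
    rw [Finset.sum_congr rfl this]
    rw [← Finset.mul_sum, sum_binom_one n x y hxy]
    push_cast
    ring

lemma sum_k2_binom (n : ℕ) (x y : ℝ) (hxy : x + y = 1) :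
    ∑ k ∈ range (n+1), (k : ℝ)^2 * ((n.choose k : ℝ) * x ^ k * y ^ (n - k)) =
      n * x * (((n:ℝ) - 1) * x + 1) := by
  induction n with
  | zero => simp
  | succ n _ =>
    rw [Finset.sum_range_succ']
    have key : ∀ j : ℕ, ((j:ℝ)+1) * ((n+1).choose (j+1) : ℝ) = (n+1 : ℝ) * (n.choose j : ℝ) := by
      intro j
      have h : (((n+1) * n.choose j : ℕ) : ℝ) = (((n+1).choose (j+1) * (j+1) : ℕ) : ℝ) := by
        exact_mod_cast congrArg (Nat.cast : ℕ → ℝ) (Nat.add_one_mul_choose_eq n j)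
      push_cast at h
      linarith
    have step : ∀ j ∈ range (n+1),
        ((j+1 : ℕ) : ℝ)^2 * (((n+1).choose (j+1) : ℝ) * x ^ (j+1) * y ^ (n + 1 - (j+1))) =
        ((n:ℝ)+1) * x * (((j:ℝ)+1) * ((n.choose j : ℝ) * x ^ j * y ^ (n - j))) := by
      intro j hj
      have hk := key j
      have hnj : n + 1 - (j + 1) = n - j := by omega
      rw [hnj]
      push_cast
      linear_combination (((j:ℝ)+1) * x ^ (j+1) * y ^ (n - j)) * hk
    rw [Finset.sum_congr rfl step]
    rw [← Finset.mul_sum]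
    have split : ∑ j ∈ range (n+1), (((j:ℝ)+1) * ((n.choose j : ℝ) * x ^ j * y ^ (n - j)))
        = (∑ j ∈ range (n+1), (j:ℝ) * ((n.choose j : ℝ) * x ^ j * y ^ (n - j)))
          + ∑ j ∈ range (n+1), (n.choose j : ℝ) * x ^ j * y ^ (n - j) := by
      rw [← Finset.sum_add_distrib]
      exact Finset.sum_congr rfl fun j _ => by ring
    rw [split, sum_k_binom n x y hxy, sum_binom_one n x y hxy]
    push_cast
    ring

/-- For `S ~ Binomial(n, m/n)` with `0 < m < n`,
`E[min(S/m, (n−S)/(n−m))] ≥ 1 − √(m(n−m)) / (√n · min(m, n−m))`,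
the expectation written as an explicit finite sum over the binomial distribution. -/
theorem binomial_min_expectation_bound (m n : ℕ) (hm : 0 < m) (hmn : m < n) :
    1 - Real.sqrt ((m : ℝ) * ((n : ℝ) - m)) / (Real.sqrt n * min (m : ℝ) ((n : ℝ) - m)) ≤
      ∑ k ∈ Finset.range (n + 1),
        (n.choose k : ℝ) * ((m : ℝ) / n) ^ k * (1 - (m : ℝ) / n) ^ (n - k) *
          min ((k : ℝ) / m) (((n : ℝ) - k) / ((n : ℝ) - m)) := by
  have hn : (0:ℝ) < n := by exact_mod_cast hm.trans hmn
  have hmR : (0:ℝ) < m := by exact_mod_cast hm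
  have hnm : (0:ℝ) < (n:ℝ) - m := by
    have : (m:ℝ) < n := by exact_mod_cast hmn
    linarith
  set x : ℝ := (m:ℝ) / n with hx
  set y : ℝ := 1 - (m:ℝ)/n with hy
  have hxy : x + y = 1 := by simp [hx, hy]
  have hx0 : 0 ≤ x := by positivity
  have hy0 : 0 ≤ y := by
    rw [hy, sub_nonneg, div_le_one hn]
    exact_mod_cast hmn.le
  set w : ℕ → ℝ := fun k => (n.choose k : ℝ) * x ^ k * y ^ (n - k) with hw
  have hw0 : ∀ k, 0 ≤ w k := fun k => by positivity
  set c : ℝ := min (m:ℝ) ((n:ℝ) - m) with hc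
  have hc0 : 0 < c := lt_min hmR hnm
  have hcm : c ≤ m := min_le_left _ _
  have hcnm : c ≤ (n:ℝ) - m := min_le_right _ _
  -- sums
  have hS0 : ∑ k ∈ range (n+1), w k = 1 := sum_binom_one n x y hxy
  have hS1 : ∑ k ∈ range (n+1), (k:ℝ) * w k = m := by
    rw [hw]
    rw [sum_k_binom n x y hxy, hx]
    field_simp
  have hS2 : ∑ k ∈ range (n+1), (k:ℝ)^2 * w k = (n:ℝ) * x * (((n:ℝ) - 1) * x + 1) :=
    sum_k2_binom n x y hxy
  -- variance
  have hVar : ∑ k ∈ range (n+1), w k * ((k:ℝ) - m)^2 = (m:ℝ) * ((n:ℝ) - m) / n := by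
    have expand : ∀ k ∈ range (n+1),
        w k * ((k:ℝ) - m)^2 = (k:ℝ)^2 * w k - 2 * m * ((k:ℝ) * w k) + (m:ℝ)^2 * w k := by
      intro k _; ring
    rw [Finset.sum_congr rfl expand, Finset.sum_add_distrib, Finset.sum_sub_distrib,
      ← Finset.mul_sum, ← Finset.mul_sum, hS0, hS1, hS2, hx]
    field_simp
    ring
  -- Cauchy–Schwarz: E|k - m| ≤ sqrt Var
  have hEabs : ∑ k ∈ range (n+1), w k * |(k:ℝ) - m| ≤
      Real.sqrt ((m:ℝ) * ((n:ℝ) - m) / n) := by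
    have cs := Real.sum_sqrt_mul_sqrt_le (range (n+1)) (f := fun k => w k)
      (g := fun k => w k * ((k:ℝ) - m)^2) (fun k => hw0 k) (fun k => by positivity)
    have eq1 : ∀ k ∈ range (n+1),
        Real.sqrt (w k) * Real.sqrt (w k * ((k:ℝ) - m)^2) = w k * |(k:ℝ) - m| := by
      intro k _
      rw [← Real.sqrt_mul (hw0 k)]
      have : w k * (w k * ((k:ℝ) - m)^2) = (w k * |(k:ℝ) - m|)^2 := by
        rw [mul_pow, sq_abs]; ring
      rw [this, Real.sqrt_sq (by positivity)]
    rw [Finset.sum_congr rfl eq1, hS0, hVar, Real.sqrt_one, one_mul] at cs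
    exact cs
  -- pointwise bound
  have hpt : ∀ k ∈ range (n+1),
      w k * (1 - |(k:ℝ) - m| / c) ≤ w k * min ((k:ℝ)/m) (((n:ℝ) - k)/((n:ℝ) - m)) := by
    intro k hk
    refine mul_le_mul_of_nonneg_left (le_min ?_ ?_) (hw0 k)
    · -- 1 - |k - m|/c ≤ k/m
      have key : ((m:ℝ) - k)/m ≤ |(k:ℝ) - m| / c := by
        rcases le_or_gt ((m:ℝ) - k) 0 with h | h
        · have h1 : ((m:ℝ) - k)/m ≤ 0 := div_nonpos_of_nonpos_of_nonneg h hmR.le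
          have h2 : (0:ℝ) ≤ |(k:ℝ) - m| / c := by positivity
          linarith
        · have h1 : ((m:ℝ) - k)/m ≤ ((m:ℝ) - k)/c := by gcongr
          have h2 : ((m:ℝ) - k)/c ≤ |(k:ℝ) - m|/c := by
            gcongr
            rw [abs_sub_comm]
            exact le_abs_self _
          linarith
      have hkm : (k:ℝ)/m = 1 - ((m:ℝ) - k)/m := by field_simp; ring
      rw [hkm]
      linarith
    · -- 1 - |k - m|/c ≤ (n - k)/(n - m)
      have key : ((k:ℝ) - m)/((n:ℝ) - m) ≤ |(k:ℝ) - m| / c := by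
        rcases le_or_gt ((k:ℝ) - m) 0 with h | h
        · have h1 : ((k:ℝ) - m)/((n:ℝ) - m) ≤ 0 := div_nonpos_of_nonpos_of_nonneg h hnm.le
          have h2 : (0:ℝ) ≤ |(k:ℝ) - m| / c := by positivity
          linarith
        · have h1 : ((k:ℝ) - m)/((n:ℝ) - m) ≤ ((k:ℝ) - m)/c := by gcongr
          have h2 : ((k:ℝ) - m)/c ≤ |(k:ℝ) - m|/c := by
            gcongr
            exact le_abs_self _
          linarith
      have hkm : ((n:ℝ) - k)/((n:ℝ) - m) = 1 - ((k:ℝ) - m)/((n:ℝ) - m) := by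
        field_simp
        ring
      rw [hkm]
      linarith
  -- assemble
  have h1 : ∑ k ∈ range (n+1), w k * (1 - |(k:ℝ) - m|/c)
      = 1 - (∑ k ∈ range (n+1), w k * |(k:ℝ) - m|)/c := by
    have e : ∀ k ∈ range (n+1),
        w k * (1 - |(k:ℝ) - m|/c) = w k - (w k * |(k:ℝ) - m|)/c := fun k _ => by ring
    rw [Finset.sum_congr rfl e, Finset.sum_sub_distrib, hS0, ← Finset.sum_div]
  have hsqrt : Real.sqrt ((m:ℝ) * ((n:ℝ) - m) / n)
      = Real.sqrt ((m:ℝ) * ((n:ℝ) - m)) / Real.sqrt n := by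
    rw [Real.sqrt_div (by positivity)]
  calc 1 - Real.sqrt ((m:ℝ) * ((n:ℝ) - m)) / (Real.sqrt n * c)
      = 1 - Real.sqrt ((m:ℝ) * ((n:ℝ) - m) / n) / c := by rw [hsqrt, div_div]
    _ ≤ 1 - (∑ k ∈ range (n+1), w k * |(k:ℝ) - m|)/c := by
        have := (div_le_div_iff_of_pos_right hc0).mpr hEabs
        linarith
    _ = ∑ k ∈ range (n+1), w k * (1 - |(k:ℝ) - m|/c) := h1.symm
    _ ≤ ∑ k ∈ range (n+1), w k * min ((k:ℝ)/m) (((n:ℝ) - k)/((n:ℝ) - m)) :=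
        Finset.sum_le_sum hpt
    _ = _ := by simp only [hw]
end

section
/- Let 0 < m < n be integers, let Z_1, ..., Z_n be i.i.d. with P(Z_i = 1) = m/n and P(Z_i = 0) = 1 − m/n, and let ψ_1, ..., ψ_n be real numbers with arithmetic mean ψ̄. Set γ_{m,n}² := (m(n−m))/(n(n−1)) · Σ_{i=1}^n (ψ_i − ψ̄)² and assume γ_{m,n} ≠ 0. Set R(ψ,m,n) := (max_i |ψ_i − ψ̄| / (3 γ_{m,n})) · max(m/n, 1 − m/n). Then for every η ≥ 0, P( |γ_{m,n}^{-1} Σ_{i=1}^n ψ_i (Z_i − m/n)| > δ(m,n) η | Σ_{i=1}^n Z_i = m ) ≤ 2 exp( − (η²/2) / (1 + η · R(ψ,m,n)) ). -/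
open MeasureTheory ProbabilityTheory

/-- `δ(m,n) := (E min(S/m, (n−S)/(n−m)))⁻¹` where `S ~ Binomial(n, m/n)`,
written as an explicit finite sum over the binomial distribution. -/
noncomputable def deltaMN (m n : ℕ) : ℝ :=
  (∑ k ∈ Finset.range (n + 1),
      (n.choose k : ℝ) * ((m : ℝ) / n) ^ k * (1 - (m : ℝ) / n) ^ (n - k) *
        min ((k : ℝ) / m) (((n : ℝ) - k) / ((n : ℝ) - m)))⁻¹


open Finset Nat
open scoped ENNReal
set_option maxHeartbeats 1000000



private lemma two_mul_three_pow_le_factorial (k : ℕ) : 2 * 3 ^ k ≤ (k + 2)! := by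
  induction k with
  | zero => simp [Nat.factorial]
  | succ k ih =>
      have h : (k + 1 + 2)! = (k + 3) * (k + 2)! := rfl
      calc 2 * 3 ^ (k + 1) = 3 * (2 * 3 ^ k) := by ring
        _ ≤ 3 * (k + 2)! := Nat.mul_le_mul_left 3 ih
        _ ≤ (k + 3) * (k + 2)! := Nat.mul_le_mul_right _ (by omega)
        _ = (k + 1 + 2)! := h.symm

private lemma exp_le_quad {t : ℝ} (ht : |t| < 3) :
    Real.exp t ≤ 1 + t + t ^ 2 / 2 * (1 - |t| / 3)⁻¹ := by
  have hsum : Summable (fun n : ℕ => t ^ n / (n ! : ℝ)) := Real.summable_pow_div_factorial t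
  have hexp : Real.exp t = ∑' n : ℕ, t ^ n / (n ! : ℝ) := by
    rw [Real.exp_eq_exp_ℝ, NormedSpace.exp_eq_tsum_div]
  have hsum1 : Summable (fun n : ℕ => t ^ (n + 1) / ((n + 1)! : ℝ)) :=
    (summable_nat_add_iff 1).2 hsum
  have hsum2 : Summable (fun n : ℕ => t ^ (n + 2) / ((n + 2)! : ℝ)) :=
    (summable_nat_add_iff 2).2 hsum
  have hr0 : 0 ≤ |t| / 3 := by positivity
  have hr1 : |t| / 3 < 1 := by linarith
  have hgsum : Summable (fun n : ℕ => (|t| / 3) ^ n) := summable_geometric_of_lt_one hr0 hr1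
  have hgsum' : Summable (fun n : ℕ => t ^ 2 / 2 * (|t| / 3) ^ n) := hgsum.mul_left _
  have hpeel : ∑' n : ℕ, t ^ n / (n ! : ℝ) = 1 + t + ∑' n : ℕ, t ^ (n + 2) / ((n + 2)! : ℝ) := by
    rw [Summable.tsum_eq_zero_add hsum, Summable.tsum_eq_zero_add hsum1]
    norm_num [Nat.factorial]
    ring
  have hterm : ∀ n : ℕ, t ^ (n + 2) / ((n + 2)! : ℝ) ≤ t ^ 2 / 2 * (|t| / 3) ^ n := by
    intro n
    have h1 : t ^ (n + 2) ≤ t ^ 2 * |t| ^ n := by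
      calc t ^ (n + 2) ≤ |t ^ (n + 2)| := le_abs_self _
        _ = |t| ^ (n + 2) := abs_pow t (n + 2)
        _ = t ^ 2 * |t| ^ n := by rw [pow_add, sq_abs]; ring
    have h2 : (0:ℝ) < (n + 2)! := by positivity
    have h3 : (2 * 3 ^ n : ℝ) ≤ (n + 2)! := by
      exact_mod_cast two_mul_three_pow_le_factorial n
    have h4 : (0:ℝ) < 2 * 3 ^ n := by positivity
    calc t ^ (n + 2) / ((n + 2)! : ℝ) ≤ t ^ 2 * |t| ^ n / (n + 2)! := by gcongr
      _ ≤ t ^ 2 * |t| ^ n / (2 * 3 ^ n) := by gcongr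
      _ = t ^ 2 / 2 * (|t| / 3) ^ n := by
          rw [div_pow]
          ring
  have htail : ∑' n : ℕ, t ^ (n + 2) / ((n + 2)! : ℝ) ≤ ∑' n : ℕ, t ^ 2 / 2 * (|t| / 3) ^ n :=
    Summable.tsum_le_tsum hterm hsum2 hgsum'
  have hgeo : ∑' n : ℕ, t ^ 2 / 2 * (|t| / 3) ^ n = t ^ 2 / 2 * (1 - |t| / 3)⁻¹ := by
    rw [tsum_mul_left, tsum_geometric_of_lt_one hr0 hr1]
  rw [hexp, hpeel]
  linarith [htail.trans_eq hgeo]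

private lemma choose_chain {k m n : ℕ} (hk : k ≤ m) (hm : m ≤ n) :
    n.choose k * (n - k).choose (m - k) = n.choose m * m.choose k := by
  have h1 := Nat.choose_mul_factorial_mul_factorial hm
  have h2 := Nat.choose_mul_factorial_mul_factorial hk
  have h3 := Nat.choose_mul_factorial_mul_factorial (hk.trans hm)
  have h4 := Nat.choose_mul_factorial_mul_factorial (Nat.sub_le_sub_right hm k)
  have h5 : n - k - (m - k) = n - m := by omega
  rw [h5] at h4
  have key : n.choose k * (n - k).choose (m - k) * ((k)! * ((m - k)! * (n - m)!))
      = n.choose m * m.choose k * ((k)! * ((m - k)! * (n - m)!)) := by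
    calc n.choose k * (n - k).choose (m - k) * ((k)! * ((m - k)! * (n - m)!))
        = (n.choose k * (k)!) * ((n - k).choose (m - k) * (m - k)! * (n - m)!) := by ring
      _ = (n.choose k * (k)!) * (n - k)! := by rw [h4]
      _ = n ! := by rw [← h3]; try ring
      _ = n.choose m * (n - m)! * m ! := by rw [← h1]; try ring
      _ = n.choose m * (n - m)! * (m.choose k * (k)! * (m - k)!) := by rw [h2]
      _ = n.choose m * m.choose k * ((k)! * ((m - k)! * (n - m)!)) := by ring
  exact Nat.eq_of_mul_eq_mul_right (by positivity) key

private lemma card_filter_superset {α : Type*} [DecidableEq α] (s K : Finset α) (hK : K ⊆ s)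
    {j : ℕ} (hj : K.card ≤ j) :
    ((s.powersetCard j).filter (fun A => K ⊆ A)).card
      = (s.card - K.card).choose (j - K.card) := by
  rw [← Finset.card_sdiff_of_subset hK, ← Finset.card_powersetCard]
  apply Finset.card_bij (fun A _ => A \ K)
  · intro A hA
    simp only [Finset.mem_filter, Finset.mem_powersetCard] at hA
    rw [Finset.mem_powersetCard]
    exact ⟨Finset.sdiff_subset_sdiff hA.1.1 (le_refl K), by rw [Finset.card_sdiff_of_subset hA.2, hA.1.2]⟩
  · intro A hA B hB h
    simp only [Finset.mem_filter, Finset.mem_powersetCard] at hA hB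
    have : A \ K ∪ K = B \ K ∪ K := by rw [h]
    rwa [Finset.sdiff_union_of_subset hA.2, Finset.sdiff_union_of_subset hB.2] at this
  · intro D hD
    rw [Finset.mem_powersetCard] at hD
    have hdisj : Disjoint K D := by
      have := hD.1
      exact Finset.disjoint_left.mpr (fun x hx hxD => (Finset.mem_sdiff.1 (this hxD)).2 hx)
    refine ⟨K ∪ D, ?_, ?_⟩
    · simp only [Finset.mem_filter, Finset.mem_powersetCard]
      refine ⟨⟨Finset.union_subset hK (hD.1.trans Finset.sdiff_subset), ?_⟩,
        Finset.subset_union_left⟩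
      rw [Finset.card_union_of_disjoint hdisj, hD.2, Nat.add_sub_cancel' hj]
    · rw [Finset.union_sdiff_cancel_left hdisj]

private lemma sum_powersetCard_sum {α : Type*} [DecidableEq α] (s : Finset α) (a : α → ℝ)
    {j : ℕ} (hj : 1 ≤ j) :
    ∑ K ∈ s.powersetCard j, ∑ i ∈ K, a i
      = ((s.card - 1).choose (j - 1) : ℝ) * ∑ i ∈ s, a i := by
  have step1 : ∀ K ∈ s.powersetCard j, ∑ i ∈ K, a i = ∑ i ∈ s, if i ∈ K then a i else 0 := by
    intro K hK
    rw [Finset.mem_powersetCard] at hK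
    rw [Finset.sum_ite_mem, Finset.inter_comm, (Finset.inter_eq_left).2 hK.1]
  rw [Finset.sum_congr rfl step1, Finset.sum_comm]
  have step2 : ∀ i ∈ s, ∑ K ∈ s.powersetCard j, (if i ∈ K then a i else 0)
      = ((s.card - 1).choose (j - 1) : ℝ) * a i := by
    intro i hi
    rw [← Finset.sum_filter, Finset.sum_const]
    have : (s.powersetCard j).filter (fun K => i ∈ K)
        = (s.powersetCard j).filter (fun K => {i} ⊆ K) := by
      simp [Finset.singleton_subset_iff]
    rw [this, card_filter_superset s {i} (Finset.singleton_subset_iff.2 hi)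
      (by simpa using hj)]
    simp [nsmul_eq_mul]
  rw [Finset.sum_congr rfl step2, ← Finset.mul_sum]

private lemma bernoulli_mgf {p q x d : ℝ} (hp : 0 ≤ p) (hq : 0 ≤ q) (hpq : p + q = 1)
    (hd0 : 0 ≤ d) (hd : d < 1) (hx : |x| * max p q ≤ 3 * d) :
    q + p * Real.exp x ≤ Real.exp (p * x + p * q * x ^ 2 / 2 * (1 - d)⁻¹) := by
  have hpx : |p * x| ≤ 3 * d := by
    rw [abs_mul, abs_of_nonneg hp, mul_comm]
    exact le_trans (mul_le_mul_of_nonneg_left (le_max_left p q) (abs_nonneg x)) hx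
  have hqx : |q * x| ≤ 3 * d := by
    rw [abs_mul, abs_of_nonneg hq, mul_comm]
    exact le_trans (mul_le_mul_of_nonneg_left (le_max_right p q) (abs_nonneg x)) hx
  have h3d : 3 * d < 3 := by linarith
  have hinv : 0 ≤ (1 - d)⁻¹ := inv_nonneg.2 (by linarith)
  have key : ∀ t : ℝ, |t| ≤ 3 * d → Real.exp t ≤ 1 + t + t ^ 2 / 2 * (1 - d)⁻¹ := by
    intro t ht
    have habs : |t| < 3 := lt_of_le_of_lt ht h3d
    have h1 := exp_le_quad habs
    have h2 : (1 - |t| / 3)⁻¹ ≤ (1 - d)⁻¹ := by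
      have ht3 : |t| / 3 ≤ d := by linarith
      exact inv_anti₀ (by linarith) (by linarith)
    nlinarith [sq_nonneg t, abs_nonneg t]
  have e1 := key (-(p * x)) (by rwa [abs_neg])
  have e2 := key (q * x) hqx
  have c := (1 - d)⁻¹
  have hB : q * Real.exp (-(p * x)) + p * Real.exp (q * x)
      ≤ 1 + p * q * x ^ 2 / 2 * (1 - d)⁻¹ := by
    have t1 := mul_le_mul_of_nonneg_left e1 hq
    have t2 := mul_le_mul_of_nonneg_left e2 hp
    have expand : q * (1 + -(p * x) + (-(p * x)) ^ 2 / 2 * (1 - d)⁻¹)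
        + p * (1 + q * x + (q * x) ^ 2 / 2 * (1 - d)⁻¹)
        = 1 + p * q * x ^ 2 / 2 * (1 - d)⁻¹ := by
      linear_combination (1 + p * q * x ^ 2 / 2 * (1 - d)⁻¹) * hpq
    linarith [t1, t2, expand.le, expand.ge]
  have hsplit : q + p * Real.exp x
      = Real.exp (p * x) * (q * Real.exp (-(p * x)) + p * Real.exp (q * x)) := by
    rw [mul_add, ← mul_assoc, ← mul_assoc, mul_comm (Real.exp (p*x)) q,
      mul_comm (Real.exp (p*x)) p, mul_assoc, mul_assoc, ← Real.exp_add, ← Real.exp_add]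
    have : p * x + -(p * x) = 0 := by ring
    rw [this, Real.exp_zero, mul_one]
    have : p * x + q * x = x := by linear_combination x * hpq
    rw [this]
  rw [hsplit, Real.exp_add]
  have := Real.add_one_le_exp (p * q * x ^ 2 / 2 * (1 - d)⁻¹)
  have hexppos := (Real.exp_pos (p * x)).le
  calc Real.exp (p * x) * (q * Real.exp (-(p * x)) + p * Real.exp (q * x))
      ≤ Real.exp (p * x) * (1 + p * q * x ^ 2 / 2 * (1 - d)⁻¹) :=
        mul_le_mul_of_nonneg_left hB hexppos
    _ ≤ Real.exp (p * x) * Real.exp (p * q * x ^ 2 / 2 * (1 - d)⁻¹) := by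
        apply mul_le_mul_of_nonneg_left _ hexppos
        linarith [this]

section Weights
variable {n : ℕ}

private noncomputable def wgt (m : ℕ) (A K : Finset (Fin n)) : ℝ :=
  if K.card ≤ m then (if K ⊆ A then ((m.choose K.card : ℝ))⁻¹ else 0)
  else (if A ⊆ K then (((n - m).choose (K.card - m) : ℝ))⁻¹ else 0)

private noncomputable def ell (m N k : ℕ) : ℝ :=
  min ((k : ℝ) / m) (((N : ℝ) - k) / ((N : ℝ) - m))

private lemma wgt_nonneg (m : ℕ) (A K : Finset (Fin n)) : 0 ≤ wgt m A K := by
  unfold wgt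
  split <;> split <;> positivity

private lemma filter_subset_powersetCard (k : ℕ) (A : Finset (Fin n)) :
    (powersetCard k (univ : Finset (Fin n))).filter (fun K => K ⊆ A) = powersetCard k A := by
  ext K
  simp only [mem_filter, mem_powersetCard, subset_univ, true_and]
  tauto

private lemma sum_wgt {m k : ℕ} (hmn : m < n) (hk : k ≤ n) {A : Finset (Fin n)}
    (hA : A.card = m) :
    ∑ K ∈ powersetCard k (univ : Finset (Fin n)), wgt m A K = 1 := by
  by_cases hkm : k ≤ m
  · have hcong : ∀ K ∈ powersetCard k (univ : Finset (Fin n)),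
        wgt m A K = if K ⊆ A then ((m.choose k : ℝ))⁻¹ else 0 := by
      intro K hK
      rw [mem_powersetCard] at hK
      rw [wgt, hK.2, if_pos hkm]
    rw [sum_congr rfl hcong, ← sum_filter, filter_subset_powersetCard, sum_const,
      card_powersetCard, hA, nsmul_eq_mul]
    exact mul_inv_cancel₀ (by exact_mod_cast (Nat.choose_pos hkm).ne')
  · push_neg at hkm
    have hcong : ∀ K ∈ powersetCard k (univ : Finset (Fin n)),
        wgt m A K = if A ⊆ K then (((n - m).choose (k - m) : ℝ))⁻¹ else 0 := by
      intro K hK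
      rw [mem_powersetCard] at hK
      rw [wgt, hK.2, if_neg (by omega)]
    rw [sum_congr rfl hcong, ← sum_filter, sum_const,
      card_filter_superset _ A (subset_univ A) (by omega : A.card ≤ k), nsmul_eq_mul,
      Finset.card_univ, Fintype.card_fin, hA]
    exact mul_inv_cancel₀ (by exact_mod_cast (Nat.choose_pos (by omega)).ne')

private lemma sum_wgt_mul {m k : ℕ} (hm : 0 < m) (hmn : m < n) (hk : k ≤ n)
    {A : Finset (Fin n)} (hA : A.card = m) (a : Fin n → ℝ) (ha0 : ∑ i, a i = 0) :
    ∑ K ∈ powersetCard k (univ : Finset (Fin n)), wgt m A K * ∑ i ∈ K, a i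
      = ell m n k * ∑ i ∈ A, a i := by
  have hmr : (0:ℝ) < (m:ℝ) := by exact_mod_cast hm
  have hnm : (0:ℝ) < (n:ℝ) - m := by
    have : (m:ℝ) < n := by exact_mod_cast hmn
    linarith
  have hnr : (0:ℝ) ≤ (n:ℝ) := by positivity
  have hkr : (0:ℝ) ≤ (k:ℝ) := by positivity
  by_cases hkm : k ≤ m
  · have hkm' : (k:ℝ) ≤ m := by exact_mod_cast hkm
    have hell : ell m n k = (k : ℝ) / m := by
      apply min_eq_left
      rw [div_le_div_iff₀ hmr hnm]
      nlinarith [mul_le_mul_of_nonneg_right hkm' hnr]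
    rcases Nat.eq_zero_or_pos k with hk0 | hk1
    · subst hk0
      rw [powersetCard_zero, sum_singleton]
      simp [hell]
    · have hcong : ∀ K ∈ powersetCard k (univ : Finset (Fin n)),
          wgt m A K * ∑ i ∈ K, a i
            = if K ⊆ A then ((m.choose k : ℝ))⁻¹ * ∑ i ∈ K, a i else 0 := by
        intro K hK
        rw [mem_powersetCard] at hK
        rw [wgt, hK.2, if_pos hkm, ite_mul, zero_mul]
      rw [sum_congr rfl hcong, ← sum_filter, filter_subset_powersetCard, ← mul_sum,
        sum_powersetCard_sum A a hk1, hA, hell]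
      have hnat : m * (m - 1).choose (k - 1) = m.choose k * k := by
        have h := Nat.add_one_mul_choose_eq (m - 1) (k - 1)
        rwa [show m - 1 + 1 = m by omega, show k - 1 + 1 = k by omega] at h
      have hch : (0:ℝ) < (m.choose k : ℝ) := by exact_mod_cast Nat.choose_pos hkm
      rw [← mul_assoc]
      congr 1
      rw [inv_mul_eq_div, div_eq_div_iff hch.ne' hmr.ne']
      exact_mod_cast (by linarith [hnat] : ((m - 1).choose (k - 1) : ℕ) * m = k * m.choose k)
  · push_neg at hkm
    have hkm' : (m:ℝ) ≤ k := by exact_mod_cast hkm.le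
    have hknr : (k:ℝ) ≤ n := by exact_mod_cast hk
    have hell : ell m n k = ((n:ℝ) - k) / ((n:ℝ) - m) := by
      apply min_eq_right
      rw [div_le_div_iff₀ hnm hmr]
      nlinarith [mul_le_mul_of_nonneg_right hkm' hnr]
    have hcong : ∀ K ∈ powersetCard k (univ : Finset (Fin n)),
        wgt m A K * ∑ i ∈ K, a i
          = if A ⊆ K then (((n - m).choose (k - m) : ℝ))⁻¹ * ∑ i ∈ K, a i else 0 := by
      intro K hK
      rw [mem_powersetCard] at hK
      rw [wgt, hK.2, if_neg (by omega), ite_mul, zero_mul]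
    rw [sum_congr rfl hcong, ← sum_filter, ← mul_sum]
    have hbij : ∑ K ∈ (powersetCard k (univ : Finset (Fin n))).filter (fun K => A ⊆ K),
        ∑ i ∈ K, a i
        = ∑ D ∈ powersetCard (k - m) Aᶜ, (∑ i ∈ A, a i + ∑ i ∈ D, a i) := by
      refine Finset.sum_bij' (fun K _ => K \ A) (fun D _ => A ∪ D) ?_ ?_ ?_ ?_ ?_
      · intro K hK
        simp only [mem_filter, mem_powersetCard] at hK
        rw [mem_powersetCard]
        refine ⟨fun x hx => Finset.mem_compl.2 (Finset.mem_sdiff.1 hx).2, ?_⟩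
        rw [Finset.card_sdiff_of_subset hK.2, hK.1.2, hA]
      · intro D hD
        rw [mem_powersetCard] at hD
        have hdisj : Disjoint A D := by
          rw [Finset.disjoint_left]
          intro x hx hxD
          exact (Finset.mem_compl.1 (hD.1 hxD)) hx
        simp only [mem_filter, mem_powersetCard]
        refine ⟨⟨subset_univ _, ?_⟩, Finset.subset_union_left⟩
        rw [Finset.card_union_of_disjoint hdisj, hA, hD.2]
        omega
      · intro K hK
        simp only [mem_filter, mem_powersetCard] at hK
        exact Finset.union_sdiff_of_subset hK.2
      · intro D hD
        rw [mem_powersetCard] at hD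
        have hdisj : Disjoint A D := by
          rw [Finset.disjoint_left]
          intro x hx hxD
          exact (Finset.mem_compl.1 (hD.1 hxD)) hx
        exact Finset.union_sdiff_cancel_left hdisj
      · intro K hK
        simp only [mem_filter, mem_powersetCard] at hK
        rw [← Finset.sum_union (Finset.disjoint_sdiff), Finset.union_sdiff_of_subset hK.2]
    rw [hbij, Finset.sum_add_distrib, Finset.sum_const, card_powersetCard,
      Finset.card_compl, Fintype.card_fin, hA,
      sum_powersetCard_sum Aᶜ a (by omega : 1 ≤ k - m),
      Finset.card_compl, Fintype.card_fin, hA]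
    have hTc : ∑ i ∈ Aᶜ, a i = -∑ i ∈ A, a i := by
      have h := Finset.sum_add_sum_compl A a
      rw [ha0] at h
      linarith
    rw [hTc, hell, nsmul_eq_mul]
    -- now pure algebra with binomials
    have hpas : (n - m).choose (k - m)
        = (n - m - 1).choose (k - m - 1) + (n - m - 1).choose (k - m) := by
      have h := Nat.choose_succ_succ (n - m - 1) (k - m - 1)
      simp only [Nat.succ_eq_add_one] at h
      rwa [show n - m - 1 + 1 = n - m by omega, show k - m - 1 + 1 = k - m by omega] at h
    have hmul : (n - m - 1).choose (k - m) * (n - m)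
        = (n - m).choose (k - m) * (n - k) := by
      have h := Nat.choose_mul_succ_eq (n - m - 1) (k - m)
      rwa [show n - m - 1 + 1 = n - m by omega,
        show n - m - (k - m) = n - k by omega] at h
    have hch : (0:ℝ) < ((n - m).choose (k - m) : ℝ) := by
      exact_mod_cast Nat.choose_pos (by omega : k - m ≤ n - m)
    have hcast1 : ((n - m : ℕ) : ℝ) = (n:ℝ) - m := by
      push_cast [Nat.cast_sub hmn.le]; ring
    have hcast2 : ((n - k : ℕ) : ℝ) = (n:ℝ) - k := by
      push_cast [Nat.cast_sub hk]; ring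
    have hC2 : (((n - m).choose (k - m) : ℕ) : ℝ) - (((n - m - 1).choose (k - m - 1) : ℕ) : ℝ)
        = (((n - m - 1).choose (k - m) : ℕ) : ℝ) := by
      have := hpas
      have hc : (((n - m).choose (k - m) : ℕ) : ℝ)
          = (((n - m - 1).choose (k - m - 1) : ℕ) : ℝ) + (((n - m - 1).choose (k - m) : ℕ) : ℝ) := by
        exact_mod_cast this
      linarith
    have key : (((n - m).choose (k - m) : ℕ) : ℝ)⁻¹
        * ((((n - m).choose (k - m) : ℕ) : ℝ) - (((n - m - 1).choose (k - m - 1) : ℕ) : ℝ))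
        = ((n:ℝ) - k) / ((n:ℝ) - m) := by
      rw [hC2, inv_mul_eq_div, div_eq_div_iff hch.ne' hnm.ne']
      rw [← hcast1, ← hcast2]
      exact_mod_cast hmul.trans (Nat.mul_comm _ _)
    linear_combination (∑ i ∈ A, a i) * key

private lemma sum_wgt_over_A {m k : ℕ} (hmn : m < n) (hk : k ≤ n)
    {K : Finset (Fin n)} (hK : K.card = k) :
    ∑ A ∈ powersetCard m (univ : Finset (Fin n)), wgt m A K
      = (n.choose m : ℝ) / (n.choose k : ℝ) := by
  have hnk : (0:ℝ) < (n.choose k : ℝ) := by exact_mod_cast Nat.choose_pos hk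
  by_cases hkm : k ≤ m
  · have hcong : ∀ A ∈ powersetCard m (univ : Finset (Fin n)),
        wgt m A K = if K ⊆ A then ((m.choose k : ℝ))⁻¹ else 0 := by
      intro A hA
      rw [wgt, hK, if_pos hkm]
    rw [sum_congr rfl hcong, ← sum_filter, sum_const,
      card_filter_superset _ K (subset_univ K) (by omega : K.card ≤ m), hK,
      Finset.card_univ, Fintype.card_fin, nsmul_eq_mul]
    have hmk : (0:ℝ) < (m.choose k : ℝ) := by exact_mod_cast Nat.choose_pos hkm
    rw [inv_eq_one_div, mul_one_div, div_eq_div_iff hmk.ne' hnk.ne']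
    exact_mod_cast (Nat.mul_comm _ _).trans (choose_chain hkm hmn.le)
  · push_neg at hkm
    have hcong : ∀ A ∈ powersetCard m (univ : Finset (Fin n)),
        wgt m A K = if A ⊆ K then (((n - m).choose (k - m) : ℝ))⁻¹ else 0 := by
      intro A hA
      rw [wgt, hK, if_neg (by omega)]
    have hfil : (powersetCard m (univ : Finset (Fin n))).filter (fun A => A ⊆ K)
        = powersetCard m K := by
      ext A
      simp only [mem_filter, mem_powersetCard, subset_univ, true_and]
      tauto
    rw [sum_congr rfl hcong, ← sum_filter, hfil, sum_const, card_powersetCard, hK,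
      nsmul_eq_mul]
    have hch : (0:ℝ) < ((n - m).choose (k - m) : ℝ) := by
      exact_mod_cast Nat.choose_pos (by omega : k - m ≤ n - m)
    rw [inv_eq_one_div, mul_one_div, div_eq_div_iff hch.ne' hnk.ne']
    have h := choose_chain hkm.le hk
    have h2 : k.choose m * n.choose k = n.choose m * (n - m).choose (k - m) := by rw [Nat.mul_comm]; exact h.symm
    exact_mod_cast h2

private lemma tail_card_bound {m : ℕ} (hm : 0 < m) (hmn : m < n)
    (a : Fin n → ℝ) (ha0 : ∑ i, a i = 0)
    (M γ R η : ℝ) (haM : ∀ i, |a i| ≤ M) (hγ : 0 < γ)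
    (hvar : ((m:ℝ)/n) * (1 - (m:ℝ)/n) * (∑ i, (a i)^2) ≤ γ^2)
    (hR : R = M / (3*γ) * max ((m:ℝ)/n) (1 - (m:ℝ)/n)) (hRnn : 0 ≤ R) (hη : 0 ≤ η) :
    (((powersetCard m (univ : Finset (Fin n))).filter
        (fun A => γ * deltaMN m n * η < ∑ i ∈ A, a i)).card : ℝ)
      ≤ Real.exp (-(η^2/2)/(1 + η*R)) * (n.choose m : ℝ) := by
  have hn0 : 0 < n := lt_trans hm hmn
  have hnr : (0:ℝ) < n := by exact_mod_cast hn0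
  have hmr : (0:ℝ) < m := by exact_mod_cast hm
  have hmnr : (m:ℝ) < n := by exact_mod_cast hmn
  set p : ℝ := (m:ℝ)/n with hp_def
  set q : ℝ := 1 - (m:ℝ)/n with hq_def
  have hp0 : 0 < p := by positivity
  have hp1 : p < 1 := by rw [hp_def, div_lt_one hnr]; exact hmnr
  have hq0 : 0 < q := by rw [hq_def]; rw [hp_def] at hp1; linarith
  have hpq : p + q = 1 := by rw [hp_def, hq_def]; ring
  have hmax0 : 0 ≤ max p q := le_max_of_le_left hp0.le
  set Eℓ : ℝ := ∑ k ∈ Finset.range (n+1), (n.choose k : ℝ) * p ^ k * q ^ (n - k) * ell m n k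
    with hEl_def
  have hdelta : deltaMN m n = Eℓ⁻¹ := rfl
  have hterm_nonneg : ∀ k ∈ Finset.range (n+1),
      0 ≤ (n.choose k : ℝ) * p ^ k * q ^ (n - k) * ell m n k := by
    intro k hk
    rw [Finset.mem_range] at hk
    have hknr : (k:ℝ) ≤ n := by exact_mod_cast Nat.lt_succ_iff.1 hk
    have hell0 : 0 ≤ ell m n k := by
      apply le_min
      · positivity
      · apply div_nonneg (by linarith) (by linarith)
    positivity
  have hEl_pos : 0 < Eℓ := by
    have hmem : m ∈ Finset.range (n+1) := by
      rw [Finset.mem_range]; omega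
    have hellm : ell m n m = 1 := by
      rw [ell, div_self hmr.ne', div_self (by linarith : (n:ℝ) - m ≠ 0), min_self]
    have hsingle := Finset.single_le_sum hterm_nonneg hmem
    rw [hellm] at hsingle
    have : (0:ℝ) < (n.choose m : ℝ) * p ^ m * q ^ (n - m) * 1 := by
      have : (0:ℝ) < (n.choose m : ℝ) := by exact_mod_cast Nat.choose_pos hmn.le
      positivity
    linarith
  have hD : 0 < 1 + η * R := by nlinarith
  set u : ℝ := η / ((1 + η * R) * γ) with hu_def
  have hu : 0 ≤ u := by positivity
  set d : ℝ := η * R / (1 + η * R) with hd_def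
  have hd0 : 0 ≤ d := by positivity
  have hd1 : d < 1 := by rw [hd_def, div_lt_one hD]; linarith

  have hγne : γ ≠ 0 := hγ.ne'
  have hMR : M * max p q = 3 * γ * R := by
    rw [hR]; field_simp; try ring
  have hx3d : ∀ i, |u * a i| * max p q ≤ 3 * d := by
    intro i
    have h1 : |u * a i| ≤ u * M := by
      rw [abs_mul, abs_of_nonneg hu]
      exact mul_le_mul_of_nonneg_left (haM i) hu
    have h2 : |u * a i| * max p q ≤ u * M * max p q :=
      mul_le_mul_of_nonneg_right h1 hmax0
    have h3 : u * M * max p q = 3 * d := by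
      rw [hu_def, hd_def, mul_assoc, hMR]
      field_simp
      try ring
    linarith
  set P : Finset (Finset (Fin n)) := (univ : Finset (Fin n)).powerset with hP_def
  set W : Finset (Fin n) → Finset (Fin n) → ℝ :=
    fun A K => (n.choose K.card : ℝ) * p ^ K.card * q ^ (n - K.card) * wgt m A K with hW_def
  have hW0 : ∀ A K, 0 ≤ W A K := by
    intro A K
    have := wgt_nonneg (n := n) m A K
    have h1 : (0:ℝ) ≤ (n.choose K.card : ℝ) := by positivity
    have h2 : (0:ℝ) ≤ p ^ K.card := by positivity
    have h3 : (0:ℝ) ≤ q ^ (n - K.card) := by positivity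
    rw [hW_def]
    simp only
    positivity
  have hcardP : ∀ K ∈ P, K.card ≤ n := by
    intro K _
    calc K.card ≤ Fintype.card (Fin n) := Finset.card_le_univ K
      _ = n := Fintype.card_fin n
  have hbinom : ∑ j ∈ Finset.range (n + 1), (n.choose j : ℝ) * p ^ j * q ^ (n - j) = 1 := by
    have h := add_pow p q n
    rw [hpq, one_pow] at h
    have h2 : ∑ j ∈ Finset.range (n + 1), (n.choose j : ℝ) * p ^ j * q ^ (n - j)
        = ∑ j ∈ Finset.range (n + 1), p ^ j * q ^ (n - j) * (n.choose j : ℝ) :=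
      Finset.sum_congr rfl (fun j _ => by ring)
    rw [h2]
    exact h.symm
  have hsum_P : ∀ f : Finset (Fin n) → ℝ, ∑ K ∈ P, f K
      = ∑ j ∈ Finset.range (n + 1), ∑ K ∈ powersetCard j (univ : Finset (Fin n)), f K := by
    intro f
    rw [hP_def, Finset.sum_powerset, Finset.card_univ, Fintype.card_fin]
  have hW1 : ∀ A ∈ powersetCard m (univ : Finset (Fin n)), ∑ K ∈ P, W A K = 1 := by
    intro A hA
    have hAm : A.card = m := (mem_powersetCard.1 hA).2
    rw [hsum_P]
    have hinner : ∀ j ∈ Finset.range (n + 1),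
        ∑ K ∈ powersetCard j (univ : Finset (Fin n)), W A K
          = (n.choose j : ℝ) * p ^ j * q ^ (n - j) := by
      intro j hj
      rw [Finset.mem_range] at hj
      have hstep : ∀ K ∈ powersetCard j (univ : Finset (Fin n)),
          W A K = (n.choose j : ℝ) * p ^ j * q ^ (n - j) * wgt m A K := by
        intro K hK
        rw [hW_def]
        simp only
        rw [(mem_powersetCard.1 hK).2]
      rw [Finset.sum_congr rfl hstep, ← Finset.mul_sum,
        sum_wgt hmn (by omega) hAm, mul_one]
    rw [Finset.sum_congr rfl hinner, hbinom]
  have hWT : ∀ A ∈ powersetCard m (univ : Finset (Fin n)),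
      ∑ K ∈ P, W A K * ∑ i ∈ K, a i = Eℓ * ∑ i ∈ A, a i := by
    intro A hA
    have hAm : A.card = m := (mem_powersetCard.1 hA).2
    rw [hsum_P]
    have hinner : ∀ j ∈ Finset.range (n + 1),
        ∑ K ∈ powersetCard j (univ : Finset (Fin n)), W A K * ∑ i ∈ K, a i
          = (n.choose j : ℝ) * p ^ j * q ^ (n - j) * ell m n j * ∑ i ∈ A, a i := by
      intro j hj
      rw [Finset.mem_range] at hj
      have hstep : ∀ K ∈ powersetCard j (univ : Finset (Fin n)),
          W A K * ∑ i ∈ K, a i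
            = (n.choose j : ℝ) * p ^ j * q ^ (n - j) * (wgt m A K * ∑ i ∈ K, a i) := by
        intro K hK
        rw [hW_def]
        simp only
        rw [(mem_powersetCard.1 hK).2]
        ring
      rw [Finset.sum_congr rfl hstep, ← Finset.mul_sum,
        sum_wgt_mul hm hmn (by omega) hAm a ha0]
      ring
    rw [Finset.sum_congr rfl hinner, hEl_def, Finset.sum_mul]
  have hJen : ∀ A ∈ powersetCard m (univ : Finset (Fin n)),
      Real.exp (u * (Eℓ * ∑ i ∈ A, a i))
        ≤ ∑ K ∈ P, W A K * Real.exp (u * ∑ i ∈ K, a i) := by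
    intro A hA
    have hcvx := convexOn_exp.map_sum_le (t := P) (w := fun K => W A K)
      (p := fun K => u * ∑ i ∈ K, a i) (fun K _ => hW0 A K) (hW1 A hA)
      (fun K _ => Set.mem_univ _)
    have hcenter : ∑ K ∈ P, W A K • (u * ∑ i ∈ K, a i) = u * (Eℓ * ∑ i ∈ A, a i) := by
      simp only [smul_eq_mul]
      rw [← hWT A hA, Finset.mul_sum]
      apply Finset.sum_congr rfl
      intro K _
      ring
    rw [hcenter] at hcvx
    simpa using hcvx
  have hWA : ∀ K ∈ P, ∑ A ∈ powersetCard m (univ : Finset (Fin n)), W A K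
      = (n.choose m : ℝ) * (p ^ K.card * q ^ (n - K.card)) := by
    intro K hK
    have hk : K.card ≤ n := hcardP K hK
    have hch : (0:ℝ) < (n.choose K.card : ℝ) := by exact_mod_cast Nat.choose_pos hk
    rw [hW_def]
    simp only
    rw [← Finset.mul_sum, sum_wgt_over_A hmn hk rfl]
    field_simp
  have hmix : ∑ A ∈ powersetCard m (univ : Finset (Fin n)),
      Real.exp (u * (Eℓ * ∑ i ∈ A, a i))
        ≤ (n.choose m : ℝ) * ∑ K ∈ P, p ^ K.card * q ^ (n - K.card)
            * Real.exp (u * ∑ i ∈ K, a i) := by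
    calc ∑ A ∈ powersetCard m (univ : Finset (Fin n)),
        Real.exp (u * (Eℓ * ∑ i ∈ A, a i))
        ≤ ∑ A ∈ powersetCard m (univ : Finset (Fin n)),
            ∑ K ∈ P, W A K * Real.exp (u * ∑ i ∈ K, a i) := Finset.sum_le_sum hJen
      _ = ∑ K ∈ P, ∑ A ∈ powersetCard m (univ : Finset (Fin n)),
            W A K * Real.exp (u * ∑ i ∈ K, a i) := Finset.sum_comm
      _ = ∑ K ∈ P, (n.choose m : ℝ) * (p ^ K.card * q ^ (n - K.card))
            * Real.exp (u * ∑ i ∈ K, a i) := by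
          apply Finset.sum_congr rfl
          intro K hK
          rw [← Finset.sum_mul, hWA K hK]
      _ = (n.choose m : ℝ) * ∑ K ∈ P, p ^ K.card * q ^ (n - K.card)
            * Real.exp (u * ∑ i ∈ K, a i) := by
          rw [Finset.mul_sum]
          apply Finset.sum_congr rfl
          intro K _
          ring
  have hprod : ∑ K ∈ P, p ^ K.card * q ^ (n - K.card) * Real.exp (u * ∑ i ∈ K, a i)
      = ∏ i, (p * Real.exp (u * a i) + q) := by
    rw [Finset.prod_add]
    apply Finset.sum_congr rfl
    intro K hK
    have hKu : K ⊆ univ := Finset.mem_powerset.1 hK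
    rw [Finset.prod_mul_distrib, Finset.prod_const, Finset.prod_const,
      Finset.card_sdiff_of_subset hKu, Finset.card_univ, Fintype.card_fin, ← Real.exp_sum,
      ← Finset.mul_sum]
    ring
  have hber : ∏ i, (p * Real.exp (u * a i) + q)
      ≤ Real.exp (p * q * u ^ 2 * (∑ i, (a i) ^ 2) / 2 * (1 - d)⁻¹) := by
    have hstep : ∀ i ∈ (univ : Finset (Fin n)), p * Real.exp (u * a i) + q
        ≤ Real.exp (p * (u * a i) + p * q * (u * a i) ^ 2 / 2 * (1 - d)⁻¹) := by
      intro i _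
      rw [add_comm]
      exact bernoulli_mgf hp0.le hq0.le hpq hd0 hd1 (hx3d i)
    calc ∏ i, (p * Real.exp (u * a i) + q)
        ≤ ∏ i, Real.exp (p * (u * a i) + p * q * (u * a i) ^ 2 / 2 * (1 - d)⁻¹) := by
          apply Finset.prod_le_prod (fun i _ => by positivity) hstep
      _ = Real.exp (∑ i, (p * (u * a i) + p * q * (u * a i) ^ 2 / 2 * (1 - d)⁻¹)) :=
          (Real.exp_sum _ _).symm
      _ = Real.exp (p * q * u ^ 2 * (∑ i, (a i) ^ 2) / 2 * (1 - d)⁻¹) := by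
          congr 1
          rw [Finset.sum_add_distrib]
          have h1 : ∑ i : Fin n, p * (u * a i) = 0 := by
            have hc : ∀ i ∈ (univ : Finset (Fin n)), p * (u * a i) = p * u * a i := by
              intro i _; ring
            rw [Finset.sum_congr rfl hc, ← Finset.mul_sum, ha0, mul_zero]
          have h2 : ∑ i : Fin n, p * q * (u * a i) ^ 2 / 2 * (1 - d)⁻¹
              = p * q * u ^ 2 * (∑ i, (a i) ^ 2) / 2 * (1 - d)⁻¹ := by
            have hc : ∀ i ∈ (univ : Finset (Fin n)), p * q * (u * a i) ^ 2 / 2 * (1 - d)⁻¹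
                = p * q * u ^ 2 / 2 * (1 - d)⁻¹ * (a i) ^ 2 := by
              intro i _; ring
            rw [Finset.sum_congr rfl hc, ← Finset.mul_sum]
            ring
          rw [h1, h2, zero_add]
  set c₀ : ℝ := γ * deltaMN m n * η with hc0_def
  set bad := (powersetCard m (univ : Finset (Fin n))).filter
      (fun A => c₀ < ∑ i ∈ A, a i) with hbad_def
  have hMarkov : (bad.card : ℝ) * Real.exp (u * (Eℓ * c₀))
      ≤ ∑ A ∈ powersetCard m (univ : Finset (Fin n)),
          Real.exp (u * (Eℓ * ∑ i ∈ A, a i)) := by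
    calc (bad.card : ℝ) * Real.exp (u * (Eℓ * c₀))
        = ∑ _A ∈ bad, Real.exp (u * (Eℓ * c₀)) := by
          rw [Finset.sum_const, nsmul_eq_mul]
      _ ≤ ∑ A ∈ bad, Real.exp (u * (Eℓ * ∑ i ∈ A, a i)) := by
          apply Finset.sum_le_sum
          intro A hA
          have hc := (Finset.mem_filter.1 hA).2
          apply Real.exp_le_exp.2
          apply mul_le_mul_of_nonneg_left _ hu
          exact mul_le_mul_of_nonneg_left hc.le hEl_pos.le
      _ ≤ ∑ A ∈ powersetCard m (univ : Finset (Fin n)),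
            Real.exp (u * (Eℓ * ∑ i ∈ A, a i)) := by
          apply Finset.sum_le_sum_of_subset_of_nonneg (Finset.filter_subset _ _)
          intro A _ _
          exact (Real.exp_pos _).le
  have hexp1 : u * (Eℓ * c₀) = η ^ 2 / (1 + η * R) := by
    rw [hc0_def, hdelta, hu_def]
    field_simp
  have h1d : (1 - d)⁻¹ = 1 + η * R := by
    rw [hd_def]
    rw [show 1 - η * R / (1 + η * R) = 1 / (1 + η * R) by field_simp; ring]
    rw [one_div, inv_inv]
  have hquad : p * q * u ^ 2 * (∑ i, (a i) ^ 2) / 2 * (1 - d)⁻¹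
      ≤ η ^ 2 / (2 * (1 + η * R)) := by
    have hu2 : u ^ 2 * γ ^ 2 = η ^ 2 / (1 + η * R) ^ 2 := by
      rw [hu_def]
      field_simp
    have hpqQ : p * q * u ^ 2 * (∑ i, (a i) ^ 2) ≤ η ^ 2 / (1 + η * R) ^ 2 := by
      have h := mul_le_mul_of_nonneg_left hvar (sq_nonneg u)
      calc p * q * u ^ 2 * (∑ i, (a i) ^ 2)
          = u ^ 2 * ((m:ℝ)/n * (1 - (m:ℝ)/n) * (∑ i, (a i) ^ 2)) := by
            rw [hp_def, hq_def]; ring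
        _ ≤ u ^ 2 * γ ^ 2 := h
        _ = η ^ 2 / (1 + η * R) ^ 2 := hu2
    rw [h1d]
    calc p * q * u ^ 2 * (∑ i, (a i) ^ 2) / 2 * (1 + η * R)
        ≤ η ^ 2 / (1 + η * R) ^ 2 / 2 * (1 + η * R) := by
          apply mul_le_mul_of_nonneg_right _ hD.le
          linarith [hpqQ]
      _ = η ^ 2 / (2 * (1 + η * R)) := by
          field_simp
  have hchain : ∑ A ∈ powersetCard m (univ : Finset (Fin n)),
      Real.exp (u * (Eℓ * ∑ i ∈ A, a i))
      ≤ (n.choose m : ℝ) * Real.exp (η ^ 2 / (2 * (1 + η * R))) := by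
    calc ∑ A ∈ powersetCard m (univ : Finset (Fin n)),
        Real.exp (u * (Eℓ * ∑ i ∈ A, a i))
        ≤ (n.choose m : ℝ) * ∑ K ∈ P, p ^ K.card * q ^ (n - K.card)
            * Real.exp (u * ∑ i ∈ K, a i) := hmix
      _ = (n.choose m : ℝ) * ∏ i, (p * Real.exp (u * a i) + q) := by rw [hprod]
      _ ≤ (n.choose m : ℝ)
            * Real.exp (p * q * u ^ 2 * (∑ i, (a i) ^ 2) / 2 * (1 - d)⁻¹) := by
          apply mul_le_mul_of_nonneg_left hber (by positivity)
      _ ≤ (n.choose m : ℝ) * Real.exp (η ^ 2 / (2 * (1 + η * R))) := by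
          apply mul_le_mul_of_nonneg_left (Real.exp_le_exp.2 hquad) (by positivity)
  have hfinal : (bad.card : ℝ)
      ≤ Real.exp (-(η ^ 2 / (1 + η * R))) * (Real.exp (η ^ 2 / (2 * (1 + η * R)))
          * (n.choose m : ℝ)) := by
    have h := hMarkov.trans hchain
    rw [hexp1] at h
    have hepos : (0:ℝ) < Real.exp (η ^ 2 / (1 + η * R)) := Real.exp_pos _
    rw [Real.exp_neg]
    calc (bad.card : ℝ)
        = (bad.card : ℝ) * Real.exp (η ^ 2 / (1 + η * R))
            * (Real.exp (η ^ 2 / (1 + η * R)))⁻¹ := by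
          field_simp
      _ ≤ (n.choose m : ℝ) * Real.exp (η ^ 2 / (2 * (1 + η * R)))
            * (Real.exp (η ^ 2 / (1 + η * R)))⁻¹ := by
          apply mul_le_mul_of_nonneg_right h (by positivity)
      _ = (Real.exp (η ^ 2 / (1 + η * R)))⁻¹
            * (Real.exp (η ^ 2 / (2 * (1 + η * R))) * (n.choose m : ℝ)) := by ring
  have hgoal : Real.exp (-(η ^ 2 / 2) / (1 + η * R))
      = Real.exp (-(η ^ 2 / (1 + η * R))) * Real.exp (η ^ 2 / (2 * (1 + η * R))) := by
    rw [← Real.exp_add]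
    congr 1
    field_simp
    ring
  rw [hgoal]
  calc (bad.card : ℝ)
      ≤ Real.exp (-(η ^ 2 / (1 + η * R))) * (Real.exp (η ^ 2 / (2 * (1 + η * R)))
          * (n.choose m : ℝ)) := hfinal
    _ = Real.exp (-(η ^ 2 / (1 + η * R))) * Real.exp (η ^ 2 / (2 * (1 + η * R)))
        * (n.choose m : ℝ) := by ring

end Weights

private lemma two_tail_bound {n m : ℕ} (hm : 0 < m) (hmn : m < n)
    (a : Fin n → ℝ) (ha0 : ∑ i, a i = 0)
    (M γ R η : ℝ) (haM : ∀ i, |a i| ≤ M) (hγ : 0 < γ)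
    (hvar : ((m:ℝ)/n) * (1 - (m:ℝ)/n) * (∑ i, (a i)^2) ≤ γ^2)
    (hR : R = M / (3*γ) * max ((m:ℝ)/n) (1 - (m:ℝ)/n)) (hRnn : 0 ≤ R) (hη : 0 ≤ η) :
    (((powersetCard m (univ : Finset (Fin n))).filter
        (fun A => γ * deltaMN m n * η < |∑ i ∈ A, a i|)).card : ℝ)
      ≤ 2 * Real.exp (-(η^2/2)/(1 + η*R)) * (n.choose m : ℝ) := by
  classical
  set c₀ : ℝ := γ * deltaMN m n * η with hc0
  have hsub : (powersetCard m (univ : Finset (Fin n))).filter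
      (fun A => c₀ < |∑ i ∈ A, a i|)
      ⊆ ((powersetCard m (univ : Finset (Fin n))).filter (fun A => c₀ < ∑ i ∈ A, a i))
        ∪ ((powersetCard m (univ : Finset (Fin n))).filter
            (fun A => c₀ < ∑ i ∈ A, (fun j => -a j) i)) := by
    intro A hA
    rw [Finset.mem_filter] at hA
    rw [Finset.mem_union, Finset.mem_filter, Finset.mem_filter]
    rcases lt_abs.1 hA.2 with h | h
    · exact Or.inl ⟨hA.1, h⟩
    · refine Or.inr ⟨hA.1, ?_⟩
      rw [Finset.sum_neg_distrib]
      linarith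
  have h1 := tail_card_bound hm hmn a ha0 M γ R η haM hγ hvar hR hRnn hη
  have h2 := tail_card_bound hm hmn (fun j => -a j) (by rw [Finset.sum_neg_distrib, ha0, neg_zero])
    M γ R η (fun i => by rw [abs_neg]; exact haM i) hγ
    (by
      have hsq : ∑ i, ((fun j => -a j) i) ^ 2 = ∑ i, (a i) ^ 2 :=
        Finset.sum_congr rfl (fun i _ => neg_sq (a i))
      rw [hsq]; exact hvar) hR hRnn hη
  have hcard := Finset.card_le_card hsub
  have hcard2 := Finset.card_union_le
    ((powersetCard m (univ : Finset (Fin n))).filter (fun A => c₀ < ∑ i ∈ A, a i))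
    ((powersetCard m (univ : Finset (Fin n))).filter
      (fun A => c₀ < ∑ i ∈ A, (fun j => -a j) i))
  have : (((powersetCard m (univ : Finset (Fin n))).filter
      (fun A => c₀ < |∑ i ∈ A, a i|)).card : ℝ)
      ≤ (((powersetCard m (univ : Finset (Fin n))).filter
          (fun A => c₀ < ∑ i ∈ A, a i)).card : ℝ)
        + (((powersetCard m (univ : Finset (Fin n))).filter
            (fun A => c₀ < ∑ i ∈ A, (fun j => -a j) i)).card : ℝ) := by
    exact_mod_cast le_trans hcard hcard2
  calc (((powersetCard m (univ : Finset (Fin n))).filter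
      (fun A => c₀ < |∑ i ∈ A, a i|)).card : ℝ)
      ≤ _ + _ := this
    _ ≤ Real.exp (-(η^2/2)/(1 + η*R)) * (n.choose m : ℝ)
        + Real.exp (-(η^2/2)/(1 + η*R)) * (n.choose m : ℝ) := add_le_add h1 h2
    _ = 2 * Real.exp (-(η^2/2)/(1 + η*R)) * (n.choose m : ℝ) := by ring

open MeasureTheory ProbabilityTheory

/-- Coupling Bernstein-type exponential inequality for a weighted average from a
hypergeometric ensemble: with `γ_{m,n}² = (m(n−m))/(n(n−1)) ∑ (ψᵢ − ψ̄)² ≠ 0` and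
`R(ψ,m,n) = (maxᵢ |ψᵢ − ψ̄| / (3γ_{m,n})) max(m/n, 1 − m/n)`, for every `η ≥ 0`,
`P(|γ⁻¹ ∑ ψᵢ(Zᵢ − m/n)| > δ(m,n)η | ∑ Zᵢ = m) ≤ 2 exp(−(η²/2)/(1 + ηR))`. -/
theorem coupling_bernstein_inequality
    {Ω : Type*} [MeasurableSpace Ω] (μ : Measure Ω) [IsProbabilityMeasure μ]
    (m n : ℕ) (hm : 0 < m) (hmn : m < n)
    (Z : Fin n → Ω → ℝ) (hZmeas : ∀ i, Measurable (Z i))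
    (hindep : iIndepFun Z μ)
    (hZ1 : ∀ i, μ {ω | Z i ω = 1} = ENNReal.ofReal ((m : ℝ) / n))
    (hZ0 : ∀ i, μ {ω | Z i ω = 0} = ENNReal.ofReal (1 - (m : ℝ) / n))
    (ψ : Fin n → ℝ) (ψbar γ R : ℝ)
    (hψbar : ψbar = (∑ i, ψ i) / n)
    (hγ : γ = Real.sqrt
      (((m : ℝ) * ((n : ℝ) - m)) / ((n : ℝ) * ((n : ℝ) - 1)) * ∑ i, (ψ i - ψbar) ^ 2))
    (hγne : γ ≠ 0)
    (hR : R = (⨆ i, |ψ i - ψbar|) / (3 * γ) * max ((m : ℝ) / n) (1 - (m : ℝ) / n))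
    (η : ℝ) (hη : 0 ≤ η) :
    (μ[|{ω | ∑ i, Z i ω = (m : ℝ)}])
        {ω | deltaMN m n * η < |γ⁻¹ * ∑ i, ψ i * (Z i ω - (m : ℝ) / n)|} ≤
      ENNReal.ofReal (2 * Real.exp (-(η ^ 2 / 2) / (1 + η * R))) := by
  classical
  have hn0 : 0 < n := lt_trans hm hmn
  have hnr : (0:ℝ) < n := by exact_mod_cast hn0
  have hmr : (0:ℝ) < m := by exact_mod_cast hm
  have hmnr : (m:ℝ) < n := by exact_mod_cast hmn
  have hn2 : 2 ≤ n := by omega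
  have hn1r : (1:ℝ) ≤ (n:ℝ) - 1 := by
    have : (2:ℝ) ≤ n := by exact_mod_cast hn2
    linarith
  set p : ℝ := (m:ℝ)/n with hp_def
  have hp0 : 0 < p := by positivity
  have hp1 : p < 1 := by rw [hp_def, div_lt_one hnr]; exact hmnr
  have hq0 : 0 < 1 - p := by linarith
  -- centered weights
  set a : Fin n → ℝ := fun i => ψ i - ψbar with ha_def
  have hψsum : ∑ i, ψ i = (n:ℝ) * ψbar := by
    rw [hψbar]; field_simp
  have ha0 : ∑ i, a i = 0 := by
    rw [ha_def]
    simp only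
    rw [Finset.sum_sub_distrib, Finset.sum_const, Finset.card_univ, Fintype.card_fin,
      hψsum, nsmul_eq_mul]
    ring
  set M : ℝ := ⨆ i, |ψ i - ψbar| with hM_def
  have haM : ∀ i, |a i| ≤ M := by
    intro i
    rw [hM_def, ha_def]
    exact le_ciSup (f := fun j => |ψ j - ψbar|) (Set.Finite.bddAbove (Set.finite_range _)) i
  have hγpos : 0 < γ := by
    rcases lt_or_eq_of_le (hγ ▸ Real.sqrt_nonneg _) with h | h
    · exact h
    · exact absurd h.symm hγne
  have hsqnn : (0:ℝ) ≤ ((m : ℝ) * ((n : ℝ) - m)) / ((n : ℝ) * ((n : ℝ) - 1))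
      * ∑ i, (ψ i - ψbar) ^ 2 := by
    have h1 : (0:ℝ) ≤ ∑ i, (ψ i - ψbar) ^ 2 := Finset.sum_nonneg (fun i _ => sq_nonneg _)
    have h2 : (0:ℝ) < (n:ℝ) - 1 := by linarith
    have h3 : (0:ℝ) < (n:ℝ) - m := by linarith
    positivity
  have hγsq : γ ^ 2 = ((m : ℝ) * ((n : ℝ) - m)) / ((n : ℝ) * ((n : ℝ) - 1))
      * ∑ i, (ψ i - ψbar) ^ 2 := by
    rw [hγ, Real.sq_sqrt hsqnn]
  have hvar : p * (1 - p) * (∑ i, (a i)^2) ≤ γ^2 := by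
    rw [hγsq]
    have hS : ∑ i, (a i)^2 = ∑ i, (ψ i - ψbar) ^ 2 := rfl
    rw [hS]
    apply mul_le_mul_of_nonneg_right _ (Finset.sum_nonneg (fun i _ => sq_nonneg _))
    have hpq_eq : p * (1 - p) = ((m:ℝ) * ((n:ℝ) - m)) / ((n:ℝ) * (n:ℝ)) := by
      rw [hp_def]; field_simp; try ring
    rw [hpq_eq]
    have h1 : (0:ℝ) ≤ (m:ℝ)*((n:ℝ) - m) := by nlinarith
    have h2 : (0:ℝ) < (n:ℝ)*((n:ℝ) - 1) := by nlinarith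
    have h3 : (n:ℝ)*((n:ℝ) - 1) ≤ (n:ℝ)*(n:ℝ) := by nlinarith
    exact div_le_div_of_nonneg_left h1 h2 h3
  have hRnn : 0 ≤ R := by
    rw [hR]
    have hM0 : 0 ≤ M := le_trans (abs_nonneg _) (haM ⟨0, hn0⟩)
    have h1 : (0:ℝ) ≤ (⨆ i, |ψ i - ψbar|) := hM_def ▸ hM0
    have h2 : (0:ℝ) ≤ max ((m : ℝ) / n) (1 - (m : ℝ) / n) := le_max_of_le_left hp0.le
    positivity
  have hReq : R = M / (3*γ) * max p (1 - p) := hR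
  -- the bad-set cardinality bound
  have hbadcard := two_tail_bound hm hmn a ha0 M γ R η haM hγpos hvar hReq hRnn hη
  -- measure-theoretic reduction
  set E : Set Ω := {ω | ∑ i, Z i ω = (m : ℝ)} with hE_def
  have hsummeas : Measurable fun ω => ∑ i, Z i ω :=
    Finset.measurable_sum _ (fun i _ => hZmeas i)
  have hEmeas : MeasurableSet E := by
    rw [hE_def]
    exact measurableSet_eq_fun hsummeas measurable_const
  have hstatmeas : Measurable fun ω => γ⁻¹ * ∑ i, ψ i * (Z i ω - p) := by
    apply Measurable.const_mul
    exact Finset.measurable_sum _ (fun i _ => ((hZmeas i).sub measurable_const).const_mul _)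
  set t : Set Ω := {ω | deltaMN m n * η < |γ⁻¹ * ∑ i, ψ i * (Z i ω - p)|} with ht_def
  have htmeas : MeasurableSet t := by
    rw [ht_def]
    exact measurableSet_lt measurable_const hstatmeas.abs
  -- cylinders
  set c : Finset (Fin n) → Fin n → ℝ := fun A i => if i ∈ A then 1 else 0 with hc_def
  set CA : Finset (Fin n) → Set Ω := fun A => ⋂ i ∈ Finset.univ, (Z i)⁻¹' {c A i} with hCA_def
  have hCAmeas : ∀ A, MeasurableSet (CA A) := by
    intro A
    apply MeasurableSet.biInter (Set.to_countable _)
    exact fun i _ => hZmeas i (measurableSet_singleton _)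
  set w : ℝ≥0∞ := ENNReal.ofReal p ^ m * ENNReal.ofReal (1 - p) ^ (n - m) with hw_def
  have hCAmem : ∀ A (ω : Ω), ω ∈ CA A ↔ ∀ i, Z i ω = c A i := by
    intro A ω
    rw [hCA_def]
    simp [Set.mem_iInter]
  have hCAmeasure : ∀ A : Finset (Fin n), A.card = m → μ (CA A) = w := by
    intro A hAm
    have h := hindep.measure_inter_preimage_eq_mul Finset.univ
      (sets := fun i => {c A i}) (fun i _ => measurableSet_singleton _)
    rw [hCA_def]
    simp only
    rw [h]
    have hfac : ∀ i ∈ Finset.univ, μ (Z i ⁻¹' {c A i})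
        = if i ∈ A then ENNReal.ofReal p else ENNReal.ofReal (1 - p) := by
      intro i _
      by_cases hi : i ∈ A
      · rw [if_pos hi]
        have : Z i ⁻¹' {c A i} = {ω | Z i ω = 1} := by
          rw [hc_def]; simp only [if_pos hi]; rfl
        rw [this, hZ1 i]
      · rw [if_neg hi]
        have : Z i ⁻¹' {c A i} = {ω | Z i ω = 0} := by
          rw [hc_def]; simp only [if_neg hi]; rfl
        rw [this, hZ0 i]
    rw [Finset.prod_congr rfl hfac, Finset.prod_ite, Finset.prod_const, Finset.prod_const]
    have hf1 : Finset.univ.filter (fun i => i ∈ A) = A := by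
      ext i; simp
    have hf2 : (Finset.univ.filter (fun i => ¬ i ∈ A)).card = n - m := by
      have : Finset.univ.filter (fun i => ¬ i ∈ A) = Aᶜ := by
        ext i; simp
      rw [this, Finset.card_compl, Fintype.card_fin, hAm]
    rw [hf1, hf2, hAm, hw_def]
  -- good event
  set G : Set Ω := ⋂ i, ((Z i)⁻¹' {(1:ℝ)} ∪ (Z i)⁻¹' {(0:ℝ)}) with hG_def
  have hGmeas : MeasurableSet G := by
    apply MeasurableSet.iInter
    exact fun i => ((hZmeas i) (measurableSet_singleton _)).union
      ((hZmeas i) (measurableSet_singleton _))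
  have hGc : μ Gᶜ = 0 := by
    rw [hG_def, Set.compl_iInter]
    apply measure_iUnion_null
    intro i
    have hdis : Disjoint ((Z i)⁻¹' {(1:ℝ)}) ((Z i)⁻¹' {(0:ℝ)}) := by
      rw [Set.disjoint_left]
      intro ω h1 h0
      have e1 : Z i ω = 1 := h1
      have e0 : Z i ω = 0 := h0
      rw [e1] at e0
      norm_num at e0
    have hmeas1 : MeasurableSet ((Z i)⁻¹' {(1:ℝ)}) := (hZmeas i) (measurableSet_singleton _)
    have hmeas0 : MeasurableSet ((Z i)⁻¹' {(0:ℝ)}) := (hZmeas i) (measurableSet_singleton _)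
    have hone : μ ((Z i)⁻¹' {(1:ℝ)} ∪ (Z i)⁻¹' {(0:ℝ)}) = 1 := by
      rw [measure_union hdis hmeas0]
      have e1 : (Z i)⁻¹' {(1:ℝ)} = {ω | Z i ω = 1} := rfl
      have e0 : (Z i)⁻¹' {(0:ℝ)} = {ω | Z i ω = 0} := rfl
      rw [e1, e0, hZ1 i, hZ0 i, ← ENNReal.ofReal_add hp0.le hq0.le]
      norm_num
    rw [measure_compl (hmeas1.union hmeas0) (measure_ne_top μ _), hone, measure_univ,
      tsub_self]
    -- membership facts
  have hZG : ∀ ω ∈ G, ∀ i, Z i ω = 1 ∨ Z i ω = 0 := by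
    intro ω hω i
    rw [hG_def] at hω
    have := Set.mem_iInter.1 hω i
    rcases this with h | h
    · exact Or.inl h
    · exact Or.inr h
  have hsum_c : ∀ A : Finset (Fin n), ∑ i, c A i = (A.card : ℝ) := by
    intro A
    rw [hc_def]
    simp only
    rw [Finset.sum_boole]
    congr 1
    congr 1
    ext i; simp
  have hEG : E ∩ G = ⋃ A ∈ powersetCard m (univ : Finset (Fin n)), CA A := by
    ext ω
    constructor
    · rintro ⟨hωE, hωG⟩
      set A := Finset.univ.filter (fun i => Z i ω = 1) with hA_def
      have hZA : ∀ i, Z i ω = c A i := by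
        intro i
        rw [hc_def]
        simp only
        by_cases hi : i ∈ A
        · rw [if_pos hi]
          exact (Finset.mem_filter.1 hi).2
        · rw [if_neg hi]
          rcases hZG ω hωG i with h | h
          · exact absurd (Finset.mem_filter.2 ⟨Finset.mem_univ i, h⟩) hi
          · exact h
      have hsum : (∑ i, Z i ω) = (A.card : ℝ) := by
        rw [Finset.sum_congr rfl (fun i _ => hZA i), hsum_c]
      have hAm : A.card = m := by
        have : (A.card : ℝ) = (m : ℝ) := by
          rw [← hsum]
          exact hωE
        exact_mod_cast this
      apply Set.mem_biUnion (Finset.mem_coe.2 (mem_powersetCard.2 ⟨subset_univ A, hAm⟩))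
      exact (hCAmem A ω).2 hZA
    · intro hω
      rcases Set.mem_iUnion₂.1 hω with ⟨A, hA, hωA⟩
      have hAm : A.card = m := (mem_powersetCard.1 hA).2
      have hZA := (hCAmem A ω).1 hωA
      constructor
      · rw [hE_def]
        show (∑ i, Z i ω) = (m : ℝ)
        rw [Finset.sum_congr rfl (fun i _ => hZA i), hsum_c, hAm]
      · rw [hG_def]
        apply Set.mem_iInter.2
        intro i
        rw [hc_def] at hZA
        by_cases hi : i ∈ A
        · left
          have := hZA i
          simp only [if_pos hi] at this
          exact this
        · right
          have := hZA i
          simp only [if_neg hi] at this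
          exact this
  have hdisj : (↑(powersetCard m (univ : Finset (Fin n))) : Set (Finset (Fin n))).PairwiseDisjoint CA := by
    intro A hA B hB hAB
    rw [Function.onFun, Set.disjoint_left]
    intro ω hωA hωB
    have hAm : A.card = m := (mem_powersetCard.1 (Finset.mem_coe.1 hA)).2
    have hBm : B.card = m := (mem_powersetCard.1 (Finset.mem_coe.1 hB)).2
    have hZA := (hCAmem A ω).1 hωA
    have hZB := (hCAmem B ω).1 hωB
    have : ∃ i, i ∈ A ∧ i ∉ B := by
      by_contra h
      push_neg at h
      exact hAB (Finset.eq_of_subset_of_card_le (fun i hi => h i hi) (by omega))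
    rcases this with ⟨i, hiA, hiB⟩
    have h1 : Z i ω = 1 := by
      have := hZA i
      rw [hc_def] at this
      simpa [if_pos hiA] using this
    have h0 : Z i ω = 0 := by
      have := hZB i
      rw [hc_def] at this
      simpa [if_neg hiB] using this
    rw [h1] at h0
    norm_num at h0
  -- measure of E
  have hinterG : ∀ s : Set Ω, MeasurableSet s → μ s = μ (s ∩ G) := by
    intro s hs
    have h1 := measure_inter_add_diff (μ := μ) s hGmeas
    have h2 : μ (s \ G) = 0 := measure_mono_null (fun ω hω => hω.2) hGc
    rw [h2, add_zero] at h1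
    exact h1.symm
  have hEmeasure : μ E = (n.choose m : ℝ≥0∞) * w := by
    rw [hinterG E hEmeas, hEG, measure_biUnion_finset hdisj (fun A _ => hCAmeas A)]
    rw [Finset.sum_congr rfl (fun A hA => hCAmeasure A (mem_powersetCard.1 hA).2),
      Finset.sum_const, card_powersetCard, Finset.card_univ, Fintype.card_fin, nsmul_eq_mul]
  -- statistic on cylinders
  have hstat : ∀ A : Finset (Fin n), A.card = m → ∀ ω ∈ CA A,
      γ⁻¹ * ∑ i, ψ i * (Z i ω - p) = γ⁻¹ * ∑ i ∈ A, a i := by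
    intro A hAm ω hω
    have hZA := (hCAmem A ω).1 hω
    congr 1
    rw [Finset.sum_congr rfl (fun i _ => by rw [hZA i])]
    have hexp : ∀ i ∈ Finset.univ, ψ i * (c A i - p) = (if i ∈ A then ψ i else 0) - p * ψ i := by
      intro i _
      rw [hc_def]
      simp only
      by_cases hi : i ∈ A
      · rw [if_pos hi, if_pos hi]; ring
      · rw [if_neg hi, if_neg hi]; ring
    rw [Finset.sum_congr rfl hexp, Finset.sum_sub_distrib, Finset.sum_ite_mem,
      Finset.univ_inter, ← Finset.mul_sum, hψsum, ha_def]
    simp only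
    rw [Finset.sum_sub_distrib, Finset.sum_const, nsmul_eq_mul, hAm]
    rw [hp_def]
    field_simp
  -- E ∩ t
  set bad := (powersetCard m (univ : Finset (Fin n))).filter
      (fun A => deltaMN m n * η < |γ⁻¹ * ∑ i ∈ A, a i|) with hbad_def
  have hCAt : ∀ A ∈ powersetCard m (univ : Finset (Fin n)),
      CA A ∩ t = if A ∈ bad then CA A else ∅ := by
    intro A hA
    have hAm : A.card = m := (mem_powersetCard.1 hA).2
    by_cases hAb : A ∈ bad
    · rw [if_pos hAb]
      apply Set.inter_eq_left.2
      intro ω hω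
      rw [ht_def]
      show deltaMN m n * η < |γ⁻¹ * ∑ i, ψ i * (Z i ω - p)|
      rw [hstat A hAm ω hω]
      exact (Finset.mem_filter.1 hAb).2
    · rw [if_neg hAb]
      apply Set.eq_empty_of_forall_notMem
      intro ω hω
      apply hAb
      rw [hbad_def]
      refine Finset.mem_filter.2 ⟨hA, ?_⟩
      have hωt := hω.2
      rw [ht_def] at hωt
      have : deltaMN m n * η < |γ⁻¹ * ∑ i, ψ i * (Z i ω - p)| := hωt
      rwa [hstat A hAm ω hω.1] at this
  have hEtmeasure : μ (E ∩ t) = (bad.card : ℝ≥0∞) * w := by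
    have h1 : (E ∩ t) ∩ G = ⋃ A ∈ powersetCard m (univ : Finset (Fin n)), (CA A ∩ t) := by
      rw [Set.inter_right_comm, hEG, Set.iUnion₂_inter]
    have hdisj2 : (↑(powersetCard m (univ : Finset (Fin n))) : Set (Finset (Fin n))).PairwiseDisjoint
        (fun A => CA A ∩ t) := by
      intro A hA B hB hAB
      exact Set.disjoint_of_subset Set.inter_subset_left Set.inter_subset_left
        (hdisj hA hB hAB)
    rw [hinterG (E ∩ t) (hEmeas.inter htmeas), h1,
      measure_biUnion_finset hdisj2 (fun A _ => (hCAmeas A).inter htmeas)]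
    have h2 : ∀ A ∈ powersetCard m (univ : Finset (Fin n)),
        μ (CA A ∩ t) = if A ∈ bad then w else 0 := by
      intro A hA
      rw [hCAt A hA]
      by_cases hAb : A ∈ bad
      · rw [if_pos hAb, if_pos hAb, hCAmeasure A (mem_powersetCard.1 hA).2]
      · rw [if_neg hAb, if_neg hAb, measure_empty]
    have hff : (powersetCard m (univ : Finset (Fin n))).filter (fun A => A ∈ bad) = bad := by
      ext A
      rw [Finset.mem_filter]
      constructor
      · exact fun h => h.2
      · intro h
        exact ⟨Finset.mem_of_mem_filter A (hbad_def ▸ h), h⟩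
    rw [Finset.sum_congr rfl h2, ← Finset.sum_filter, hff, Finset.sum_const,
      nsmul_eq_mul]
  -- conditional probability
  have hw0 : w ≠ 0 := by
    rw [hw_def]
    apply mul_ne_zero
    · exact pow_ne_zero _ (ENNReal.ofReal_pos.2 hp0).ne'
    · exact pow_ne_zero _ (ENNReal.ofReal_pos.2 hq0).ne'
  have hwtop : w ≠ ⊤ := by
    rw [hw_def]
    exact ENNReal.mul_ne_top (ENNReal.pow_ne_top ENNReal.ofReal_ne_top)
      (ENNReal.pow_ne_top ENNReal.ofReal_ne_top)
  have hC0 : (n.choose m : ℝ≥0∞) ≠ 0 := by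
    exact_mod_cast (Nat.choose_pos hmn.le).ne'
  have hCtop : (n.choose m : ℝ≥0∞) ≠ ⊤ := ENNReal.natCast_ne_top _
  have hcond : (μ[|E]) t = (bad.card : ℝ≥0∞) * (n.choose m : ℝ≥0∞)⁻¹ := by
    rw [cond_apply hEmeas, hEmeasure, hEtmeasure]
    rw [ENNReal.mul_inv (Or.inl hC0) (Or.inl hCtop)]
    calc (n.choose m : ℝ≥0∞)⁻¹ * w⁻¹ * ((bad.card : ℝ≥0∞) * w)
        = (bad.card : ℝ≥0∞) * (n.choose m : ℝ≥0∞)⁻¹ * (w⁻¹ * w) := by ring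
      _ = (bad.card : ℝ≥0∞) * (n.choose m : ℝ≥0∞)⁻¹ := by
          rw [ENNReal.inv_mul_cancel hw0 hwtop, mul_one]
  -- relate bad to the filter in hbadcard
  have hbadeq : bad = (powersetCard m (univ : Finset (Fin n))).filter
      (fun A => γ * deltaMN m n * η < |∑ i ∈ A, a i|) := by
    rw [hbad_def]
    apply Finset.filter_congr
    intro A _
    rw [abs_mul, abs_of_pos (inv_pos.2 hγpos), inv_mul_eq_div, lt_div_iff₀ hγpos]
    constructor
    · intro h
      linarith
    · intro h
      linarith
  rw [hbadeq] at hcond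
  -- final ENNReal bound
  set B : ℝ := 2 * Real.exp (-(η ^ 2 / 2) / (1 + η * R)) with hB_def
  have hB0 : 0 ≤ B := by positivity
  have hbcast : ((((powersetCard m (univ : Finset (Fin n))).filter
      (fun A => γ * deltaMN m n * η < |∑ i ∈ A, a i|)).card : ℝ≥0∞))
      ≤ ENNReal.ofReal (B * (n.choose m : ℝ)) := by
    rw [← ENNReal.ofReal_natCast]
    exact ENNReal.ofReal_le_ofReal hbadcard
  rw [hcond]
  calc (((powersetCard m (univ : Finset (Fin n))).filter
      (fun A => γ * deltaMN m n * η < |∑ i ∈ A, a i|)).card : ℝ≥0∞)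
        * (n.choose m : ℝ≥0∞)⁻¹
      ≤ ENNReal.ofReal (B * (n.choose m : ℝ)) * (n.choose m : ℝ≥0∞)⁻¹ :=
        mul_le_mul_left hbcast _
    _ = ENNReal.ofReal B * ((n.choose m : ℝ≥0∞) * (n.choose m : ℝ≥0∞)⁻¹) := by
        rw [ENNReal.ofReal_mul hB0, ENNReal.ofReal_natCast, mul_assoc]
    _ = ENNReal.ofReal B := by
        rw [ENNReal.mul_inv_cancel hC0 hCtop, mul_one]
end

section
/- For every real x ≥ 0 one has (1 + x)·log(1 + x) − x ≥ (x²/2)/(1 + x/3). -/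
open Real Set

private lemma log_lower (x : ℝ) (hx : 0 ≤ x) :
    6 * x * (6 + x) / (6 + 2 * x) ^ 2 ≤ Real.log (1 + x) := by
  set g : ℝ → ℝ := fun t => Real.log (1 + t) - 6 * t * (6 + t) / (6 + 2 * t) ^ 2 with hg
  have hder : ∀ t : ℝ, 0 ≤ t → HasDerivAt g (1 / (1 + t) - 216 / (6 + 2 * t) ^ 3) t := by
    intro t ht
    have h1t : (0:ℝ) < 1 + t := by linarith
    have h6t : (0:ℝ) < 6 + 2 * t := by linarith
    have hlog : HasDerivAt (fun t : ℝ => Real.log (1 + t)) (1 / (1 + t)) t := by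
      have := ((hasDerivAt_id t).const_add 1).log (ne_of_gt h1t)
      simpa using this
    have hnum : HasDerivAt (fun t : ℝ => 6 * t * (6 + t)) (6 * (6 + t) + 6 * t * 1) t := by
      have := ((hasDerivAt_id t).const_mul 6).mul ((hasDerivAt_id t).const_add 6)
      exact this.congr_deriv (by simp only [id]; ring)
    have hden : HasDerivAt (fun t : ℝ => (6 + 2 * t) ^ 2)
        (2 * (6 + 2 * t) ^ 1 * 2) t := by
      have := (((hasDerivAt_id t).const_mul 2).const_add 6).pow 2
      exact this.congr_deriv (by simp only [id]; ring)
    have hq := hnum.div hden (by positivity)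
    have := hlog.sub hq
    refine this.congr_deriv ?_
    have h2 : (6 + 2 * t) ^ 2 ≠ 0 := by positivity
    have h3 : (6 + 2 * t) ^ 3 ≠ 0 := by positivity
    field_simp
    ring
  have hmono : MonotoneOn g (Ici (0:ℝ)) := by
    apply monotoneOn_of_deriv_nonneg (convex_Ici 0)
    · intro t ht
      exact ((hder t ht).continuousAt).continuousWithinAt
    · intro t ht
      rw [interior_Ici] at ht
      exact ((hder t (le_of_lt ht)).differentiableAt).differentiableWithinAt
    · intro t ht
      rw [interior_Ici] at ht
      rw [(hder t ht.le).deriv]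
      have h1t : (0:ℝ) < 1 + t := by linarith [(mem_Ioi.mp ht).le]
      have h62 : (0:ℝ) < 6 + 2 * t := by linarith [(mem_Ioi.mp ht).le]
      have h6t : (0:ℝ) < (6 + 2 * t) ^ 3 := pow_pos h62 3
      rw [sub_nonneg, div_le_div_iff₀ h6t h1t]
      nlinarith [(mem_Ioi.mp ht).le, sq_nonneg t]
  have h0 : g 0 = 0 := by simp [hg]
  have := hmono (self_mem_Ici) (mem_Ici.mpr hx) hx
  rw [h0] at this
  simpa [hg, sub_nonneg] using this

/-- For every real `x ≥ 0`: `(1 + x)·log(1 + x) − x ≥ (x²/2)/(1 + x/3)`. -/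
theorem bennett_to_bernstein (x : ℝ) (hx : 0 ≤ x) :
    x ^ 2 / 2 / (1 + x / 3) ≤ (1 + x) * Real.log (1 + x) - x := by
  set F : ℝ → ℝ := fun t => (1 + t) * Real.log (1 + t) - t - t ^ 2 / 2 / (1 + t / 3) with hF
  have hder : ∀ t : ℝ, 0 ≤ t → HasDerivAt F
      (1 * Real.log (1 + t) + (1 + t) * (1 / (1 + t)) - 1 -
        ((2 * t ^ 1 / 2) * (1 + t / 3) - t ^ 2 / 2 * (3⁻¹)) / (1 + t / 3) ^ 2) t := by
    intro t ht
    have h1t : (0:ℝ) < 1 + t := by linarith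
    have h3t : (0:ℝ) < 1 + t / 3 := by linarith
    have hlog : HasDerivAt (fun t : ℝ => Real.log (1 + t)) (1 / (1 + t)) t := by
      have := ((hasDerivAt_id t).const_add 1).log (ne_of_gt h1t)
      simpa using this
    have hmul : HasDerivAt (fun t : ℝ => (1 + t) * Real.log (1 + t))
        (1 * Real.log (1 + t) + (1 + t) * (1 / (1 + t))) t :=
      ((hasDerivAt_id t).const_add 1).mul hlog
    have hnum : HasDerivAt (fun t : ℝ => t ^ 2 / 2) (2 * t ^ 1 / 2) t :=
      (hasDerivAt_pow 2 t).div_const 2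
    have hden : HasDerivAt (fun t : ℝ => 1 + t / 3) (3⁻¹ : ℝ) t := by
      have := ((hasDerivAt_id t).div_const 3).const_add 1
      simpa using this
    have hq := hnum.div hden (ne_of_gt h3t)
    exact (hmul.sub (hasDerivAt_id t)).sub hq
  have hmono : MonotoneOn F (Ici (0:ℝ)) := by
    apply monotoneOn_of_deriv_nonneg (convex_Ici 0)
    · intro t ht
      exact ((hder t ht).continuousAt).continuousWithinAt
    · intro t ht
      rw [interior_Ici] at ht
      exact ((hder t ht.le).differentiableAt).differentiableWithinAt
    · intro t ht
      rw [interior_Ici] at ht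
      rw [(hder t ht.le).deriv]
      have h1t : (0:ℝ) < 1 + t := by linarith [(mem_Ioi.mp ht).le]
      have h3t : (0:ℝ) < 1 + t / 3 := by linarith [(mem_Ioi.mp ht).le]
      have hA := log_lower t ht.le
      have hE : ((2 * t ^ 1 / 2) * (1 + t / 3) - t ^ 2 / 2 * (3⁻¹)) / (1 + t / 3) ^ 2
          = 6 * t * (6 + t) / (6 + 2 * t) ^ 2 := by
        rw [div_eq_div_iff (by positivity) (by nlinarith [h3t])]
        ring
      have h11 : (1 + t) * (1 / (1 + t)) = 1 := by
        field_simp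
      rw [hE, h11]
      linarith
  have h0 : F 0 = 0 := by simp [hF]
  have := hmono (self_mem_Ici) (mem_Ici.mpr hx) hx
  rw [h0] at this
  have := this
  simp only [hF] at this
  linarith
end

section
/- For every γ ∈ (0,1] and every Δ ∈ [−1,1] one has (1 + Δ)^{1+γ} ≤ 1 + (1+γ)Δ + (1/2)γ(1+γ)Δ² + 3γΔ²|Δ|. -/
open Real

/-- Strong concavity bound: for `γ ∈ (0,1]` and `t ∈ [0,1]`,
`(1-t)^γ ≤ 1 - γ t - γ(1-γ)/2 t²`. -/
lemma aux_neg_side (γ : ℝ) (hγ0 : 0 < γ) (hγ1 : γ ≤ 1) :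
    ∀ t ∈ Set.Icc (0:ℝ) 1, (1 - t) ^ γ ≤ 1 - γ * t - γ * (1 - γ) / 2 * t ^ 2 := by
  set F : ℝ → ℝ := fun t => 1 - γ * t - γ * (1 - γ) / 2 * t ^ 2 - (1 - t) ^ γ with hF
  have hcont : ContinuousOn F (Set.Icc 0 1) := by
    apply ContinuousOn.sub
    · fun_prop
    · apply ContinuousOn.rpow_const (by fun_prop)
      intro x _; right; exact hγ0.le
  have hderiv : ∀ t ∈ Set.Ioo (0:ℝ) 1, HasDerivAt F
      (-(γ) - γ * (1 - γ) / 2 * (2 * t) - -1 * γ * (1 - t) ^ (γ - 1)) t := by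
    intro t ht
    have h1 : HasDerivAt (fun t : ℝ => 1 - t) (-1) t := by
      simpa using (hasDerivAt_id t).const_sub 1
    have h2 : HasDerivAt (fun t : ℝ => (1 - t) ^ γ) (-1 * γ * (1 - t) ^ (γ - 1)) t :=
      h1.rpow_const (p := γ) (Or.inl (by nlinarith [ht.2]))
    have h3 : HasDerivAt (fun t : ℝ => 1 - γ * t - γ * (1 - γ) / 2 * t ^ 2)
        (-(γ) - γ * (1 - γ) / 2 * (2 * t)) t := by
      have hp := ((hasDerivAt_pow 2 t).const_mul (γ * (1 - γ) / 2))
      have h4 := ((hasDerivAt_id t).const_mul γ).const_sub 1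
      simpa [Pi.sub_def] using h4.sub hp
    exact h3.sub h2
  have hmono : MonotoneOn F (Set.Icc 0 1) := by
    apply monotoneOn_of_deriv_nonneg (convex_Icc 0 1) hcont
    · intro t ht
      rw [interior_Icc] at ht
      exact ((hderiv t ht).differentiableAt).differentiableWithinAt
    · intro t ht
      rw [interior_Icc] at ht
      rw [(hderiv t ht).deriv]
      have ht1 : (0:ℝ) < 1 - t := by linarith [ht.2]
      -- key: (1-t)^(γ-1) ≥ 1 + (1-γ)t
      have hb : (1 - t) ^ (1 - γ) ≤ 1 - (1 - γ) * t := by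
        have := rpow_one_add_le_one_add_mul_self (s := -t) (p := 1 - γ)
          (by linarith [ht.1]) (by linarith) (by linarith)
        simpa [sub_eq_add_neg, mul_comm] using this
      have hpos : (0:ℝ) < (1 - t) ^ (1 - γ) := Real.rpow_pos_of_pos ht1 _
      have hd : (0:ℝ) < 1 + (1 - γ) * t := by nlinarith [ht.1, ht.2]
      have hkey : 1 + (1 - γ) * t ≤ (1 - t) ^ (γ - 1) := by
        have hrw : (1 - t) ^ (γ - 1) = ((1 - t) ^ (1 - γ))⁻¹ := by
          rw [← Real.rpow_neg ht1.le]; ring_nf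
        rw [hrw, le_inv_comm₀ hd hpos]
        calc (1 - t) ^ (1 - γ) ≤ 1 - (1 - γ) * t := hb
          _ ≤ ((1:ℝ) + (1 - γ) * t)⁻¹ := by
              rw [← sub_nonneg]
              have : ((1:ℝ) + (1 - γ) * t)⁻¹ - (1 - (1 - γ) * t)
                  = ((1 - γ) * t) ^ 2 / (1 + (1 - γ) * t) := by
                field_simp; ring
              rw [this]; positivity
      nlinarith [mul_le_mul_of_nonneg_left hkey hγ0.le]
  intro t ht
  have h0 : F 0 = 0 := by simp [hF]
  have := hmono (Set.left_mem_Icc.mpr zero_le_one) ht ht.1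
  rw [h0] at this
  simp only [hF] at this
  linarith

/-- Positive side: for `γ ∈ (0,1]` and `Δ ≥ 0`,
`(1+Δ)^{1+γ} ≤ 1 + (1+γ)Δ + γ(1+γ)/2 Δ²`. -/
lemma aux_pos_side (γ : ℝ) (hγ0 : 0 < γ) (hγ1 : γ ≤ 1) :
    ∀ Δ ∈ Set.Ici (0:ℝ), (1 + Δ) ^ (1 + γ) ≤ 1 + (1 + γ) * Δ + γ * (1 + γ) / 2 * Δ ^ 2 := by
  set G : ℝ → ℝ := fun x => 1 + (1 + γ) * x + γ * (1 + γ) / 2 * x ^ 2 - (1 + x) ^ (1 + γ) with hG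
  have hderiv : ∀ x : ℝ, HasDerivAt G
      ((1 + γ) + γ * (1 + γ) / 2 * (2 * x) - 1 * (1 + γ) * (1 + x) ^ (1 + γ - 1)) x := by
    intro x
    have h1 : HasDerivAt (fun x : ℝ => 1 + x) 1 x := by
      simpa using (hasDerivAt_id x).const_add 1
    have h2 : HasDerivAt (fun x : ℝ => (1 + x) ^ (1 + γ))
        (1 * (1 + γ) * (1 + x) ^ (1 + γ - 1)) x :=
      h1.rpow_const (p := 1 + γ) (Or.inr (by linarith))
    have h3 : HasDerivAt (fun x : ℝ => 1 + (1 + γ) * x + γ * (1 + γ) / 2 * x ^ 2)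
        ((1 + γ) + γ * (1 + γ) / 2 * (2 * x)) x := by
      have hp := ((hasDerivAt_pow 2 x).const_mul (γ * (1 + γ) / 2))
      have h4 := (((hasDerivAt_id x).const_mul (1 + γ)).const_add 1)
      simpa [Pi.add_def] using h4.add hp
    exact h3.sub h2
  have hmono : MonotoneOn G (Set.Ici 0) := by
    apply monotoneOn_of_deriv_nonneg (convex_Ici 0)
    · exact fun x _ => ((hderiv x).differentiableAt).continuousAt.continuousWithinAt
    · exact fun x _ => (hderiv x).differentiableAt.differentiableWithinAt
    · intro x hx
      rw [interior_Ici] at hx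
      rw [(hderiv x).deriv]
      have hb : (1 + x) ^ γ ≤ 1 + γ * x :=
        rpow_one_add_le_one_add_mul_self (by linarith [(show (0:ℝ) < x from hx).le]) hγ0.le hγ1
      have hrw : 1 + γ - 1 = γ := by ring
      rw [hrw]
      nlinarith [mul_le_mul_of_nonneg_left hb (by linarith : (0:ℝ) ≤ 1 + γ)]
  intro Δ hΔ
  have h0 : G 0 = 0 := by simp [hG]
  have := hmono (by simp) hΔ hΔ
  rw [h0] at this
  simp only [hG] at this
  linarith

/-- For every `γ ∈ (0,1]` and every `Δ ∈ [−1,1]`: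
`(1 + Δ)^{1+γ} ≤ 1 + (1+γ)Δ + (1/2)γ(1+γ)Δ² + 3γΔ²|Δ|`, where the power is the real power
(for `Δ = −1` the left-hand side is `0`). -/
theorem one_add_rpow_bound (γ Δ : ℝ) (hγ0 : 0 < γ) (hγ1 : γ ≤ 1)
    (hΔ1 : -1 ≤ Δ) (hΔ2 : Δ ≤ 1) :
    (1 + Δ) ^ (1 + γ) ≤
      1 + (1 + γ) * Δ + 1 / 2 * γ * (1 + γ) * Δ ^ 2 + 3 * γ * Δ ^ 2 * |Δ| := by
  rcases le_or_gt 0 Δ with hΔ | hΔ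
  · have h := aux_pos_side γ hγ0 hγ1 Δ hΔ
    rw [abs_of_nonneg hΔ]
    nlinarith [mul_nonneg (mul_nonneg hγ0.le (sq_nonneg Δ)) hΔ]
  · -- negative case: Δ ∈ [-1, 0)
    rw [abs_of_neg hΔ]
    have h1Δ : (0:ℝ) ≤ 1 + Δ := by linarith
    have hsplit : (1 + Δ) ^ (1 + γ) = (1 + Δ) * (1 + Δ) ^ γ := by
      rw [Real.rpow_add' h1Δ (by positivity), Real.rpow_one]
    have ht : -Δ ∈ Set.Icc (0:ℝ) 1 := ⟨by linarith, by linarith⟩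
    have hA := aux_neg_side γ hγ0 hγ1 (-Δ) ht
    have hA' : (1 + Δ) ^ γ ≤ 1 - γ * (-Δ) - γ * (1 - γ) / 2 * (-Δ) ^ 2 := by
      have h : (1 : ℝ) - -Δ = 1 + Δ := by ring
      rwa [h] at hA
    have hmul : (1 + Δ) * (1 + Δ) ^ γ
        ≤ (1 + Δ) * (1 - γ * (-Δ) - γ * (1 - γ) / 2 * (-Δ) ^ 2) :=
      mul_le_mul_of_nonneg_left hA' h1Δ
    rw [hsplit]
    nlinarith [mul_nonneg (mul_nonneg hγ0.le (sq_nonneg Δ)) (neg_nonneg.mpr hΔ.le),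
      mul_nonneg (mul_nonneg (mul_nonneg hγ0.le hγ0.le) (sq_nonneg Δ)) (neg_nonneg.mpr hΔ.le)]
end

section
/- Fix d ≥ 1 and 0 < β ≤ 1. The function γ_β(x) := (1 − ‖x‖₂^β)_+ (positive part) belongs to H_d(β,1;ℝ^d), satisfies γ_β(0) = 1, lies in L²(ℝ^d), and minimizes the L²-norm among all γ ∈ H_d(β,1;ℝ^d) ∩ L²(ℝ^d) with γ(0) ≥ 1. -/
open MeasureTheory
open scoped NNReal

/-- The isotropic Hölder class `H_d(β, L; I)` for `β ≤ 1`: functions with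
`|f x − f y| ≤ L‖x − y‖₂^β` for all `x, y ∈ I`. -/
def IsotropicHolder (d : ℕ) (β L : ℝ) (I : Set (EuclideanSpace ℝ (Fin d)))
    (f : EuclideanSpace ℝ (Fin d) → ℝ) : Prop :=
  ∀ x ∈ I, ∀ y ∈ I, |f x - f y| ≤ L * ‖x - y‖ ^ β

/-- Subadditivity consequence: `a^β - b^β ≤ (a-b)^β` for `0 ≤ b ≤ a`, `0 ≤ β ≤ 1`. -/
lemma rpow_sub_rpow_le {β a b : ℝ} (hβ0 : 0 ≤ β) (hβ1 : β ≤ 1) (hb : 0 ≤ b) (hba : b ≤ a) :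
    a ^ β - b ^ β ≤ (a - b) ^ β := by
  have ha : 0 ≤ a := hb.trans hba
  have h := NNReal.rpow_add_le_add_rpow ((a - b).toNNReal) (b.toNNReal) hβ0 hβ1
  have hab : ((a - b).toNNReal + b.toNNReal : ℝ≥0) = a.toNNReal := by
    ext
    simp [Real.toNNReal_of_nonneg (sub_nonneg.2 hba), Real.toNNReal_of_nonneg hb,
      Real.toNNReal_of_nonneg ha]
  rw [hab] at h
  have := (NNReal.coe_le_coe).2 h
  simp only [NNReal.coe_rpow, NNReal.coe_add, Real.coe_toNNReal _ ha,
    Real.coe_toNNReal _ hb, Real.coe_toNNReal _ (sub_nonneg.2 hba)] at this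
  linarith

lemma abs_rpow_sub_rpow_le {β a b : ℝ} (hβ0 : 0 ≤ β) (hβ1 : β ≤ 1) (ha : 0 ≤ a) (hb : 0 ≤ b) :
    |a ^ β - b ^ β| ≤ |a - b| ^ β := by
  rcases le_total b a with h | h
  · rw [abs_of_nonneg (sub_nonneg.2 (Real.rpow_le_rpow hb h hβ0)),
      abs_of_nonneg (sub_nonneg.2 h)]
    exact rpow_sub_rpow_le hβ0 hβ1 hb h
  · rw [abs_of_nonpos (sub_nonpos.2 (Real.rpow_le_rpow ha h hβ0)),
      abs_of_nonpos (sub_nonpos.2 h), neg_sub, neg_sub]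
    exact rpow_sub_rpow_le hβ0 hβ1 ha h

/-- For `0 < β ≤ 1`, the function `γ_β(x) = (1 − ‖x‖₂^β)₊` belongs to `H_d(β,1;ℝ^d)`,
satisfies `γ_β(0) = 1`, lies in `L²(ℝ^d)`, and minimizes the `L²`-norm among all
`γ ∈ H_d(β,1;ℝ^d) ∩ L²` with `γ(0) ≥ 1`. -/
theorem optimal_recovery_solution_beta_le_one (d : ℕ) (hd : 1 ≤ d) (β : ℝ)
    (hβ0 : 0 < β) (hβ1 : β ≤ 1) :
    IsotropicHolder d β 1 Set.univ (fun x : EuclideanSpace ℝ (Fin d) => max (1 - ‖x‖ ^ β) 0) ∧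
    max (1 - ‖(0 : EuclideanSpace ℝ (Fin d))‖ ^ β) 0 = 1 ∧
    MemLp (fun x : EuclideanSpace ℝ (Fin d) => max (1 - ‖x‖ ^ β) 0) 2 volume ∧
    ∀ g : EuclideanSpace ℝ (Fin d) → ℝ,
      IsotropicHolder d β 1 Set.univ g → MemLp g 2 volume → 1 ≤ g 0 →
      eLpNorm (fun x : EuclideanSpace ℝ (Fin d) => max (1 - ‖x‖ ^ β) 0) 2 volume ≤
        eLpNorm g 2 volume := by
  have hzero : (0 : ℝ) ^ β = 0 := Real.zero_rpow hβ0.ne'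
  refine ⟨?_, ?_, ?_, ?_⟩
  · intro x _ y _
    have h1 : |max (1 - ‖x‖ ^ β) 0 - max (1 - ‖y‖ ^ β) 0| ≤ |(1 - ‖x‖ ^ β) - (1 - ‖y‖ ^ β)| :=
      abs_max_sub_max_le_abs _ _ _
    have h2 : |(1 - ‖x‖ ^ β) - (1 - ‖y‖ ^ β)| = |‖y‖ ^ β - ‖x‖ ^ β| := by ring_nf
    have h3 : |‖y‖ ^ β - ‖x‖ ^ β| ≤ |‖y‖ - ‖x‖| ^ β :=
      abs_rpow_sub_rpow_le hβ0.le hβ1 (norm_nonneg _) (norm_nonneg _)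
    have h4 : |‖y‖ - ‖x‖| ^ β ≤ ‖x - y‖ ^ β := by
      apply Real.rpow_le_rpow (abs_nonneg _) _ hβ0.le
      rw [← norm_neg (x - y), neg_sub]
      exact abs_norm_sub_norm_le y x
    rw [one_mul]
    exact h1.trans (h2 ▸ h3.trans h4)
  · simp [hzero]
  · apply Continuous.memLp_of_hasCompactSupport
    · apply Continuous.max _ continuous_const
      apply Continuous.sub continuous_const
      exact (Real.continuous_rpow_const hβ0.le).comp continuous_norm
    · apply HasCompactSupport.intro (isCompact_closedBall 0 1)
      intro x hx
      simp only [Metric.mem_closedBall, dist_zero_right, not_le] at hx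
      have : (1 : ℝ) ≤ ‖x‖ ^ β := Real.one_le_rpow hx.le hβ0.le
      simp only [max_eq_right (by linarith : 1 - ‖x‖ ^ β ≤ 0)]
  · intro g hg _ hg0
    apply eLpNorm_mono
    intro x
    simp only [Real.norm_eq_abs]
    have h1 : 1 - ‖x‖ ^ β ≤ g x := by
      have := hg 0 trivial x trivial
      rw [one_mul, zero_sub, norm_neg] at this
      have := (abs_le.1 this).2
      linarith
    rw [abs_of_nonneg (le_max_right _ _)]
    exact max_le (h1.trans (le_abs_self _)) (abs_nonneg _)
end

section
/- Fix d ≥ 1 and β > 1. There exists a constant C = C(β,d) > 0 such that for every L > 0, every D > 0 and every φ ∈ H_d(β,L;[0,1]^d) with sup_{x∈[0,1]^d} |φ(x)| ≤ D, all partial derivatives D^j φ with multi-index j satisfying 1 ≤ |j| ≤ ⌊β⌋ obey sup_{x∈[0,1]^d} |D^j φ(x)| ≤ C(D + L). -/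
open MeasureTheory

/-- The unit cube `[0,1]^d` in `ℝ^d`. -/
def unitCube (d : ℕ) : Set (EuclideanSpace ℝ (Fin d)) :=
  {x | ∀ i, x i ∈ Set.Icc (0 : ℝ) 1}

/-- Multivariate Taylor polynomial of `f` at `y`, of order `k`, evaluated at `x`
(derivatives taken within `I`). -/
noncomputable def taylorPoly (d : ℕ) (f : EuclideanSpace ℝ (Fin d) → ℝ)
    (I : Set (EuclideanSpace ℝ (Fin d))) (k : ℕ) (y x : EuclideanSpace ℝ (Fin d)) : ℝ :=
  ∑ i ∈ Finset.range (k + 1),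
    (i.factorial : ℝ)⁻¹ * iteratedFDerivWithin ℝ i f I y (fun _ => x - y)

/-- The isotropic Hölder class `H_d(β, L; I)` for `β > 1`: `⌊β⌋`-times continuously
differentiable functions whose Taylor polynomial of order `⌊β⌋ = ⌈β⌉₊ - 1` (the largest
integer strictly smaller than `β`) approximates `f` to order `L‖x − y‖₂^β`. -/
def IsotropicHolderGT1 (d : ℕ) (β L : ℝ) (I : Set (EuclideanSpace ℝ (Fin d)))
    (f : EuclideanSpace ℝ (Fin d) → ℝ) : Prop :=
  ContDiffOn ℝ (⌈β⌉₊ - 1 : ℕ) f I ∧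
    ∀ x ∈ I, ∀ y ∈ I, |f x - taylorPoly d f I (⌈β⌉₊ - 1) y x| ≤ L * ‖x - y‖ ^ β

open Filter Set Function

section Auxiliary

variable {E F : Type*} [NormedAddCommGroup E] [NormedSpace ℝ E]
  [NormedAddCommGroup F] [NormedSpace ℝ F]

theorem my_coeff_bound (m : ℕ) (δ : ℝ) (hδ : 0 < δ) :
    ∃ C > (0 : ℝ), ∀ (a : Fin (m + 1) → ℝ) (M : ℝ), 0 ≤ M →
      (∀ t ∈ Set.Icc (0 : ℝ) δ, |∑ i : Fin (m + 1), a i * t ^ (i : ℕ)| ≤ M) →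
      ∀ i, |a i| ≤ C * M := by
  classical
  let T : (Fin (m + 1) → ℝ) →ₗ[ℝ] C(Set.Icc (0 : ℝ) δ, ℝ) :=
    { toFun := fun a => ⟨fun t => ∑ i : Fin (m + 1), a i * (t : ℝ) ^ (i : ℕ),
        continuous_finset_sum _ fun i _ =>
          continuous_const.mul (continuous_subtype_val.pow _)⟩
      map_add' := by
        intro a b
        ext t
        simp [add_mul, Finset.sum_add_distrib]
      map_smul' := by
        intro c a
        ext t
        simp [Finset.mul_sum, mul_assoc] }
  have hker : LinearMap.ker T = ⊥ := by
    rw [LinearMap.ker_eq_bot']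
    intro a ha
    -- build the polynomial
    set P : Polynomial ℝ := ∑ i : Fin (m + 1), Polynomial.C (a i) * Polynomial.X ^ (i : ℕ) with hP
    have hcoeff : ∀ i : Fin (m + 1), P.coeff (i : ℕ) = a i := by
      intro i
      rw [hP, Polynomial.finset_sum_coeff]
      rw [Finset.sum_eq_single i]
      · simp
      · intro j _ hji
        rw [Polynomial.coeff_C_mul, Polynomial.coeff_X_pow, if_neg, mul_zero]
        exact fun h => hji (Fin.val_injective h.symm)
      · simp
    have hroot : {t : ℝ | P.IsRoot t}.Infinite := by
      apply Set.Infinite.mono (s := Set.Icc (0:ℝ) δ)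
      · intro t ht
        have := congrArg (fun f => (f : C(Set.Icc (0:ℝ) δ, ℝ)) ⟨t, ht⟩) ha
        change (∑ i : Fin (m + 1), a i * t ^ (i : ℕ)) = 0 at this
        simp only [Polynomial.IsRoot, Set.mem_setOf_eq, hP]
        simp only [Polynomial.eval_finset_sum, Polynomial.eval_mul, Polynomial.eval_C,
          Polynomial.eval_pow, Polynomial.eval_X]
        simpa using this
      · exact Set.Icc_infinite hδ
    have hP0 : P = 0 := Polynomial.eq_zero_of_infinite_isRoot P hroot
    funext i
    have := hcoeff i
    rw [hP0] at this
    simpa using this.symm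
  obtain ⟨K, hK0, hK⟩ := T.exists_antilipschitzWith hker
  refine ⟨K, by exact_mod_cast hK0, ?_⟩
  intro a M hM hbound i
  have h1 : ‖a‖ ≤ K * ‖T a‖ := by
    have := hK.le_mul_dist a 0
    simpa [dist_zero_right, map_zero] using this
  have h2 : ‖T a‖ ≤ M := by
    have : Nonempty (Set.Icc (0:ℝ) δ) := ⟨⟨0, by constructor <;> [rfl; exact hδ.le]⟩⟩
    rw [ContinuousMap.norm_le_of_nonempty]
    intro t
    exact hbound t t.2
  calc |a i| ≤ ‖a‖ := by simpa using norm_le_pi_norm a i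
    _ ≤ K * ‖T a‖ := h1
    _ ≤ K * M := by
        exact mul_le_mul_of_nonneg_left h2 (by positivity)

theorem my_inner_claim {k : ℕ} (r : Fin k → Fin k) :
    (∑ S ∈ (Finset.univ : Finset (Fin k)).powerset,
      if (∀ i, r i ∈ S) then ((-1 : ℝ)) ^ (k - S.card) else 0)
      = if Function.Bijective r then 1 else 0 := by
  classical
  set R : Finset (Fin k) := Finset.image r Finset.univ with hR
  have hcond : ∀ S : Finset (Fin k), (∀ i, r i ∈ S) ↔ R ⊆ S := by
    intro S
    rw [hR, Finset.image_subset_iff]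
    simp
  calc (∑ S ∈ (Finset.univ : Finset (Fin k)).powerset,
      if (∀ i, r i ∈ S) then ((-1 : ℝ)) ^ (k - S.card) else 0)
      = ∑ S ∈ ((Finset.univ : Finset (Fin k)).powerset).filter (fun S => R ⊆ S),
          ((-1 : ℝ)) ^ (k - S.card) := by
        rw [Finset.sum_filter]
        exact Finset.sum_congr rfl fun S _ => if_congr (hcond S) rfl rfl
    _ = ∑ T ∈ Rᶜ.powerset, ((-1 : ℝ)) ^ (Rᶜ.card - T.card) := by
        refine Finset.sum_nbij' (fun S => S \ R) (fun T => R ∪ T) ?_ ?_ ?_ ?_ ?_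
        · intro S hS
          simp only [Finset.mem_filter, Finset.mem_powerset] at hS
          rw [Finset.mem_powerset]
          intro x hx
          rw [Finset.mem_compl]
          exact (Finset.mem_sdiff.mp hx).2
        · intro T hT
          simp only [Finset.mem_powerset] at hT
          simp only [Finset.mem_filter, Finset.mem_powerset]
          exact ⟨Finset.subset_univ _, Finset.subset_union_left⟩
        · intro S hS
          simp only [Finset.mem_filter, Finset.mem_powerset] at hS
          exact Finset.union_sdiff_of_subset hS.2
        · intro T hT
          simp only [Finset.mem_powerset] at hT
          apply Finset.union_sdiff_cancel_left
          rw [Finset.disjoint_left]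
          intro x hx hxT
          exact (Finset.mem_compl.mp (hT hxT)) hx
        · intro S hS
          simp only [Finset.mem_filter, Finset.mem_powerset] at hS
          show ((-1 : ℝ)) ^ (k - S.card) = ((-1 : ℝ)) ^ (Rᶜ.card - (S \ R).card)
          congr 1
          have h1 : (S \ R).card = S.card - R.card := Finset.card_sdiff_of_subset hS.2
          have h2 : Rᶜ.card = k - R.card := by
            rw [Finset.card_compl, Fintype.card_fin]
          have h3 : R.card ≤ S.card := Finset.card_le_card hS.2
          have h4 : S.card ≤ k := by
            simpa using Finset.card_le_card (Finset.subset_univ S)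
          omega
    _ = ∑ T ∈ Rᶜ.powerset, ((-1 : ℝ)) ^ T.card := by
        refine Finset.sum_nbij' (fun T => Rᶜ \ T) (fun T => Rᶜ \ T) ?_ ?_ ?_ ?_ ?_
        · intro T hT
          rw [Finset.mem_powerset]
          exact Finset.sdiff_subset
        · intro T hT
          rw [Finset.mem_powerset]
          exact Finset.sdiff_subset
        · intro T hT
          rw [Finset.mem_powerset] at hT
          exact Finset.sdiff_sdiff_eq_self hT
        · intro T hT
          rw [Finset.mem_powerset] at hT
          exact Finset.sdiff_sdiff_eq_self hT
        · intro T hT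
          rw [Finset.mem_powerset] at hT
          show ((-1 : ℝ)) ^ (Rᶜ.card - T.card) = ((-1 : ℝ)) ^ ((Rᶜ \ T).card)
          rw [Finset.card_sdiff_of_subset hT]
    _ = if Function.Bijective r then 1 else 0 := by
        have hz : ((∑ T ∈ Rᶜ.powerset, (-1 : ℤ) ^ T.card : ℤ) : ℝ)
            = ∑ T ∈ Rᶜ.powerset, ((-1 : ℝ)) ^ T.card := by push_cast; ring_nf
        rw [← hz, Finset.sum_powerset_neg_one_pow_card]
        have hiff : Rᶜ = ∅ ↔ Function.Bijective r := by
          rw [Finset.compl_eq_empty_iff]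
          constructor
          · intro h
            have hsurj : Function.Surjective r := by
              intro y
              have : y ∈ R := h ▸ Finset.mem_univ y
              rw [hR, Finset.mem_image] at this
              obtain ⟨x, _, hx⟩ := this
              exact ⟨x, hx⟩
            exact Finite.surjective_iff_bijective.mp hsurj
          · intro h
            apply Finset.eq_univ_of_forall
            intro y
            obtain ⟨x, hx⟩ := h.2 y
            rw [hR, Finset.mem_image]
            exact ⟨x, Finset.mem_univ x, hx⟩
        split_ifs with h1 h2 h2
        · norm_num
        · exact absurd (hiff.mp h1) h2
        · exact absurd (hiff.mpr h2) h1
        · norm_num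

theorem my_polarization {k : ℕ} (g : ContinuousMultilinearMap ℝ (fun _ : Fin k => E) ℝ)
    (hg : ∀ (σ : Equiv.Perm (Fin k)) (v : Fin k → E), g (fun i => v (σ i)) = g v)
    (z : Fin k → E) :
    ∑ S ∈ (Finset.univ : Finset (Fin k)).powerset,
      (-1 : ℝ) ^ (k - S.card) * g (fun _ => ∑ j ∈ S, z j)
      = (k.factorial : ℝ) * g z := by
  classical
  calc ∑ S ∈ (Finset.univ : Finset (Fin k)).powerset,
      (-1 : ℝ) ^ (k - S.card) * g (fun _ => ∑ j ∈ S, z j)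
      = ∑ S ∈ (Finset.univ : Finset (Fin k)).powerset,
          ∑ r ∈ Fintype.piFinset (fun _ : Fin k => S),
            (-1 : ℝ) ^ (k - S.card) * g (fun i => z (r i)) := by
        refine Finset.sum_congr rfl fun S _ => ?_
        rw [ContinuousMultilinearMap.map_sum_finset, Finset.mul_sum]
    _ = ∑ S ∈ (Finset.univ : Finset (Fin k)).powerset,
          ∑ r : Fin k → Fin k,
            if (∀ i, r i ∈ S) then (-1 : ℝ) ^ (k - S.card) * g (fun i => z (r i)) else 0 := by
        refine Finset.sum_congr rfl fun S _ => ?_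
        have : Fintype.piFinset (fun _ : Fin k => S)
            = Finset.univ.filter (fun r : Fin k → Fin k => ∀ i, r i ∈ S) := by
          ext r; simp [Fintype.mem_piFinset]
        rw [this, Finset.sum_filter]
    _ = ∑ r : Fin k → Fin k, ∑ S ∈ (Finset.univ : Finset (Fin k)).powerset,
            if (∀ i, r i ∈ S) then (-1 : ℝ) ^ (k - S.card) * g (fun i => z (r i)) else 0 :=
        Finset.sum_comm
    _ = ∑ r : Fin k → Fin k,
          (∑ S ∈ (Finset.univ : Finset (Fin k)).powerset,
            if (∀ i, r i ∈ S) then ((-1 : ℝ)) ^ (k - S.card) else 0) * g (fun i => z (r i)) := by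
        refine Finset.sum_congr rfl fun r _ => ?_
        rw [Finset.sum_mul]
        refine Finset.sum_congr rfl fun S _ => ?_
        split_ifs <;> simp
    _ = ∑ r : Fin k → Fin k,
          (if Function.Bijective r then (1:ℝ) else 0) * g (fun i => z (r i)) := by
        refine Finset.sum_congr rfl fun r _ => ?_
        rw [my_inner_claim r]
    _ = ∑ r ∈ Finset.univ.filter (fun r : Fin k → Fin k => Function.Bijective r),
          g (fun i => z (r i)) := by
        rw [Finset.sum_filter]
        exact Finset.sum_congr rfl fun r _ => by split_ifs <;> simp
    _ = ∑ σ : Equiv.Perm (Fin k), g (fun i => z (σ i)) := by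
        symm
        refine Finset.sum_bij (fun (σ : Equiv.Perm (Fin k)) _ => (σ : Fin k → Fin k))
          ?_ ?_ ?_ ?_
        · intro σ _
          simp only [Finset.mem_filter, Finset.mem_univ, true_and]
          exact σ.bijective
        · intro σ₁ _ σ₂ _ h
          exact Equiv.coe_fn_injective h
        · intro r hr
          simp only [Finset.mem_filter, Finset.mem_univ, true_and] at hr
          exact ⟨Equiv.ofBijective r hr, Finset.mem_univ _, rfl⟩
        · intro σ _
          rfl
    _ = (k.factorial : ℝ) * g z := by
        have : ∀ σ : Equiv.Perm (Fin k), g (fun i => z (σ i)) = g z := fun σ => hg σ z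
        rw [Finset.sum_congr rfl fun σ _ => this σ, Finset.sum_const, Finset.card_univ,
          Fintype.card_perm, Fintype.card_fin, nsmul_eq_mul]

set_option maxHeartbeats 1000000 in
theorem my_iteratedFDeriv_perm : ∀ (n : ℕ) {f : E → F} {x : E},
    ContDiffAt ℝ n f x → ∀ (σ : Equiv.Perm (Fin n)) (v : Fin n → E),
    iteratedFDeriv ℝ n f x (fun i => v (σ i)) = iteratedFDeriv ℝ n f x v := by
  intro n
  induction n with
  | zero =>
    intro f x _ σ v
    congr 1
    funext i
    exact i.elim0
  | succ n IH =>
    intro f x hf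
    classical
    -- eventual ContDiffAt of f at order n near x
    have hev : ∀ᶠ y in nhds x, ContDiffAt ℝ n f y := by
      obtain ⟨u, hu, hcd⟩ := hf.contDiffOn (m := n)
        (by exact_mod_cast Nat.cast_le.mpr (Nat.le_succ n)) (by simp)
      have hx : x ∈ interior u := by
        rw [mem_interior_iff_mem_nhds]; exact hu
      filter_upwards [isOpen_interior.mem_nhds hx] with y hy
      exact ((hcd.mono interior_subset).contDiffAt (isOpen_interior.mem_nhds hy))
    -- case (A): permutations fixing 0
    have hA : ∀ (σ : Equiv.Perm (Fin (n+1))), σ 0 = 0 → ∀ (v : Fin (n+1) → E),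
        iteratedFDeriv ℝ (n+1) f x (fun i => v (σ i)) = iteratedFDeriv ℝ (n+1) f x v := by
      intro σ hσ v
      set σ' : Equiv.Perm (Fin n) := (Equiv.Perm.decomposeFin σ).2 with hσ'
      have hds : Equiv.Perm.decomposeFin.symm ((Equiv.Perm.decomposeFin σ).1, σ') = σ := by
        rw [hσ', Prod.mk.eta]
        exact Equiv.symm_apply_apply _ σ
      have h1 : (Equiv.Perm.decomposeFin σ).1 = 0 := by
        rw [← hσ]
        conv_rhs => rw [← hds]
        rw [Equiv.Perm.decomposeFin_symm_apply_zero]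
      have hsucc : ∀ i : Fin n, σ i.succ = (σ' i).succ := by
        intro i
        conv_lhs => rw [← hds]
        rw [Equiv.Perm.decomposeFin_symm_apply_succ, h1]
        simp
      -- the domain congruence isometry
      set A := ContinuousMultilinearMap.domDomCongrₗᵢ ℝ E F σ' with hA'
      have heq : (⇑A ∘ iteratedFDeriv ℝ n f) =ᶠ[nhds x] iteratedFDeriv ℝ n f := by
        filter_upwards [hev] with y hy
        show A (iteratedFDeriv ℝ n f y) = iteratedFDeriv ℝ n f y
        ext w
        show (iteratedFDeriv ℝ n f y) (fun i => w (σ' i)) = iteratedFDeriv ℝ n f y w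
        exact IH hy σ' w
      have hder : DifferentiableAt ℝ (iteratedFDeriv ℝ n f) x := by
        have h1 : ContDiffAt ℝ 1 (iteratedFDeriv ℝ n f) x := by
          apply hf.iteratedFDeriv_right
          exact_mod_cast Nat.cast_le.mpr (by omega : 1 + n ≤ n + 1)
        exact h1.differentiableAt one_ne_zero
      have key : fderiv ℝ (⇑A ∘ iteratedFDeriv ℝ n f) x = fderiv ℝ (iteratedFDeriv ℝ n f) x :=
        heq.fderiv_eq
      have key2 : fderiv ℝ (⇑A ∘ iteratedFDeriv ℝ n f) x
          = (A.toContinuousLinearEquiv : _ →L[ℝ] _).comp (fderiv ℝ (iteratedFDeriv ℝ n f) x) :=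
        A.toContinuousLinearEquiv.comp_fderiv
      rw [iteratedFDeriv_succ_apply_left, iteratedFDeriv_succ_apply_left, hσ]
      have htail : Fin.tail (fun i => v (σ i)) = fun i => (Fin.tail v) (σ' i) := by
        funext i
        show v (σ i.succ) = v ((σ' i).succ)
        rw [hsucc i]
      rw [htail]
      have hstep : (fderiv ℝ (iteratedFDeriv ℝ n f) x (v 0)) (fun i => (Fin.tail v) (σ' i))
          = (A ((fderiv ℝ (iteratedFDeriv ℝ n f) x) (v 0))) (Fin.tail v) := rfl
      rw [hstep]
      have h2 : A ((fderiv ℝ (iteratedFDeriv ℝ n f) x) (v 0))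
          = (fderiv ℝ (iteratedFDeriv ℝ n f) x) (v 0) :=
        congrArg (fun (T : E →L[ℝ] ContinuousMultilinearMap ℝ (fun _ : Fin n => E) F)
          => T (v 0)) (key2.symm.trans key)
      rw [h2]
    -- case (B): the transposition (0 1), needs n ≥ 1
    have hB : ∀ (_ : 1 ≤ n) (v : Fin (n+1) → E),
        iteratedFDeriv ℝ (n+1) f x (fun i => v ((Equiv.swap 0 1) i))
          = iteratedFDeriv ℝ (n+1) f x v := by
      intro hn v
      obtain ⟨m, rfl⟩ : ∃ m, n = m + 1 := ⟨n - 1, by omega⟩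
      set g := iteratedFDeriv ℝ m f with hg
      have hcd2 : ContDiffAt ℝ 2 g x := by
        apply hf.iteratedFDeriv_right
        exact_mod_cast Nat.cast_le.mpr (by omega : 2 + m ≤ m + 1 + 1)
      have hsymm : IsSymmSndFDerivAt ℝ g x :=
        hcd2.isSymmSndFDerivAt (by simp)
      -- express the (m+2)-th derivative via the second derivative of g
      have hd := LinearIsometryEquiv.comp_fderiv (𝕜 := ℝ)
        (iso := (continuousMultilinearCurryLeftEquiv ℝ (fun _ : Fin (m+1) => E) F).symm)
        (f := fderiv ℝ g) (x := x)
      have hcl : iteratedFDeriv ℝ (m+1+1) f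
          = ⇑(continuousMultilinearCurryLeftEquiv ℝ (fun _ : Fin (m+1+1) => E) F).symm ∘
            fderiv ℝ (iteratedFDeriv ℝ (m+1) f) := iteratedFDeriv_succ_eq_comp_left
      have hcl' : iteratedFDeriv ℝ (m+1) f
          = ⇑(continuousMultilinearCurryLeftEquiv ℝ (fun _ : Fin (m+1) => E) F).symm ∘
            fderiv ℝ g := iteratedFDeriv_succ_eq_comp_left
      have hexpr : ∀ w : Fin (m+2) → E,
          iteratedFDeriv ℝ (m+2) f x w
            = fderiv ℝ (fderiv ℝ g) x (w 0) (w 1) (fun i => w i.succ.succ) := by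
        intro w
        rw [iteratedFDeriv_succ_apply_left, hcl', hd]
        rfl
      rw [hexpr, hexpr]
      have e0 : (Equiv.swap (0 : Fin (m+2)) 1) 0 = 1 := Equiv.swap_apply_left _ _
      have e1 : (Equiv.swap (0 : Fin (m+2)) 1) 1 = 0 := Equiv.swap_apply_right _ _
      have e2 : (fun i : Fin m => v ((Equiv.swap (0 : Fin (m+2)) 1) i.succ.succ))
          = fun i : Fin m => v i.succ.succ := by
        funext j
        have hne0 : (j.succ.succ : Fin (m+2)) ≠ 0 := Fin.succ_ne_zero _
        have hne1 : (j.succ.succ : Fin (m+2)) ≠ 1 := by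
          intro h
          have h' : (j.succ : Fin (m+1)).succ = (0 : Fin (m+1)).succ := by
            rw [h]; rfl
          exact Fin.succ_ne_zero j (Fin.succ_injective _ h')
        rw [Equiv.swap_apply_of_ne_of_ne hne0 hne1]
      rw [e0, e1, e2]
      exact congrArg (fun T => T (fun i : Fin m => v i.succ.succ)) (hsymm.eq (v 1) (v 0))
    -- multiplication closure
    have hmul : ∀ (σ τ : Equiv.Perm (Fin (n+1))),
        (∀ v : Fin (n+1) → E, iteratedFDeriv ℝ (n+1) f x (fun i => v (σ i))
          = iteratedFDeriv ℝ (n+1) f x v) →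
        (∀ v : Fin (n+1) → E, iteratedFDeriv ℝ (n+1) f x (fun i => v (τ i))
          = iteratedFDeriv ℝ (n+1) f x v) →
        ∀ v : Fin (n+1) → E, iteratedFDeriv ℝ (n+1) f x (fun i => v ((σ * τ) i))
          = iteratedFDeriv ℝ (n+1) f x v := by
      intro σ τ hσ hτ v
      have h : (fun i => v ((σ * τ) i)) = fun i => (fun j => v (σ j)) (τ i) := rfl
      rw [h, hτ (fun j => v (σ j)), hσ v]
    -- swaps with 0
    have hswap0 : ∀ b : Fin (n+1), b ≠ 0 → ∀ v : Fin (n+1) → E,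
        iteratedFDeriv ℝ (n+1) f x (fun i => v ((Equiv.swap 0 b) i))
          = iteratedFDeriv ℝ (n+1) f x v := by
      intro b hb
      have hn : 1 ≤ n := by
        by_contra h
        push_neg at h
        interval_cases n
        haveI : Subsingleton (Fin (0+1)) := Fin.subsingleton_one
        exact hb (Subsingleton.elim _ _)
      have h10 : (1 : Fin (n+1)) ≠ 0 := by
        intro h
        have := congrArg Fin.val h
        rw [Fin.val_one'] at this
        simp [Nat.mod_eq_of_lt (by omega : 1 < n + 1)] at this
      by_cases hb1 : b = 1
      · subst hb1
        exact hB hn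
      · have hkey := Equiv.swap_apply_apply (Equiv.swap (1 : Fin (n+1)) b) 0 1
        have e0 : (Equiv.swap (1 : Fin (n+1)) b) 0 = 0 :=
          Equiv.swap_apply_of_ne_of_ne h10.symm (fun h => hb h.symm)
        have e1 : (Equiv.swap (1 : Fin (n+1)) b) 1 = b := Equiv.swap_apply_left 1 b
        rw [e0, e1, Equiv.swap_inv] at hkey
        rw [hkey]
        have h1b : ∀ v : Fin (n+1) → E,
            iteratedFDeriv ℝ (n+1) f x (fun i => v ((Equiv.swap 1 b) i))
              = iteratedFDeriv ℝ (n+1) f x v :=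
          fun v => hA (Equiv.swap 1 b) (Equiv.swap_apply_of_ne_of_ne h10.symm
            (fun h => hb h.symm)) v
        exact hmul _ _ (hmul _ _ h1b (hB hn)) h1b
    -- all swaps
    have hswap : ∀ (a b : Fin (n+1)), a ≠ b → ∀ v : Fin (n+1) → E,
        iteratedFDeriv ℝ (n+1) f x (fun i => v ((Equiv.swap a b) i))
          = iteratedFDeriv ℝ (n+1) f x v := by
      intro a b hab
      by_cases ha : a = 0
      · subst ha
        exact hswap0 b (fun h => hab h.symm)
      · by_cases hb : b = 0
        · subst hb
          rw [Equiv.swap_comm]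
          exact hswap0 a ha
        · intro v
          exact hA _ (Equiv.swap_apply_of_ne_of_ne (fun h => ha h.symm) (fun h => hb h.symm)) v
    -- conclude by swap induction
    intro σ
    refine Equiv.Perm.swap_induction_on σ ?_ ?_
    · intro v
      congr 1
    · intro p a b hab hp v
      exact hmul _ _ (hswap a b hab) hp v

end Auxiliary

lemma cube_convex (d : ℕ) : Convex ℝ (unitCube d) := by
  intro x hx y hy a b ha hb hab
  intro i
  have hxi := hx i
  have hyi := hy i
  simp only [Set.mem_Icc] at hxi hyi ⊢
  have he : (a • x + b • y) i = a * x i + b * y i := rfl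
  rw [he]
  constructor
  · exact add_nonneg (mul_nonneg ha hxi.1) (mul_nonneg hb hyi.1)
  · have : a * x i + b * y i ≤ a * 1 + b * 1 := by
      have h1 : a * x i ≤ a * 1 := mul_le_mul_of_nonneg_left hxi.2 ha
      have h2 : b * y i ≤ b * 1 := mul_le_mul_of_nonneg_left hyi.2 hb
      linarith
    linarith [this]

lemma coord_le_norm {d : ℕ} (z : EuclideanSpace ℝ (Fin d)) (i : Fin d) : |z i| ≤ ‖z‖ := by
  rw [EuclideanSpace.norm_eq]
  have h1 : |z i| = Real.sqrt (‖z i‖ ^ 2) := by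
    rw [Real.sqrt_sq_eq_abs]
    rw [Real.norm_eq_abs, abs_abs]
  rw [h1]
  apply Real.sqrt_le_sqrt
  exact Finset.single_le_sum (f := fun j => ‖z j‖ ^ 2) (fun j _ => by positivity)
    (Finset.mem_univ i)

lemma half_mem_interior (d : ℕ) :
    (WithLp.toLp 2 (fun _ => (1:ℝ)/2) : EuclideanSpace ℝ (Fin d)) ∈ interior (unitCube d) := by
  set c : EuclideanSpace ℝ (Fin d) := WithLp.toLp 2 (fun _ => (1:ℝ)/2) with hc
  rw [mem_interior]
  refine ⟨Metric.ball c (1/2), ?_, Metric.isOpen_ball,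
    Metric.mem_ball_self (by norm_num)⟩
  intro y hy
  rw [Metric.mem_ball, dist_eq_norm] at hy
  intro i
  have h1 := coord_le_norm (y - c) i
  have h2 : (y - c) i = y i - 1/2 := rfl
  rw [h2] at h1
  have h3 : |y i - 1/2| < 1/2 := lt_of_le_of_lt h1 hy
  rw [abs_lt] at h3
  constructor <;> [linarith [h3.1]; linarith [h3.2]]

lemma cube_subset_closure_interior (d : ℕ) :
    unitCube d ⊆ closure (interior (unitCube d)) := by
  intro x hx
  set c : EuclideanSpace ℝ (Fin d) := WithLp.toLp 2 (fun _ => (1:ℝ)/2) with hc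
  have hci : c ∈ interior (unitCube d) := half_mem_interior d
  have htend : Tendsto (fun t : ℝ => x + t • (c - x)) (nhdsWithin 0 (Set.Ioi 0)) (nhds x) := by
    have h0 : Continuous (fun t : ℝ => x + t • (c - x)) := by
      exact continuous_const.add (continuous_id.smul continuous_const)
    have h1 := h0.tendsto 0
    have h2 : x + (0:ℝ) • (c - x) = x := by simp
    rw [h2] at h1
    exact h1.mono_left nhdsWithin_le_nhds
  apply mem_closure_of_tendsto htend
  filter_upwards [Ioo_mem_nhdsGT_of_mem (by constructor <;> norm_num :
    (0:ℝ) ∈ Set.Ico 0 1)] with t ht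
  exact (cube_convex d).add_smul_sub_mem_interior hx hci ⟨ht.1, ht.2.le⟩

set_option maxHeartbeats 1000000 in
/-- For `β > 1` there is `C = C(β,d) > 0` such that for every `L > 0`, `D > 0` and
`φ ∈ H_d(β,L;[0,1]^d)` with `sup |φ| ≤ D`, all partial derivatives of order between `1`
and `⌊β⌋` (expressed by applying the iterated derivative within the cube to coordinate
unit vectors) are bounded in sup-norm by `C(D + L)`. -/
theorem holder_derivative_bound (d : ℕ) (hd : 1 ≤ d) (β : ℝ) (hβ : 1 < β) :
    ∃ C > (0 : ℝ), ∀ L > (0 : ℝ), ∀ D > (0 : ℝ),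
      ∀ φ : EuclideanSpace ℝ (Fin d) → ℝ,
        IsotropicHolderGT1 d β L (unitCube d) φ →
        (∀ x ∈ unitCube d, |φ x| ≤ D) →
        ∀ k : ℕ, 1 ≤ k → k ≤ ⌈β⌉₊ - 1 →
        ∀ v : Fin k → Fin d, ∀ x ∈ unitCube d,
          |iteratedFDerivWithin ℝ k φ (unitCube d) x
              (fun i => EuclideanSpace.single (v i) (1 : ℝ))| ≤ C * (D + L) := by
  classical
  set m : ℕ := ⌈β⌉₊ - 1 with hm
  have hm1 : 1 ≤ m := by
    have h2 : 1 < ⌈β⌉₊ := by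
      rw [Nat.lt_ceil]
      exact_mod_cast hβ
    omega
  have hmR : (1:ℝ) ≤ (m:ℝ) := by exact_mod_cast hm1
  set δ : ℝ := 1 / (2 * m) with hδdef
  have hδ : 0 < δ := by
    rw [hδdef]
    apply div_pos one_pos
    linarith
  have hδm : δ * m = 1/2 := by
    rw [hδdef]
    have : (m:ℝ) ≠ 0 := by linarith
    field_simp
  obtain ⟨C₁, hC₁, hcoeff⟩ := my_coeff_bound m δ hδ
  refine ⟨2 ^ m * C₁, by positivity, ?_⟩
  intro L hL D hD φ hφ hsup k hk1 hk2 v x hx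
  have hDL : (0:ℝ) < D + L := by linarith
  have hUD : UniqueDiffOn ℝ (unitCube d) :=
    uniqueDiffOn_convex (cube_convex d) ⟨_, half_mem_interior d⟩
  -- the interior bound
  have key : ∀ y ∈ interior (unitCube d),
      |iteratedFDerivWithin ℝ k φ (unitCube d) y
        (fun i => EuclideanSpace.single (v i) (1:ℝ))| ≤ 2 ^ m * C₁ * (D + L) := by
    intro y hy
    have hyc : y ∈ unitCube d := interior_subset hy
    set s : Fin d → ℝ := fun i => if y i ≤ 1/2 then 1 else -1 with hs
    have hs1 : ∀ i, |s i| = 1 := by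
      intro i
      simp only [hs]
      split_ifs <;> norm_num
    set z : Fin k → EuclideanSpace ℝ (Fin d) :=
      fun j => EuclideanSpace.single (v j) (s (v j)) with hz
    set g := iteratedFDerivWithin ℝ k φ (unitCube d) y with hgdef
    have hgfull : g = iteratedFDeriv ℝ k φ y := by
      rw [hgdef]
      have e1 : iteratedFDerivWithin ℝ k φ (unitCube d ∩ interior (unitCube d)) y
          = iteratedFDerivWithin ℝ k φ (unitCube d) y :=
        iteratedFDerivWithin_inter (isOpen_interior.mem_nhds hy)
      rw [← e1, Set.inter_eq_self_of_subset_right interior_subset]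
      exact iteratedFDerivWithin_of_isOpen k isOpen_interior hy
    have hφCAt : ContDiffAt ℝ k φ y := by
      have h1 : ContDiffAt ℝ (m:ℕ) φ y := by
        have h0 := (hφ.1.mono interior_subset).contDiffAt (isOpen_interior.mem_nhds hy)
        rw [← hm] at h0
        exact h0
      exact h1.of_le (by exact_mod_cast hk2)
    have hsym : ∀ (σ : Equiv.Perm (Fin k)) (w : Fin k → EuclideanSpace ℝ (Fin d)),
        g (fun i => w (σ i)) = g w := by
      intro σ w
      rw [hgfull]
      exact my_iteratedFDeriv_perm k hφCAt σ w
    -- coordinates of partial sums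
    have hcoord : ∀ (S : Finset (Fin k)) (i₀ : Fin d),
        (∑ j ∈ S, z j) i₀ = s i₀ * ∑ j ∈ S, (if i₀ = v j then (1:ℝ) else 0) := by
      intro S i₀
      induction S using Finset.induction_on with
      | empty =>
        simp only [Finset.sum_empty, mul_zero]
        rfl
      | insert j S' hj ih =>
        rw [Finset.sum_insert hj]
        have hadd : (z j + ∑ j' ∈ S', z j') i₀ = z j i₀ + (∑ j' ∈ S', z j') i₀ := rfl
        rw [hadd, ih, Finset.sum_insert hj, mul_add]
        congr 1
        simp only [hz]
        rw [EuclideanSpace.single_apply]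
        by_cases h : i₀ = v j
        · rw [if_pos h, if_pos h, mul_one, h]
        · rw [if_neg h, if_neg h, mul_zero]
    -- membership of the perturbed points
    have hmem : ∀ (S : Finset (Fin k)), ∀ t ∈ Set.Icc (0:ℝ) δ,
        y + t • (∑ j ∈ S, z j) ∈ unitCube d := by
      intro S t ht i₀
      show y i₀ + t * ((∑ j ∈ S, z j) i₀) ∈ Set.Icc (0:ℝ) 1
      rw [hcoord S i₀]
      set c : ℝ := ∑ j ∈ S, (if i₀ = v j then (1:ℝ) else 0) with hc
      have hc0 : 0 ≤ c := Finset.sum_nonneg fun j _ => by split_ifs <;> norm_num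
      have hck : c ≤ m := by
        have h1 : c ≤ ∑ _j ∈ S, (1:ℝ) := Finset.sum_le_sum fun j _ => by
          split_ifs <;> norm_num
        rw [Finset.sum_const, nsmul_eq_mul, mul_one] at h1
        have h2 : (S.card : ℝ) ≤ (k : ℝ) := by
          have hle : S.card ≤ k := by simpa using Finset.card_le_univ S
          exact_mod_cast hle
        have h3 : (k:ℝ) ≤ (m:ℝ) := by exact_mod_cast hk2
        linarith
      have htc0 : 0 ≤ t * c := mul_nonneg ht.1 hc0
      have htc : t * c ≤ 1/2 := by
        have h4 : t * c ≤ δ * m := mul_le_mul ht.2 hck hc0 hδ.le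
        linarith [hδm]
      have hy0 := (hyc i₀).1
      have hy1 := (hyc i₀).2
      by_cases hcase : y i₀ ≤ 1/2
      · have hsi : s i₀ = 1 := by simp only [hs]; exact if_pos hcase
        rw [hsi, one_mul]
        constructor
        · linarith
        · linarith
      · have hsi : s i₀ = -1 := by simp only [hs]; exact if_neg hcase
        push_neg at hcase
        rw [hsi]
        have he : t * (-1 * c) = -(t * c) := by ring
        rw [he]
        constructor
        · linarith
        · linarith
    -- the coefficients
    set a : Finset (Fin k) → Fin (m+1) → ℝ :=
      fun S i => (((i:ℕ)).factorial : ℝ)⁻¹ *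
        iteratedFDerivWithin ℝ (i:ℕ) φ (unitCube d) y (fun _ => ∑ j ∈ S, z j) with ha
    -- Taylor polynomial identity
    have hpoly : ∀ (S : Finset (Fin k)), ∀ t : ℝ,
        taylorPoly d φ (unitCube d) m y (y + t • (∑ j ∈ S, z j))
          = ∑ i : Fin (m+1), a S i * t ^ (i:ℕ) := by
      intro S t
      simp only [taylorPoly]
      have hsub : (y + t • (∑ j ∈ S, z j)) - y = t • (∑ j ∈ S, z j) :=
        add_sub_cancel_left y _
      rw [hsub]
      rw [← Fin.sum_univ_eq_sum_range (fun i => ((i).factorial:ℝ)⁻¹ *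
        iteratedFDerivWithin ℝ i φ (unitCube d) y (fun _ => t • (∑ j ∈ S, z j))) (m+1)]
      refine Finset.sum_congr rfl fun i _ => ?_
      have h1 : (fun _ : Fin (i:ℕ) => t • (∑ j ∈ S, z j))
          = fun j : Fin (i:ℕ) => (fun _ : Fin (i:ℕ) => t) j • ((fun _ => ∑ j ∈ S, z j) j) := rfl
      rw [h1, ContinuousMultilinearMap.map_smul_univ]
      rw [Finset.prod_const, Finset.card_univ, Fintype.card_fin, smul_eq_mul]
      simp only [ha]
      ring
    -- bound on the Taylor polynomial
    have hbnd : ∀ (S : Finset (Fin k)), ∀ t ∈ Set.Icc (0:ℝ) δ,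
        |∑ i : Fin (m+1), a S i * t ^ (i:ℕ)| ≤ D + L := by
      intro S t ht
      rw [← hpoly S t]
      set x' := y + t • (∑ j ∈ S, z j) with hx'
      have hx'c : x' ∈ unitCube d := hmem S t ht
      have hrem : |φ x' - taylorPoly d φ (unitCube d) m y x'| ≤ L * ‖x' - y‖ ^ β := by
        rw [hm]
        exact hφ.2 x' hx'c y hyc
      have hnorm : ‖x' - y‖ ≤ 1 := by
        have h1 : x' - y = t • (∑ j ∈ S, z j) := by
          rw [hx']
          exact add_sub_cancel_left y _
        rw [h1, norm_smul, Real.norm_eq_abs, abs_of_nonneg ht.1]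
        have h2 : ‖∑ j ∈ S, z j‖ ≤ ∑ j ∈ S, ‖z j‖ := norm_sum_le S z
        have h3 : ∑ j ∈ S, ‖z j‖ = S.card := by
          rw [Finset.sum_congr rfl (fun j _ => ?_), Finset.sum_const, nsmul_eq_mul, mul_one]
          simp only [hz]
          rw [EuclideanSpace.norm_single, Real.norm_eq_abs]
          exact hs1 (v j)
        have h4 : (S.card : ℝ) ≤ (m : ℝ) := by
          have h5 : S.card ≤ k := by simpa using Finset.card_le_univ S
          have h6 : (S.card : ℝ) ≤ (k:ℝ) := by exact_mod_cast h5
          have h7 : (k:ℝ) ≤ (m:ℝ) := by exact_mod_cast hk2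
          linarith
        have h8 : t * ‖∑ j ∈ S, z j‖ ≤ δ * m := by
          apply mul_le_mul ht.2 _ (norm_nonneg _) hδ.le
          linarith
        linarith [hδm]
      have hr1 : ‖x' - y‖ ^ β ≤ 1 :=
        Real.rpow_le_one (norm_nonneg _) hnorm (by linarith)
      have h2 : |φ x'| ≤ D := hsup x' hx'c
      have he : taylorPoly d φ (unitCube d) m y x'
          = φ x' - (φ x' - taylorPoly d φ (unitCube d) m y x') := by ring
      rw [he]
      refine (abs_sub _ _).trans ?_
      have h9 : L * ‖x' - y‖ ^ β ≤ L * 1 := mul_le_mul_of_nonneg_left hr1 hL.le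
      linarith
    -- bound on the diagonal values
    have hfac : (0:ℝ) < (k.factorial : ℝ) := by exact_mod_cast Nat.factorial_pos k
    have hkm : k < m + 1 := by omega
    have hak : ∀ S : Finset (Fin k),
        |g (fun _ => ∑ j ∈ S, z j)| ≤ (k.factorial : ℝ) * (C₁ * (D + L)) := by
      intro S
      have h1 := hcoeff (a S) (D + L) hDL.le (hbnd S) ⟨k, hkm⟩
      have h2 : g (fun _ => ∑ j ∈ S, z j) = (k.factorial : ℝ) * a S ⟨k, hkm⟩ := by
        simp only [ha, hgdef]
        rw [← mul_assoc, mul_inv_cancel₀ (ne_of_gt hfac), one_mul]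
      rw [h2, abs_mul, abs_of_pos hfac]
      exact mul_le_mul_of_nonneg_left h1 hfac.le
    -- polarization
    have hpol := my_polarization g hsym z
    have hgz : |g z| ≤ 2 ^ k * (C₁ * (D + L)) := by
      have h1 : |(k.factorial:ℝ) * g z|
          ≤ 2 ^ k * ((k.factorial:ℝ) * (C₁ * (D + L))) := by
        rw [← hpol]
        refine (Finset.abs_sum_le_sum_abs _ _).trans ?_
        have h2 : ∀ S ∈ (Finset.univ : Finset (Fin k)).powerset,
            |(-1 : ℝ) ^ (k - S.card) * g (fun _ => ∑ j ∈ S, z j)|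
              ≤ (k.factorial : ℝ) * (C₁ * (D + L)) := by
          intro S _
          rw [abs_mul, abs_pow, abs_neg, abs_one, one_pow, one_mul]
          exact hak S
        refine (Finset.sum_le_sum h2).trans ?_
        rw [Finset.sum_const, Finset.card_powerset, Finset.card_univ, Fintype.card_fin,
          nsmul_eq_mul]
        push_cast
        apply le_of_eq
        ring
      rw [abs_mul, abs_of_pos hfac] at h1
      have h3 : (k.factorial:ℝ) * |g z| ≤ (k.factorial:ℝ) * (2 ^ k * (C₁ * (D + L))) := by
        calc (k.factorial:ℝ) * |g z| ≤ 2 ^ k * ((k.factorial:ℝ) * (C₁ * (D + L))) := h1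
          _ = (k.factorial:ℝ) * (2 ^ k * (C₁ * (D + L))) := by ring
      exact le_of_mul_le_mul_left h3 hfac
    -- signs
    have hzE : z = fun j => (s (v j)) • EuclideanSpace.single (v j) (1:ℝ) := by
      funext j
      ext i₀
      show EuclideanSpace.single (v j) (s (v j)) i₀
        = s (v j) * EuclideanSpace.single (v j) (1:ℝ) i₀
      rw [EuclideanSpace.single_apply, EuclideanSpace.single_apply]
      split_ifs <;> ring
    have h3 : g z = (∏ j, s (v j)) * g (fun i => EuclideanSpace.single (v i) (1:ℝ)) := by
      conv_lhs => rw [hzE]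
      rw [ContinuousMultilinearMap.map_smul_univ, smul_eq_mul]
    have h4 : |∏ j, s (v j)| = 1 := by
      rw [Finset.abs_prod]
      rw [Finset.prod_congr rfl (fun j _ => hs1 (v j)), Finset.prod_const_one]
    have h5 : |g (fun i => EuclideanSpace.single (v i) (1:ℝ))| = |g z| := by
      rw [h3, abs_mul, h4, one_mul]
    rw [h5]
    have h6 : (2:ℝ) ^ k ≤ 2 ^ m := by
      apply pow_le_pow_right₀ (by norm_num) hk2
    calc |g z| ≤ 2 ^ k * (C₁ * (D + L)) := hgz
      _ ≤ 2 ^ m * (C₁ * (D + L)) := by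
          apply mul_le_mul_of_nonneg_right h6 (by positivity)
      _ = 2 ^ m * C₁ * (D + L) := by ring
  -- extension to the closed cube by continuity
  have hcont : ContinuousOn (iteratedFDerivWithin ℝ k φ (unitCube d)) (unitCube d) := by
    apply hφ.1.continuousOn_iteratedFDerivWithin _ hUD
    exact_mod_cast hk2
  have hFcont : ContinuousOn (fun y => |iteratedFDerivWithin ℝ k φ (unitCube d) y
      (fun i => EuclideanSpace.single (v i) (1:ℝ))|) (unitCube d) := by
    apply ContinuousOn.abs
    exact (ContinuousMultilinearMap.apply ℝ (fun _ : Fin k => EuclideanSpace ℝ (Fin d)) ℝ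
      (fun i => EuclideanSpace.single (v i) (1:ℝ))).continuous.comp_continuousOn hcont
  have hxcl : x ∈ closure (interior (unitCube d)) := cube_subset_closure_interior d hx
  haveI hne : (nhdsWithin x (interior (unitCube d))).NeBot :=
    mem_closure_iff_nhdsWithin_neBot.mp hxcl
  have htd : Filter.Tendsto (fun y => |iteratedFDerivWithin ℝ k φ (unitCube d) y
      (fun i => EuclideanSpace.single (v i) (1:ℝ))|)
      (nhdsWithin x (interior (unitCube d)))
      (nhds (|iteratedFDerivWithin ℝ k φ (unitCube d) x
      (fun i => EuclideanSpace.single (v i) (1:ℝ))|)) :=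
    (hFcont x hx).mono interior_subset
  exact le_of_tendsto htd (eventually_nhdsWithin_of_forall key)
end

section
/- Fix d ≥ 1 and define on pairs (t,r) with t ∈ ℝ^d, r > 0 the pseudo-metric d̃((t,r),(t',r')) := λ(B_t(r) Δ B_{t'}(r'))^{1/2}. There exists a constant K = K(d) > 0 such that for every ε ∈ (0,1], the covering number of the set { (t,r) : B_t(r) ⊆ B_0(1), r > 0 } at radius ε^{1/2} with respect to d̃ is at most K ε^{−(d+1)}; that is, there exist at most K ε^{−(d+1)} pairs (t_i,r_i) in that set such that every (t,r) with B_t(r) ⊆ B_0(1) satisfies d̃((t,r),(t_i,r_i)) ≤ ε^{1/2} for some i. -/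
open MeasureTheory

/-- The pseudo-metric `d̃((t,r),(t',r')) = λ(B_t(r) Δ B_{t'}(r'))^{1/2}` on pairs of
centers and radii. -/
noncomputable def dTilde (d : ℕ) (p q : EuclideanSpace ℝ (Fin d) × ℝ) : ℝ :=
  Real.sqrt
    (volume (symmDiff (Metric.closedBall p.1 p.2) (Metric.closedBall q.1 q.2))).toReal

open Metric


lemma pow_sub_pow_le5 (n : ℕ) {a b : ℝ} (ha : 0 ≤ a) (hab : a ≤ b) (hb : b ≤ 5) :
    b ^ n - a ^ n ≤ (n : ℝ) * 5 ^ n * (b - a) := by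
  induction n with
  | zero => simp
  | succ n ih =>
    have han : a ^ n ≤ 5 ^ n := pow_le_pow_left₀ ha (hab.trans hb) n
    have h0 : (0:ℝ) ≤ 5 ^ n := by positivity
    have hba : 0 ≤ b - a := sub_nonneg.2 hab
    have hb0 : 0 ≤ b := ha.trans hab
    have hX : 0 ≤ b ^ n - a ^ n := sub_nonneg.2 (pow_le_pow_left₀ ha hab n)
    have h1 : b * (b ^ n - a ^ n) ≤ 5 * ((n : ℝ) * 5 ^ n * (b - a)) := by
      calc b * (b ^ n - a ^ n) ≤ 5 * (b ^ n - a ^ n) := by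
            exact mul_le_mul_of_nonneg_right hb hX
        _ ≤ 5 * ((n : ℝ) * 5 ^ n * (b - a)) := by linarith [ih]
    have h2 : (b - a) * a ^ n ≤ (b - a) * 5 ^ n := mul_le_mul_of_nonneg_left han hba
    have key : b ^ (n+1) - a ^ (n+1) = b * (b ^ n - a ^ n) + (b - a) * a ^ n := by ring
    push_cast
    rw [key, pow_succ]
    have h3 : 0 ≤ 5 ^ n * (b - a) := mul_nonneg h0 hba
    linarith [h1, h2, h3]

lemma norm_add_le_one_of_subset {E : Type*} [NormedAddCommGroup E] [NormedSpace ℝ E]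
    {t : E} {r : ℝ} (hr : 0 < r) (hne : ∃ u : E, ‖u‖ = 1)
    (h : closedBall t r ⊆ closedBall (0 : E) 1) :
    ‖t‖ + r ≤ 1 := by
  rcases eq_or_ne t 0 with rfl | ht
  · obtain ⟨u, hu⟩ := hne
    have hx : (r • u) ∈ closedBall (0:E) r := by
      simp [Metric.mem_closedBall, dist_zero_right, norm_smul, hu, abs_of_pos hr]
    have := h hx
    simp only [Metric.mem_closedBall, dist_zero_right, norm_smul, hu, Real.norm_eq_abs,
      abs_of_pos hr, mul_one] at this
    simpa using this
  · have htn : 0 < ‖t‖ := norm_pos_iff.2 ht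
    set x := (1 + r / ‖t‖) • t with hxdef
    have hxt : x - t = (r / ‖t‖) • t := by
      rw [hxdef]; module
    have hx : x ∈ closedBall t r := by
      simp only [Metric.mem_closedBall, dist_eq_norm, hxt, norm_smul, Real.norm_eq_abs,
        abs_of_nonneg (div_nonneg hr.le htn.le)]
      rw [div_mul_cancel₀ _ htn.ne']
    have hx1 := h hx
    simp only [Metric.mem_closedBall, dist_zero_right, hxdef, norm_smul, Real.norm_eq_abs] at hx1
    have hpos : 0 < 1 + r / ‖t‖ := by positivity
    rw [abs_of_pos hpos] at hx1
    have heq : (1 + r / ‖t‖) * ‖t‖ = ‖t‖ + r := by field_simp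
    linarith [heq ▸ hx1]

lemma coord_abs_le_norm {d : ℕ} (w : EuclideanSpace ℝ (Fin d)) (i : Fin d) : |w i| ≤ ‖w‖ := by
  rw [EuclideanSpace.norm_eq]
  have h1 : |w i| = Real.sqrt (|w i| ^ 2) := (Real.sqrt_sq (abs_nonneg _)).symm
  rw [h1]
  apply Real.sqrt_le_sqrt
  have := Finset.single_le_sum (f := fun j => ‖w j‖ ^ 2) (fun j _ => by positivity)
    (Finset.mem_univ i)
  simpa [Real.norm_eq_abs] using this

lemma grid_approx (d : ℕ) (hd : 1 ≤ d) {h : ℝ} (hh : 0 < h) (w : EuclideanSpace ℝ (Fin d))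
    (hw : ‖w‖ ≤ 1) :
    ∃ z : Fin d → ℤ, (∀ i, |z i| ≤ ((⌈1/h⌉₊ : ℤ) + 1)) ∧
      dist w ((WithLp.equiv 2 (Fin d → ℝ)).symm (fun i => h * z i)) ≤ (d : ℝ) * h / 2 := by
  refine ⟨fun i => round (w i / h), fun i => ?_, ?_⟩
  · have h1 : |w i / h - round (w i / h)| ≤ 1/2 := abs_sub_round _
    have h2 : |w i / h| ≤ 1 / h := by
      rw [abs_div, abs_of_pos hh]
      gcongr
      exact (coord_abs_le_norm w i).trans hw
    have h3 : (|round (w i / h)| : ℝ) ≤ 1 / h + 1 / 2 := by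
      have h5 : |(round (w i / h) : ℝ) - w i / h| ≤ 1/2 := by
        rwa [abs_sub_comm]
      have h4 : |(round (w i / h) : ℝ)| ≤ |w i / h| + 1/2 := by
        have := abs_sub_abs_le_abs_sub (round (w i / h) : ℝ) (w i / h)
        linarith
      linarith
    have h6 : (1:ℝ) / h ≤ (⌈1/h⌉₊ : ℝ) := Nat.le_ceil _
    have h7 : (|round (w i / h)| : ℝ) ≤ ((⌈1/h⌉₊ : ℝ) + 1) := by linarith
    exact_mod_cast h7
  · set v := (WithLp.equiv 2 (Fin d → ℝ)).symm (fun i => h * (round (w i / h) : ℝ)) with hv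
    have hcoord : ∀ i, dist (w i) (v i) ≤ h / 2 := by
      intro i
      have hvi : v i = h * (round (w i / h) : ℝ) := rfl
      rw [Real.dist_eq, hvi]
      have heq : w i - h * (round (w i / h) : ℝ) = h * (w i / h - round (w i / h)) := by
        field_simp
      rw [heq, abs_mul, abs_of_pos hh]
      calc h * |w i / h - round (w i / h)| ≤ h * (1/2) :=
            mul_le_mul_of_nonneg_left (abs_sub_round _) hh.le
        _ = h / 2 := by ring
    rw [EuclideanSpace.dist_eq]
    have hsum : (∑ i, dist (w i) (v i) ^ 2) ≤ (d : ℝ) * (h/2)^2 := by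
      calc (∑ i, dist (w i) (v i) ^ 2) ≤ ∑ _i : Fin d, (h/2)^2 := by
            apply Finset.sum_le_sum
            intro i _
            exact pow_le_pow_left₀ dist_nonneg (hcoord i) 2
        _ = (d : ℝ) * (h/2)^2 := by simp [mul_comm]
    calc Real.sqrt (∑ i, dist (w i) (v i) ^ 2) ≤ Real.sqrt (((d:ℝ) * h / 2)^2) := by
          apply Real.sqrt_le_sqrt
          have hd1 : (1:ℝ) ≤ (d:ℝ) := by exact_mod_cast hd
          have hd2 : (d:ℝ) ≤ (d:ℝ)^2 := by nlinarith
          nlinarith [sq_nonneg h, hsum, mul_nonneg (Nat.cast_nonneg (α := ℝ) d) (sq_nonneg (h/2))]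
      _ = (d:ℝ) * h / 2 := Real.sqrt_sq (by positivity)

lemma vol_cb {d : ℕ} (t : EuclideanSpace ℝ (Fin d)) {r : ℝ} (hr : 0 ≤ r) :
    volume (closedBall t r) =
      ENNReal.ofReal (r ^ d * (volume (closedBall (0 : EuclideanSpace ℝ (Fin d)) 1)).toReal) := by
  rw [Measure.addHaar_closedBall' volume t hr, finrank_euclideanSpace_fin,
    ENNReal.ofReal_mul (by positivity),
    ENNReal.ofReal_toReal (measure_closedBall_lt_top).ne]

lemma vol_symmDiff_le {d : ℕ} (t v : EuclideanSpace ℝ (Fin d)) {r r' a b : ℝ}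
    (ha : 0 ≤ a) (hab : a ≤ b)
    (h1 : closedBall t r ⊆ closedBall t b) (h2 : closedBall v r' ⊆ closedBall t b)
    (h3 : closedBall t a ⊆ closedBall t r) (h4 : closedBall t a ⊆ closedBall v r') :
    volume (symmDiff (closedBall t r) (closedBall v r')) ≤
      ENNReal.ofReal ((b ^ d - a ^ d) *
        (volume (closedBall (0 : EuclideanSpace ℝ (Fin d)) 1)).toReal) := by
  have hsub : symmDiff (closedBall t r) (closedBall v r') ⊆
      closedBall t b \ closedBall t a := by
    intro x hx
    rcases Set.mem_symmDiff.1 hx with ⟨hx1, hx2⟩ | ⟨hx1, hx2⟩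
    · exact ⟨h1 hx1, fun hs => hx2 (h4 hs)⟩
    · exact ⟨h2 hx1, fun hs => hx2 (h3 hs)⟩
  calc volume (symmDiff (closedBall t r) (closedBall v r'))
      ≤ volume (closedBall t b \ closedBall t a) := measure_mono hsub
    _ = volume (closedBall t b) - volume (closedBall t a) := by
        apply measure_diff (closedBall_subset_closedBall hab)
          measurableSet_closedBall.nullMeasurableSet measure_closedBall_lt_top.ne
    _ ≤ ENNReal.ofReal ((b ^ d - a ^ d) *
        (volume (closedBall (0 : EuclideanSpace ℝ (Fin d)) 1)).toReal) := by
        rw [vol_cb t (ha.trans hab), vol_cb t ha,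
          ← ENNReal.ofReal_sub _ (by positivity)]
        apply ENNReal.ofReal_le_ofReal
        ring_nf
        exact le_refl _

set_option maxHeartbeats 2000000

/-- There is `K = K(d) > 0` such that for every `ε ∈ (0,1]` the set
`{(t,r) : B_t(r) ⊆ B_0(1), r > 0}` admits an `ε^{1/2}`-net with respect to `d̃` of
cardinality at most `K ε^{−(d+1)}`, consisting of pairs from that set. -/
theorem covering_number_balls (d : ℕ) (hd : 1 ≤ d) :
    ∃ K > (0 : ℝ), ∀ ε : ℝ, 0 < ε → ε ≤ 1 →
      ∃ N : Finset (EuclideanSpace ℝ (Fin d) × ℝ),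
        (∀ p ∈ N, 0 < p.2 ∧
          Metric.closedBall p.1 p.2 ⊆ Metric.closedBall (0 : EuclideanSpace ℝ (Fin d)) 1) ∧
        (N.card : ℝ) ≤ K * ε ^ (-((d : ℝ) + 1)) ∧
        ∀ t : EuclideanSpace ℝ (Fin d), ∀ r : ℝ, 0 < r →
          Metric.closedBall t r ⊆ Metric.closedBall (0 : EuclideanSpace ℝ (Fin d)) 1 →
          ∃ p ∈ N, dTilde d (t, r) p ≤ Real.sqrt ε := by
  classical
  obtain ⟨ν, hνdef⟩ : ∃ ν : ℝ,
      ν = (volume (closedBall (0 : EuclideanSpace ℝ (Fin d)) 1)).toReal := ⟨_, rfl⟩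
  have hν : 0 < ν := by
    rw [hνdef]
    exact ENNReal.toReal_pos (measure_closedBall_pos volume 0 one_pos).ne'
      measure_closedBall_lt_top.ne
  obtain ⟨C, hCdef⟩ : ∃ C : ℝ, C = 4 * ((d:ℝ)+1) * 8^d * ν + 2 := ⟨_, rfl⟩
  have hCaux : 0 ≤ 4 * ((d:ℝ)+1) * 8^d * ν := by positivity
  have hC2 : 2 ≤ C := by rw [hCdef]; linarith
  have hC : 0 < C := by linarith
  have hd1 : (1:ℝ) ≤ (d:ℝ) := by exact_mod_cast hd
  have hdpos : (0:ℝ) < (d:ℝ) := by linarith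
  refine ⟨(2*(d:ℝ)*C + 5)^d * (C+1), by positivity, ?_⟩
  intro ε hε hε1
  obtain ⟨δ, hδdef⟩ : ∃ δ : ℝ, δ = ε / C := ⟨_, rfl⟩
  have hδ : 0 < δ := by rw [hδdef]; exact div_pos hε hC
  have hCδ : C * δ = ε := by rw [hδdef]; field_simp
  have hδhalf : δ ≤ 1/2 := by
    rw [hδdef, div_le_iff₀ hC]; nlinarith
  obtain ⟨h, hhdef⟩ : ∃ h : ℝ, h = δ / d := ⟨_, rfl⟩
  have hh : 0 < h := by rw [hhdef]; exact div_pos hδ hdpos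
  have hdh : (d:ℝ) * h = δ := by rw [hhdef]; field_simp
  obtain ⟨M, hMdef⟩ : ∃ M : ℕ, M = ⌈1/h⌉₊ + 1 := ⟨_, rfl⟩
  obtain ⟨M', hM'def⟩ : ∃ M' : ℕ, M' = ⌈1/δ⌉₊ := ⟨_, rfl⟩
  have hM'1 : 1 ≤ M' := by
    rw [hM'def]
    exact Nat.one_le_iff_ne_zero.2 (by
      simp only [ne_eq, Nat.ceil_eq_zero, not_le]
      positivity)
  set S : Finset ((Fin d → ℤ) × ℕ) :=
    (Fintype.piFinset fun _ : Fin d => Finset.Icc (-(M:ℤ)) (M:ℤ)) ×ˢ Finset.Icc 1 M' with hSdef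
  set f : (Fin d → ℤ) × ℕ → EuclideanSpace ℝ (Fin d) × ℝ :=
    fun q => ((WithLp.equiv 2 (Fin d → ℝ)).symm (fun i => h * q.1 i), (q.2 : ℝ) * δ) with hfdef
  set N : Finset (EuclideanSpace ℝ (Fin d) × ℝ) :=
    (S.image f).filter (fun p => 0 < p.2 ∧
      Metric.closedBall p.1 p.2 ⊆ Metric.closedBall (0 : EuclideanSpace ℝ (Fin d)) 1) with hNdef
  refine ⟨N, ?_, ?_, ?_⟩
  · intro p hp
    exact (Finset.mem_filter.1 hp).2
  · -- cardinality bound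
    have hcard : N.card ≤ (2*M+1)^d * M' := by
      calc N.card ≤ (S.image f).card := Finset.card_filter_le _ _
        _ ≤ S.card := Finset.card_image_le
        _ = (2*M+1)^d * M' := by
            rw [hSdef, Finset.card_product, Fintype.card_piFinset]
            congr 1
            · rw [Finset.prod_const]
              congr 1
              · rw [Int.card_Icc]
                omega
              · simp
            · rw [Nat.card_Icc]
              omega
    have hεinv : 1 ≤ 1/ε := by rw [le_div_iff₀ hε]; linarith
    have h1h : 1/h = (d:ℝ)*C/ε := by
      rw [hhdef, hδdef]
      field_simp
    have h2M : ((2*M+1 : ℕ) : ℝ) ≤ (2*(d:ℝ)*C + 5)/ε := by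
      have hM : (M:ℝ) ≤ 1/h + 2 := by
        rw [hMdef]
        push_cast
        have := Nat.ceil_lt_add_one (show (0:ℝ) ≤ 1/h by positivity)
        linarith
      push_cast
      rw [h1h] at hM
      have hdC : 0 ≤ (d:ℝ)*C := by positivity
      have h5 : (5:ℝ) ≤ 5/ε := by
        rw [le_div_iff₀ hε]; linarith
      have : (2:ℝ)*M + 1 ≤ 2*((d:ℝ)*C/ε) + 5 := by linarith
      calc (2:ℝ)*M + 1 ≤ 2*((d:ℝ)*C/ε) + 5 := this
        _ ≤ 2*((d:ℝ)*C/ε) + 5/ε := by linarith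
        _ = (2*(d:ℝ)*C + 5)/ε := by ring
    have hM'b : ((M' : ℕ) : ℝ) ≤ (C+1)/ε := by
      have : (M':ℝ) ≤ 1/δ + 1 := by
        rw [hM'def]
        have := Nat.ceil_lt_add_one (show (0:ℝ) ≤ 1/δ by positivity)
        push_cast
        linarith
      have h1δ : 1/δ = C/ε := by rw [hδdef]; field_simp
      rw [h1δ] at this
      have h1ε : (1:ℝ) ≤ 1/ε := hεinv
      calc (M':ℝ) ≤ C/ε + 1 := this
        _ ≤ C/ε + 1/ε := by linarith
        _ = (C+1)/ε := by ring
    have hrpow : ε ^ (-((d : ℝ) + 1)) = (ε ^ (d+1 : ℕ))⁻¹ := by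
      have hcast : (-((d:ℝ)+1)) = -(((d+1:ℕ)):ℝ) := by push_cast; ring
      rw [hcast, Real.rpow_neg hε.le, Real.rpow_natCast]
    calc (N.card : ℝ) ≤ (((2*M+1)^d * M' : ℕ) : ℝ) := by exact_mod_cast hcard
      _ ≤ ((2*(d:ℝ)*C+5)/ε)^d * ((C+1)/ε) := by
          push_cast
          apply mul_le_mul _ _ (by positivity) (by positivity)
          · apply pow_le_pow_left₀ (by positivity)
            exact_mod_cast h2M
          · exact_mod_cast hM'b
      _ = (2*(d:ℝ)*C + 5)^d * (C+1) * ε ^ (-((d : ℝ) + 1)) := by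
          rw [hrpow, div_pow, pow_succ]
          field_simp
          try ring
  · -- covering property
    intro t r hr hsub
    have hunit : ∃ u : EuclideanSpace ℝ (Fin d), ‖u‖ = 1 :=
      ⟨EuclideanSpace.single (⟨0, hd⟩ : Fin d) (1:ℝ), by
        rw [EuclideanSpace.norm_single]; simp⟩
    have hnorm : ‖t‖ + r ≤ 1 := norm_add_le_one_of_subset hr hunit hsub
    have ht1 : ‖t‖ ≤ 1 := by linarith
    have hrle1 : r ≤ 1 := by linarith [norm_nonneg t]
    by_cases hbig : 4*δ ≤ r
    · -- large radius case
      obtain ⟨z, hz, hzdist⟩ := grid_approx d hd hh t ht1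
      obtain ⟨v, hvdef⟩ : ∃ v : EuclideanSpace ℝ (Fin d),
        v = (WithLp.equiv 2 (Fin d → ℝ)).symm (fun i => h * (z i : ℝ)) := ⟨_, rfl⟩
      rw [← hvdef] at hzdist
      have hdistv : dist t v ≤ δ := by
        calc dist t v ≤ (d:ℝ) * h / 2 := hzdist
          _ = δ/2 := by rw [hdh]
          _ ≤ δ := by linarith
      obtain ⟨j, hjdef⟩ : ∃ j : ℕ, j = (⌊(r - 2*δ)/δ⌋).toNat := ⟨_, rfl⟩
      have hx2 : (2:ℝ) ≤ (r - 2*δ)/δ := by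
        rw [le_div_iff₀ hδ]; linarith
      have hfl : (2:ℤ) ≤ ⌊(r - 2*δ)/δ⌋ := by
        apply Int.le_floor.2
        exact_mod_cast hx2
      have hjcast : (j:ℝ) = ((⌊(r - 2*δ)/δ⌋ : ℤ) : ℝ) := by
        have h0 : (0:ℤ) ≤ ⌊(r - 2*δ)/δ⌋ := by omega
        rw [hjdef]
        norm_cast
        omega
      have hjl : (j:ℝ) ≤ (r - 2*δ)/δ := by rw [hjcast]; exact Int.floor_le _
      have hjg : (r - 2*δ)/δ - 1 < (j:ℝ) := by rw [hjcast]; exact Int.sub_one_lt_floor _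
      have hj2 : (2:ℝ) ≤ (j:ℝ) := by
        rw [hjcast]; exact_mod_cast hfl
      have hj1 : 1 ≤ j := by exact_mod_cast (by linarith : (1:ℝ) ≤ (j:ℝ))
      have hr'u : (j:ℝ) * δ ≤ r - 2*δ := by
        rw [← le_div_iff₀ hδ]; exact hjl
      have hr'l : r - 3*δ ≤ (j:ℝ) * δ := by
        have : r - 2*δ < ((j:ℝ) + 1) * δ := by
          rw [← div_lt_iff₀ hδ]; linarith
        nlinarith
      have hjM' : j ≤ M' := by
        have hjr : (j:ℝ) ≤ 1/δ := by
          apply hjl.trans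
          rw [div_le_div_iff₀ hδ hδ]
          nlinarith
        have : (j:ℝ) ≤ (M':ℝ) := by
          rw [hM'def]
          exact hjr.trans (Nat.le_ceil _)
        exact_mod_cast this
      have hmemS : (z, j) ∈ S := by
        rw [hSdef]
        refine Finset.mem_product.2 ⟨?_, ?_⟩
        · refine Fintype.mem_piFinset.2 fun i => ?_
          rw [Finset.mem_Icc, ← abs_le]
          have := hz i
          rw [hMdef]
          push_cast
          omega
        · exact Finset.mem_Icc.2 ⟨hj1, hjM'⟩
      have hr'pos : 0 < (j:ℝ) * δ := by
        have : (0:ℝ) < (j:ℝ) := by linarith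
        positivity
      have hvnorm : ‖v‖ ≤ 1 - r + δ := by
        have h1 : ‖v‖ ≤ dist v t + ‖t‖ := by
          rw [← dist_zero_right v, ← dist_zero_right t]
          exact dist_triangle v t 0
        have h2 : dist v t ≤ δ := by rwa [dist_comm]
        linarith
      have hfeas : closedBall v ((j:ℝ)*δ) ⊆
          closedBall (0 : EuclideanSpace ℝ (Fin d)) 1 := by
        apply closedBall_subset_closedBall'
        rw [dist_zero_right]
        linarith
      have hmemN : ((v, (j:ℝ)*δ) : EuclideanSpace ℝ (Fin d) × ℝ) ∈ N := by
        rw [hNdef]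
        refine Finset.mem_filter.2 ⟨?_, hr'pos, hfeas⟩
        refine Finset.mem_image.2 ⟨(z, j), hmemS, ?_⟩
        rw [hfdef, hvdef]
      refine ⟨(v, (j:ℝ)*δ), hmemN, ?_⟩
      -- volume estimate
      have hc2 : closedBall v ((j:ℝ)*δ) ⊆ closedBall t r := by
        apply closedBall_subset_closedBall'
        rw [dist_comm]
        linarith
      have hc3 : closedBall t (r - 4*δ) ⊆ closedBall t r :=
        closedBall_subset_closedBall (by linarith)
      have hc4 : closedBall t (r - 4*δ) ⊆ closedBall v ((j:ℝ)*δ) := by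
        apply closedBall_subset_closedBall'
        linarith
      have hvol := vol_symmDiff_le t v (a := r - 4*δ) (b := r)
        (by linarith) (by linarith) subset_rfl hc2 hc3 hc4
      rw [← hνdef] at hvol
      have hreal : (r^d - (r - 4*δ)^d) * ν ≤ ε := by
        have hpow : r^d - (r - 4*δ)^d ≤ (d:ℝ) * 5^d * (4*δ) := by
          have := pow_sub_pow_le5 d (a := r - 4*δ) (b := r) (by linarith) (by linarith)
            (by linarith)
          calc r^d - (r - 4*δ)^d ≤ (d:ℝ) * 5^d * (r - (r - 4*δ)) := this
            _ = (d:ℝ) * 5^d * (4*δ) := by ring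
        have h58 : (5:ℝ)^d ≤ 8^d := pow_le_pow_left₀ (by norm_num) (by norm_num) d
        have hCbound : (d:ℝ) * 5^d * 4 * ν ≤ C := by
          rw [hCdef]
          have h1 : (d:ℝ) * 5^d * 4 * ν ≤ 4 * ((d:ℝ)+1) * 8^d * ν := by
            have : (d:ℝ) * 5^d ≤ ((d:ℝ)+1) * 8^d := by
              apply mul_le_mul (by linarith) h58 (by positivity) (by linarith)
            nlinarith
          linarith
        calc (r^d - (r - 4*δ)^d) * ν ≤ ((d:ℝ) * 5^d * (4*δ)) * ν := by
              apply mul_le_mul_of_nonneg_right hpow hν.le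
          _ = ((d:ℝ) * 5^d * 4 * ν) * δ := by ring
          _ ≤ C * δ := mul_le_mul_of_nonneg_right hCbound hδ.le
          _ = ε := hCδ
      have htoReal : (volume (symmDiff (closedBall t r)
          (closedBall v ((j:ℝ)*δ)))).toReal ≤ ε := by
        apply ENNReal.toReal_le_of_le_ofReal hε.le
        exact hvol.trans (ENNReal.ofReal_le_ofReal hreal)
      exact Real.sqrt_le_sqrt htoReal
    · -- small radius case
      push_neg at hbig
      have hδ1 : δ ≤ 1 := by linarith
      set s : EuclideanSpace ℝ (Fin d) := (1 - 2*δ) • t with hsdef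
      have h2δ : 0 ≤ 1 - 2*δ := by linarith
      have hsnorm : ‖s‖ = (1 - 2*δ) * ‖t‖ := by
        rw [hsdef, norm_smul, Real.norm_eq_abs, abs_of_nonneg h2δ]
      have hs1 : ‖s‖ ≤ 1 - 2*δ := by
        rw [hsnorm]
        nlinarith [norm_nonneg t]
      obtain ⟨z, hz, hzdist⟩ := grid_approx d hd hh s (by linarith)
      obtain ⟨v, hvdef⟩ : ∃ v : EuclideanSpace ℝ (Fin d),
        v = (WithLp.equiv 2 (Fin d → ℝ)).symm (fun i => h * (z i : ℝ)) := ⟨_, rfl⟩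
      rw [← hvdef] at hzdist
      have hdistsv : dist s v ≤ δ/2 := by
        calc dist s v ≤ (d:ℝ) * h / 2 := hzdist
          _ = δ/2 := by rw [hdh]
      have hdistts : dist t s = 2*δ*‖t‖ := by
        rw [hsdef, dist_eq_norm]
        have : t - (1 - 2*δ) • t = (2*δ) • t := by module
        rw [this, norm_smul, Real.norm_eq_abs, abs_of_nonneg (by linarith : (0:ℝ) ≤ 2*δ)]
      have hdisttv : dist t v ≤ 3*δ := by
        calc dist t v ≤ dist t s + dist s v := dist_triangle t s v
          _ ≤ 2*δ*‖t‖ + δ/2 := by rw [hdistts]; linarith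
          _ ≤ 2*δ*1 + δ/2 := by nlinarith [norm_nonneg t]
          _ ≤ 3*δ := by linarith
      have hvnorm : ‖v‖ ≤ 1 - δ := by
        have h1 : ‖v‖ ≤ dist v s + ‖s‖ := by
          rw [← dist_zero_right v, ← dist_zero_right s]
          exact dist_triangle v s 0
        have h2 : dist v s ≤ δ/2 := by rwa [dist_comm]
        linarith
      have hmemS : (z, 1) ∈ S := by
        rw [hSdef]
        refine Finset.mem_product.2 ⟨?_, ?_⟩
        · refine Fintype.mem_piFinset.2 fun i => ?_
          rw [Finset.mem_Icc, ← abs_le]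
          have := hz i
          rw [hMdef]
          push_cast
          omega
        · exact Finset.mem_Icc.2 ⟨le_refl 1, hM'1⟩
      have hfeas : closedBall v (((1:ℕ):ℝ)*δ) ⊆
          closedBall (0 : EuclideanSpace ℝ (Fin d)) 1 := by
        apply closedBall_subset_closedBall'
        rw [dist_zero_right]
        push_cast
        linarith
      have hr'pos : 0 < ((1:ℕ):ℝ)*δ := by push_cast; linarith
      have hmemN : ((v, ((1:ℕ):ℝ)*δ) : EuclideanSpace ℝ (Fin d) × ℝ) ∈ N := by
        rw [hNdef]
        refine Finset.mem_filter.2 ⟨?_, hr'pos, hfeas⟩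
        refine Finset.mem_image.2 ⟨(z, 1), hmemS, ?_⟩
        rw [hfdef, hvdef]
      refine ⟨(v, ((1:ℕ):ℝ)*δ), hmemN, ?_⟩
      have hsub4 : symmDiff (closedBall t r) (closedBall v (((1:ℕ):ℝ)*δ)) ⊆
          closedBall t (4*δ) := by
        have hA : closedBall t r ⊆ closedBall t (4*δ) :=
          closedBall_subset_closedBall (by linarith)
        have hB : closedBall v (((1:ℕ):ℝ)*δ) ⊆ closedBall t (4*δ) := by
          apply closedBall_subset_closedBall'
          rw [dist_comm]
          push_cast
          linarith
        intro x hx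
        rcases Set.mem_symmDiff.1 hx with ⟨hx1, _⟩ | ⟨hx1, _⟩
        · exact hA hx1
        · exact hB hx1
      have hvol : volume (symmDiff (closedBall t r) (closedBall v (((1:ℕ):ℝ)*δ))) ≤
          ENNReal.ofReal ((4*δ)^d * ν) := by
        calc volume (symmDiff (closedBall t r) (closedBall v (((1:ℕ):ℝ)*δ)))
            ≤ volume (closedBall t (4*δ)) := measure_mono hsub4
          _ = ENNReal.ofReal ((4*δ)^d * ν) := by
              rw [hνdef]; exact vol_cb t (by linarith)
      have hreal : (4*δ)^d * ν ≤ ε := by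
        have hδd : δ^d ≤ δ := by
          have := pow_le_pow_of_le_one hδ.le hδ1 hd
          simpa using this
        have h48 : (4:ℝ)^d ≤ 8^d := pow_le_pow_left₀ (by norm_num) (by norm_num) d
        have hCb : (4:ℝ)^d * ν ≤ C := by
          rw [hCdef]
          have hX : (0:ℝ) ≤ 8^d * ν :=
            mul_nonneg (pow_nonneg (by norm_num) d) hν.le
          have h1a : (4:ℝ)^d * ν ≤ 8^d * ν := mul_le_mul_of_nonneg_right h48 hν.le
          have h1b : (8:ℝ)^d * ν ≤ 4*((d:ℝ)+1) * (8^d * ν) := by nlinarith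
          nlinarith
        calc (4*δ)^d * ν = 4^d * δ^d * ν := by rw [mul_pow]
          _ ≤ 4^d * δ * ν := by
              apply mul_le_mul_of_nonneg_right _ hν.le
              apply mul_le_mul_of_nonneg_left hδd (by positivity)
          _ = (4^d * ν) * δ := by ring
          _ ≤ C * δ := mul_le_mul_of_nonneg_right hCb hδ.le
          _ = ε := hCδ
      have htoReal : (volume (symmDiff (closedBall t r)
          (closedBall v (((1:ℕ):ℝ)*δ)))).toReal ≤ ε := by
        apply ENNReal.toReal_le_of_le_ofReal hε.le
        exact hvol.trans (ENNReal.ofReal_le_ofReal hreal)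
      exact Real.sqrt_le_sqrt htoReal
end

section
/- Let q̃, q > 0, A ≥ 1 and B > 0 be constants, and suppose D : (0,1] → [1,∞) satisfies D(u) ≤ A u^{−B} for all 0 < u ≤ 1. Define G(η,δ) := q̃ η^q and J(ε,a) := ∫₀^ε G( log( a·D(u)²/u ), u ) du. Then for all 0 < ε ≤ 1 and a ≥ 1, J(ε,a) ≤ C · ε · (log(e/ε))^q, where C = q̃ · max(1 + 2B, log(a A²))^q · ∫₀¹ (log(e/z))^q dz. -/
open MeasureTheory Set intervalIntegral

private lemma cib_log_eq {z : ℝ} (hz : 0 < z) :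
    Real.log (Real.exp 1 / z) = 1 - Real.log z := by
  rw [Real.log_div (Real.exp_ne_zero 1) hz.ne', Real.log_exp]

private lemma cib_one_le_log {z : ℝ} (hz : 0 < z) (hz1 : z ≤ 1) :
    1 ≤ Real.log (Real.exp 1 / z) := by
  rw [cib_log_eq hz]
  have := Real.log_nonpos hz.le hz1
  linarith

private lemma cib_contOn (q : ℝ) (hq : 0 < q) (c : ℝ) (hc : 0 < c) :
    ContinuousOn (fun z : ℝ => Real.log (Real.exp 1 / (c * z)) ^ q) (Set.Ioc 0 1) := by
  apply ContinuousOn.rpow_const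
  · apply ContinuousOn.log
    · exact continuousOn_const.div (continuous_const.mul continuous_id).continuousOn
        (fun x hx => by have hx0 := hx.1; positivity)
    · intro x hx
      have : (0:ℝ) < Real.exp 1 / (c * x) := by
        have := hx.1; positivity
      exact this.ne'
  · exact fun x hx => Or.inr hq.le

private lemma cib_integrableOn (q : ℝ) (hq : 0 < q) :
    IntegrableOn (fun z : ℝ => Real.log (Real.exp 1 / z) ^ q) (Set.Ioc (0:ℝ) 1) := by
  set δ : ℝ := (2 * q)⁻¹ with hδdef
  have hδ : 0 < δ := by positivity
  have hδq : δ * q = 2⁻¹ := by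
    field_simp [hδdef]
    rw [hδdef]; field_simp [hq.ne']
  have hg : IntegrableOn
      (fun z : ℝ => (Real.exp 1 ^ ((2:ℝ)⁻¹) / δ ^ q) * z ^ (-(2⁻¹:ℝ))) (Set.Ioc 0 1) := by
    have h1 : IntervalIntegrable (fun z : ℝ => z ^ (-(2⁻¹:ℝ))) volume 0 1 :=
      intervalIntegrable_rpow' (by norm_num)
    have h2 := (intervalIntegrable_iff_integrableOn_Ioc_of_le (by norm_num : (0:ℝ) ≤ 1)).mp h1
    exact h2.const_mul _
  refine hg.mono' ?_ ?_
  · have := cib_contOn q hq 1 one_pos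
    simp only [one_mul] at this
    exact this.aestronglyMeasurable measurableSet_Ioc
  · filter_upwards [ae_restrict_mem measurableSet_Ioc] with z hz
    obtain ⟨hz0, hz1⟩ := hz
    have hL1 : 1 ≤ Real.log (Real.exp 1 / z) := cib_one_le_log hz0 hz1
    have hL0 : 0 ≤ Real.log (Real.exp 1 / z) := by linarith
    rw [Real.norm_eq_abs, abs_of_nonneg (Real.rpow_nonneg hL0 q)]
    have hez : (0:ℝ) < Real.exp 1 / z := by positivity
    have key : Real.log (Real.exp 1 / z) ≤ (Real.exp 1 / z) ^ δ / δ :=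
      Real.log_le_rpow_div hez.le hδ
    have key2 : Real.log (Real.exp 1 / z) ^ q ≤ ((Real.exp 1 / z) ^ δ / δ) ^ q :=
      Real.rpow_le_rpow hL0 key hq.le
    have heq : ((Real.exp 1 / z) ^ δ / δ) ^ q
        = (Real.exp 1 ^ ((2:ℝ)⁻¹) / δ ^ q) * z ^ (-(2⁻¹:ℝ)) := by
      rw [Real.div_rpow (Real.rpow_nonneg hez.le δ) hδ.le,
        ← Real.rpow_mul hez.le, hδq,
        Real.div_rpow (Real.exp_pos 1).le hz0.le, Real.rpow_neg hz0.le]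
      field_simp
    rw [heq] at key2
    exact key2

private lemma cib_Cz_nonneg (q : ℝ) (hq : 0 < q) :
    0 ≤ ∫ z in (0:ℝ)..1, Real.log (Real.exp 1 / z) ^ q := by
  apply intervalIntegral.integral_nonneg (by norm_num : (0:ℝ) ≤ 1)
  intro u hu
  rcases eq_or_lt_of_le hu.1 with h | h
  · simp [← h, Real.zero_rpow hq.ne']
  · exact Real.rpow_nonneg (by linarith [cib_one_le_log h hu.2]) q

/-- If `G(η,δ) = q̃ η^q` and the packing numbers satisfy `1 ≤ D(u) ≤ A u^{−B}` on `(0,1]`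
with `A ≥ 1`, `B > 0`, then for `0 < ε ≤ 1` and `a ≥ 1`,
`J(ε,a) = ∫₀^ε G(log(a·D(u)²/u), u) du ≤ C ε (log(e/ε))^q` with
`C = q̃ max(1 + 2B, log(aA²))^q ∫₀¹ (log(e/z))^q dz`. -/
theorem chaining_integral_bound (qt q A B : ℝ) (hqt : 0 < qt) (hq : 0 < q)
    (hA : 1 ≤ A) (hB : 0 < B)
    (D : ℝ → ℝ)
    (hD1 : ∀ u : ℝ, 0 < u → u ≤ 1 → 1 ≤ D u)
    (hD2 : ∀ u : ℝ, 0 < u → u ≤ 1 → D u ≤ A * u ^ (-B))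
    (ε a : ℝ) (hε0 : 0 < ε) (hε1 : ε ≤ 1) (ha : 1 ≤ a) :
    (∫ u in (0 : ℝ)..ε, qt * Real.log (a * D u ^ 2 / u) ^ q) ≤
      (qt * max (1 + 2 * B) (Real.log (a * A ^ 2)) ^ q *
          ∫ z in (0 : ℝ)..1, Real.log (Real.exp 1 / z) ^ q) *
        ε * Real.log (Real.exp 1 / ε) ^ q := by
  set M : ℝ := max (1 + 2 * B) (Real.log (a * A ^ 2)) with hMdef
  have hMB : 1 + 2 * B ≤ M := le_max_left _ _
  have hMlog : Real.log (a * A ^ 2) ≤ M := le_max_right _ _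
  have hM1 : 1 ≤ M := le_trans (by linarith) hMB
  have hM0 : 0 ≤ M := by linarith
  set C1 : ℝ := ∫ z in (0:ℝ)..1, Real.log (Real.exp 1 / z) ^ q with hC1def
  have hC1 : 0 ≤ C1 := cib_Cz_nonneg q hq
  have hlogε : 1 ≤ Real.log (Real.exp 1 / ε) := cib_one_le_log hε0 hε1
  have hlogε0 : 0 ≤ Real.log (Real.exp 1 / ε) := by linarith
  have hRHSnn : 0 ≤ (qt * M ^ q * C1) * ε * Real.log (Real.exp 1 / ε) ^ q := by
    apply mul_nonneg
    apply mul_nonneg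
    · exact mul_nonneg (mul_nonneg hqt.le (Real.rpow_nonneg hM0 q)) hC1
    · exact hε0.le
    · exact Real.rpow_nonneg hlogε0 q
  by_cases hf : IntervalIntegrable (fun u => qt * Real.log (a * D u ^ 2 / u) ^ q) volume 0 ε
  case neg =>
    rw [intervalIntegral.integral_undef hf]
    exact hRHSnn
  case pos =>
  -- pointwise bound on (0, ε]
  have hpt : ∀ u ∈ Set.Icc (0:ℝ) ε,
      qt * Real.log (a * D u ^ 2 / u) ^ q
        ≤ qt * (M ^ q * Real.log (Real.exp 1 / u) ^ q) := by
    intro u hu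
    rcases eq_or_lt_of_le hu.1 with h | hu0
    · simp [← h, Real.zero_rpow hq.ne']
    · have hu1 : u ≤ 1 := le_trans hu.2 hε1
      have hDu1 : 1 ≤ D u := hD1 u hu0 hu1
      have hDu2 : D u ≤ A * u ^ (-B) := hD2 u hu0 hu1
      have hDupos : 0 < D u := by linarith
      have h1 : 1 ≤ a * D u ^ 2 / u := by
        rw [le_div_iff₀ hu0]
        nlinarith
      have hlog0 : 0 ≤ Real.log (a * D u ^ 2 / u) := Real.log_nonneg h1
      have hlogu : Real.log u ≤ 0 := Real.log_nonpos hu0.le hu1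
      -- expand logs
      have hx : Real.log (a * D u ^ 2 / u)
          = Real.log a + 2 * Real.log (D u) - Real.log u := by
        rw [Real.log_div (by positivity) hu0.ne', Real.log_mul (by positivity) (by positivity),
          Real.log_pow]
        push_cast; ring
      have hlogD : Real.log (D u) ≤ Real.log A - B * Real.log u := by
        have h := Real.log_le_log hDupos hDu2
        rw [Real.log_mul (by positivity) (by positivity : u ^ (-B) ≠ 0),
          Real.log_rpow hu0] at h
        linarith
      have hlogaA : Real.log (a * A ^ 2) = Real.log a + 2 * Real.log A := by
        rw [Real.log_mul (by positivity) (by positivity), Real.log_pow]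
        push_cast; ring
      have hle : Real.log (a * D u ^ 2 / u) ≤ M * Real.log (Real.exp 1 / u) := by
        rw [hx, cib_log_eq hu0]
        have h2 : Real.log a + 2 * Real.log A ≤ M := by rw [← hlogaA]; exact hMlog
        nlinarith
      have hlogu0 : 0 ≤ Real.log (Real.exp 1 / u) := by
        linarith [cib_one_le_log hu0 hu1]
      have := Real.rpow_le_rpow hlog0 hle hq.le
      rw [Real.mul_rpow hM0 hlogu0] at this
      exact mul_le_mul_of_nonneg_left this hqt.le
  -- integrability of the comparison function on (0, ε]
  have hIε : IntegrableOn (fun u : ℝ => qt * (M ^ q * Real.log (Real.exp 1 / u) ^ q))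
      (Set.Ioc 0 ε) := by
    have := ((cib_integrableOn q hq).mono_set
      (Set.Ioc_subset_Ioc_right hε1)).const_mul (M ^ q)
    exact this.const_mul qt
  have hg : IntervalIntegrable (fun u : ℝ => qt * (M ^ q * Real.log (Real.exp 1 / u) ^ q))
      volume 0 ε :=
    (intervalIntegrable_iff_integrableOn_Ioc_of_le hε0.le).mpr hIε
  have step1 : (∫ u in (0:ℝ)..ε, qt * Real.log (a * D u ^ 2 / u) ^ q)
      ≤ ∫ u in (0:ℝ)..ε, qt * (M ^ q * Real.log (Real.exp 1 / u) ^ q) :=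
    intervalIntegral.integral_mono_on hε0.le hf hg hpt
  have step2 : (∫ u in (0:ℝ)..ε, qt * (M ^ q * Real.log (Real.exp 1 / u) ^ q))
      = qt * M ^ q * ∫ u in (0:ℝ)..ε, Real.log (Real.exp 1 / u) ^ q := by
    simp_rw [← mul_assoc]
    rw [intervalIntegral.integral_const_mul]
  -- substitution u = ε z
  have step3 : (∫ u in (0:ℝ)..ε, Real.log (Real.exp 1 / u) ^ q)
      = ε * ∫ z in (0:ℝ)..1, Real.log (Real.exp 1 / (ε * z)) ^ q := by
    have h := intervalIntegral.integral_comp_mul_left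
      (fun u : ℝ => Real.log (Real.exp 1 / u) ^ q) (c := ε) hε0.ne' (a := 0) (b := 1)
    rw [mul_zero, mul_one] at h
    rw [h, smul_eq_mul, ← mul_assoc, mul_inv_cancel₀ hε0.ne', one_mul]
  -- pointwise bound for the substituted integrand
  have hptz : ∀ z ∈ Set.Icc (0:ℝ) 1,
      Real.log (Real.exp 1 / (ε * z)) ^ q
        ≤ Real.log (Real.exp 1 / ε) ^ q * Real.log (Real.exp 1 / z) ^ q := by
    intro z hz
    rcases eq_or_lt_of_le hz.1 with h | hz0
    · simp [← h, Real.zero_rpow hq.ne']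
    · have hz1 : z ≤ 1 := hz.2
      have hεz0 : 0 < ε * z := by positivity
      have hεz1 : ε * z ≤ 1 := by nlinarith
      have h1 : 1 ≤ Real.log (Real.exp 1 / (ε * z)) := cib_one_le_log hεz0 hεz1
      have hlz : Real.log z ≤ 0 := Real.log_nonpos hz0.le hz1
      have hlε : Real.log ε ≤ 0 := Real.log_nonpos hε0.le hε1
      have hle : Real.log (Real.exp 1 / (ε * z))
          ≤ Real.log (Real.exp 1 / ε) * Real.log (Real.exp 1 / z) := by
        rw [cib_log_eq hεz0, cib_log_eq hε0, cib_log_eq hz0,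
          Real.log_mul hε0.ne' hz0.ne']
        nlinarith
      have := Real.rpow_le_rpow (by linarith) hle hq.le
      rwa [Real.mul_rpow hlogε0 (by linarith [cib_one_le_log hz0 hz1])] at this
  -- integrability on (0,1] of both sides
  have hI1 : IntegrableOn (fun z : ℝ => Real.log (Real.exp 1 / (ε * z)) ^ q)
      (Set.Ioc (0:ℝ) 1) := by
    refine ((cib_integrableOn q hq).const_mul (Real.log (Real.exp 1 / ε) ^ q)).mono' ?_ ?_
    · exact (cib_contOn q hq ε hε0).aestronglyMeasurable measurableSet_Ioc
    · filter_upwards [ae_restrict_mem measurableSet_Ioc] with z hz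
      obtain ⟨hz0, hz1⟩ := hz
      have h1 : 1 ≤ Real.log (Real.exp 1 / (ε * z)) :=
        cib_one_le_log (mul_pos hε0 hz0) (by nlinarith)
      rw [Real.norm_eq_abs, abs_of_nonneg (Real.rpow_nonneg (by linarith) q)]
      exact hptz z ⟨hz0.le, hz1⟩
  have hI2 : IntegrableOn
      (fun z : ℝ => Real.log (Real.exp 1 / ε) ^ q * Real.log (Real.exp 1 / z) ^ q)
      (Set.Ioc (0:ℝ) 1) := (cib_integrableOn q hq).const_mul _
  have step4 : (∫ z in (0:ℝ)..1, Real.log (Real.exp 1 / (ε * z)) ^ q)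
      ≤ Real.log (Real.exp 1 / ε) ^ q * C1 := by
    have := intervalIntegral.integral_mono_on (by norm_num : (0:ℝ) ≤ 1)
      ((intervalIntegrable_iff_integrableOn_Ioc_of_le (by norm_num : (0:ℝ) ≤ 1)).mpr hI1)
      ((intervalIntegrable_iff_integrableOn_Ioc_of_le (by norm_num : (0:ℝ) ≤ 1)).mpr hI2)
      hptz
    rwa [intervalIntegral.integral_const_mul] at this
  have hqtM : 0 ≤ qt * M ^ q := mul_nonneg hqt.le (Real.rpow_nonneg hM0 q)
  calc (∫ u in (0:ℝ)..ε, qt * Real.log (a * D u ^ 2 / u) ^ q)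
      ≤ qt * M ^ q * ∫ u in (0:ℝ)..ε, Real.log (Real.exp 1 / u) ^ q := by
        rw [← step2]; exact step1
    _ = qt * M ^ q * (ε * ∫ z in (0:ℝ)..1, Real.log (Real.exp 1 / (ε * z)) ^ q) := by
        rw [step3]
    _ ≤ qt * M ^ q * (ε * (Real.log (Real.exp 1 / ε) ^ q * C1)) := by
        apply mul_le_mul_of_nonneg_left _ hqtM
        exact mul_le_mul_of_nonneg_left step4 hε0.le
    _ = (qt * M ^ q * C1) * ε * Real.log (Real.exp 1 / ε) ^ q := by ring
end
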